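/- arXiv:math/0512313 — 8 statements merged into one kernel-verified Lean document; each statement's English description precedes it below -/
import Mathlib

section
/- For 1 ≤ p ≤ ∞, if f, h ∈ AC_p, say f(t) = ∫₀ᵗ f'(s) ds and h(t) = ∫₀ᵗ h'(s) ds with f', h' ∈ L^p[0,1], then the pointwise product f·h belongs to AC_p, its derivative is f'h + f h' ∈ L^p[0,1] (a.e.), and |||f h||| = ‖f'h + f h'‖_p ≤ 2 |||f||| · |||h|||. In particular AC_p with the norm |||·||| is a (non-unital) Banach algebra under pointwise operations. -/
open MeasureTheory Set
open scoped ENNReal NNReal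

/-- The Lebesgue measure restricted to `[0,1]`. -/
noncomputable def mu01 : Measure ℝ := volume.restrict (Set.Icc (0 : ℝ) 1)

instance : IsProbabilityMeasure mu01 :=
  ⟨by simp [mu01, Real.volume_Icc]⟩

/-- measurability + boundedness of a primitive on [0,1] -/
lemma primitive_aux (g g' : ℝ → ℂ) (hg' : Integrable g' mu01)
    (hg : ∀ t ∈ Set.Icc (0 : ℝ) 1, g t = ∫ s in Set.Ioc (0 : ℝ) t, g' s) :
    AEStronglyMeasurable g mu01 ∧
      (∀ᵐ t ∂mu01, ‖g t‖ ≤ ∫ s, ‖g' s‖ ∂mu01) := by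
  have hIcc : IntegrableOn g' (Set.Icc (0:ℝ) 1) volume := hg'
  set G : ℝ → ℂ := Set.indicator (Set.Icc (0:ℝ) 1) g' with hG
  have hGint : Integrable G volume := by
    rw [hG, integrable_indicator_iff measurableSet_Icc]; exact hIcc
  have hcont : Continuous fun t => ∫ s in (0:ℝ)..t, G s :=
    hGint.continuous_primitive 0
  have heq : ∀ t ∈ Set.Icc (0:ℝ) 1, g t = ∫ s in (0:ℝ)..t, G s := by
    intro t ht
    rw [intervalIntegral.integral_of_le ht.1, hg t ht,
      MeasureTheory.setIntegral_indicator measurableSet_Icc]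
    have hss : Set.Ioc (0:ℝ) t ∩ Set.Icc (0:ℝ) 1 = Set.Ioc (0:ℝ) t :=
      Set.inter_eq_left.mpr (fun s hs => ⟨hs.1.le, hs.2.trans ht.2⟩)
    rw [hss]
  have hmem : ∀ᵐ t ∂mu01, t ∈ Set.Icc (0:ℝ) 1 := ae_restrict_mem measurableSet_Icc
  constructor
  · exact (hcont.aestronglyMeasurable).congr (hmem.mono fun t ht => (heq t ht).symm)
  · refine hmem.mono fun t ht => ?_
    rw [hg t ht]
    calc ‖∫ s in Set.Ioc (0:ℝ) t, g' s‖ ≤ ∫ s in Set.Ioc (0:ℝ) t, ‖g' s‖ :=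
          norm_integral_le_integral_norm _
    _ ≤ ∫ s in Set.Icc (0:ℝ) 1, ‖g' s‖ := by
        apply setIntegral_mono_set hIcc.norm
        · exact Filter.Eventually.of_forall fun s => norm_nonneg _
        · exact HasSubset.Subset.eventuallyLE fun s hs => ⟨hs.1.le, hs.2.trans ht.2⟩
    _ = ∫ s, ‖g' s‖ ∂mu01 := rfl

lemma prod_rule (f h f' h' : ℝ → ℂ)
    (hif : Integrable f' mu01) (hih : Integrable h' mu01)
    (hf : ∀ t ∈ Set.Icc (0 : ℝ) 1, f t = ∫ s in Set.Ioc (0 : ℝ) t, f' s)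
    (hh : ∀ t ∈ Set.Icc (0 : ℝ) 1, h t = ∫ s in Set.Ioc (0 : ℝ) t, h' s) :
    ∀ t ∈ Set.Icc (0 : ℝ) 1,
      f t * h t = ∫ s in Set.Ioc (0 : ℝ) t, (f' s * h s + f s * h' s) := by
  intro t ht
  set ν : Measure ℝ := volume.restrict (Set.Ioc 0 t) with hν
  have hsub : Set.Ioc (0:ℝ) t ⊆ Set.Icc (0:ℝ) 1 := fun s hs => ⟨hs.1.le, hs.2.trans ht.2⟩
  have hle : ν ≤ mu01 := Measure.restrict_mono hsub le_rfl
  have hif' : Integrable f' ν := hif.mono_measure hle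
  have hih' : Integrable h' ν := hih.mono_measure hle
  have hmem : ∀ᵐ s ∂ν, s ∈ Set.Ioc (0:ℝ) t := ae_restrict_mem measurableSet_Ioc
  set K : ℝ × ℝ → ℂ := fun z => f' z.1 * h' z.2 with hK
  have hKint : Integrable K (ν.prod ν) := hif'.mul_prod hih'
  have hA : MeasurableSet {z : ℝ × ℝ | z.2 ≤ z.1} :=
    measurableSet_le measurable_snd measurable_fst
  -- first inner integral
  have hinner1 : ∀ᵐ s ∂ν,
      (∫ u, Set.indicator {z : ℝ×ℝ | z.2 ≤ z.1} K (s, u) ∂ν) = f' s * h s := by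
    refine hmem.mono fun s hs => ?_
    have hfun : (fun u => Set.indicator {z : ℝ×ℝ | z.2 ≤ z.1} K (s, u))
        = Set.indicator (Set.Iic s) (fun u => f' s * h' u) := by
      ext u; by_cases hu : u ≤ s <;> simp [Set.indicator_apply, hu, hK]
    rw [hfun, integral_indicator measurableSet_Iic, hν,
      Measure.restrict_restrict measurableSet_Iic]
    have hset : Set.Iic s ∩ Set.Ioc (0:ℝ) t = Set.Ioc 0 s := by
      ext u
      constructor
      · rintro ⟨h1, h2, h3⟩; exact ⟨h2, h1⟩
      · rintro ⟨h1, h2⟩; exact ⟨h2, h1, h2.trans hs.2⟩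
    rw [hset, integral_const_mul, hh s (hsub hs)]
  -- second inner integral
  have hinner2 : ∀ᵐ u ∂ν,
      (∫ s, Set.indicator {z : ℝ×ℝ | z.2 ≤ z.1}ᶜ K (s, u) ∂ν) = f u * h' u := by
    refine hmem.mono fun u hu => ?_
    have hfun : (fun s => Set.indicator {z : ℝ×ℝ | z.2 ≤ z.1}ᶜ K (s, u))
        = Set.indicator (Set.Iio u) (fun s => f' s * h' u) := by
      ext s; by_cases hsu : s < u <;>
        simp [Set.indicator_apply, hsu, not_lt.mpr, hK, not_le.mpr, not_le]
    rw [hfun, integral_indicator measurableSet_Iio, hν,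
      Measure.restrict_restrict measurableSet_Iio]
    have hset : Set.Iio u ∩ Set.Ioc (0:ℝ) t = Set.Ioo 0 u := by
      ext s
      constructor
      · rintro ⟨h1, h2, h3⟩; exact ⟨h2, h1⟩
      · rintro ⟨h1, h2⟩; exact ⟨h2, h1, (h2.trans_le hu.2).le⟩
    rw [hset, integral_mul_const, ← integral_Ioc_eq_integral_Ioo, ← hf u (hsub hu)]
  have hterm1 : (∫ z, Set.indicator {z : ℝ×ℝ | z.2 ≤ z.1} K z ∂ν.prod ν)
      = ∫ s, f' s * h s ∂ν := by
    rw [integral_prod _ (hKint.indicator hA)]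
    exact integral_congr_ae hinner1
  have hterm2 : (∫ z, Set.indicator {z : ℝ×ℝ | z.2 ≤ z.1}ᶜ K z ∂ν.prod ν)
      = ∫ u, f u * h' u ∂ν := by
    rw [integral_prod_symm _ (hKint.indicator hA.compl)]
    exact integral_congr_ae hinner2
  have hint1 : Integrable (fun s => f' s * h s) ν :=
    ((hKint.indicator hA).integral_prod_left).congr hinner1
  have hint2 : Integrable (fun u => f u * h' u) ν := by
    refine ((hKint.indicator hA.compl).integral_prod_right).congr hinner2
  have hsplit : ∫ z, K z ∂ν.prod ν
      = (∫ z, Set.indicator {z : ℝ×ℝ | z.2 ≤ z.1} K z ∂ν.prod ν)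
      + ∫ z, Set.indicator {z : ℝ×ℝ | z.2 ≤ z.1}ᶜ K z ∂ν.prod ν := by
    rw [← integral_add (hKint.indicator hA) (hKint.indicator hA.compl)]
    refine integral_congr_ae (Filter.Eventually.of_forall fun z => ?_)
    exact congrFun (Set.indicator_self_add_compl {z : ℝ×ℝ | z.2 ≤ z.1} K).symm z
  have htot : ∫ z, K z ∂ν.prod ν = f t * h t := by
    rw [hK]
    rw [integral_prod_mul f' h', ← hf t ht, ← hh t ht]
  rw [← htot, hsplit, hterm1, hterm2, ← integral_add hint1 hint2]


/-- For `1 ≤ p ≤ ∞`, if `f, h ∈ AC_p`, i.e.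
`f t = ∫₀ᵗ f'` and `h t = ∫₀ᵗ h'` on `[0,1]` with `f', h' ∈ L^p[0,1]`, then the
pointwise product `f·h` belongs to `AC_p` with derivative `f'h + fh' ∈ L^p[0,1]`,
and `|||fh||| = ‖f'h + fh'‖_p ≤ 2 |||f||| |||h|||`. -/
theorem ACp_mul_mem_and_norm_le
    (p : ℝ≥0∞) (hp : 1 ≤ p)
    (f h f' h' : ℝ → ℂ)
    (hf' : MemLp f' p mu01)
    (hf : ∀ t ∈ Set.Icc (0 : ℝ) 1, f t = ∫ s in Set.Ioc (0 : ℝ) t, f' s)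
    (hh' : MemLp h' p mu01)
    (hh : ∀ t ∈ Set.Icc (0 : ℝ) 1, h t = ∫ s in Set.Ioc (0 : ℝ) t, h' s) :
    MemLp (fun t => f' t * h t + f t * h' t) p mu01 ∧
    (∀ t ∈ Set.Icc (0 : ℝ) 1,
      f t * h t = ∫ s in Set.Ioc (0 : ℝ) t, (f' s * h s + f s * h' s)) ∧
    eLpNorm (fun t => f' t * h t + f t * h' t) p mu01 ≤
      2 * eLpNorm f' p mu01 * eLpNorm h' p mu01 := by
  have hif : Integrable f' mu01 :=
    memLp_one_iff_integrable.mp (hf'.mono_exponent hp)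
  have hih : Integrable h' mu01 :=
    memLp_one_iff_integrable.mp (hh'.mono_exponent hp)
  obtain ⟨hfm, hfb⟩ := primitive_aux f f' hif hf
  obtain ⟨hhm, hhb⟩ := primitive_aux h h' hih hh
  set Bf : ℝ := ∫ s, ‖f' s‖ ∂mu01 with hBf
  set Bh : ℝ := ∫ s, ‖h' s‖ ∂mu01 with hBh
  have hBf0 : 0 ≤ Bf := integral_nonneg fun s => norm_nonneg _
  have hBh0 : 0 ≤ Bh := integral_nonneg fun s => norm_nonneg _
  have hb1 : ∀ᵐ t ∂mu01, ‖f' t * h t‖ ≤ ‖Bh • f' t‖ := by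
    refine hhb.mono fun t htb => ?_
    calc ‖f' t * h t‖ = ‖h t‖ * ‖f' t‖ := by rw [norm_mul, mul_comm]
      _ ≤ Bh * ‖f' t‖ := mul_le_mul_of_nonneg_right htb (norm_nonneg _)
      _ = ‖Bh • f' t‖ := by
          rw [norm_smul, Real.norm_eq_abs, abs_of_nonneg hBh0]
  have hb2 : ∀ᵐ t ∂mu01, ‖f t * h' t‖ ≤ ‖Bf • h' t‖ := by
    refine hfb.mono fun t htb => ?_
    calc ‖f t * h' t‖ = ‖f t‖ * ‖h' t‖ := norm_mul _ _
      _ ≤ Bf * ‖h' t‖ := mul_le_mul_of_nonneg_right htb (norm_nonneg _)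
      _ = ‖Bf • h' t‖ := by
          rw [norm_smul, Real.norm_eq_abs, abs_of_nonneg hBf0]
  have hm1 : AEStronglyMeasurable (fun t => f' t * h t) mu01 := hf'.1.mul hhm
  have hm2 : AEStronglyMeasurable (fun t => f t * h' t) mu01 := hfm.mul hh'.1
  have mem1 : MemLp (fun t => f' t * h t) p mu01 :=
    MemLp.of_le (hf'.const_smul Bh) hm1 hb1
  have mem2 : MemLp (fun t => f t * h' t) p mu01 :=
    MemLp.of_le (hh'.const_smul Bf) hm2 hb2
  have hBhle : ENNReal.ofReal Bh ≤ eLpNorm h' p mu01 := by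
    have h1 : ENNReal.ofReal Bh = eLpNorm h' 1 mu01 := by
      rw [eLpNorm_one_eq_lintegral_enorm, hBh,
        ofReal_integral_norm_eq_lintegral_enorm hih]
    rw [h1]
    exact eLpNorm_le_eLpNorm_of_exponent_le hp hh'.1
  have hBfle : ENNReal.ofReal Bf ≤ eLpNorm f' p mu01 := by
    have h1 : ENNReal.ofReal Bf = eLpNorm f' 1 mu01 := by
      rw [eLpNorm_one_eq_lintegral_enorm, hBf,
        ofReal_integral_norm_eq_lintegral_enorm hif]
    rw [h1]
    exact eLpNorm_le_eLpNorm_of_exponent_le hp hf'.1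
  have hn1 : eLpNorm (fun t => f' t * h t) p mu01 ≤
      eLpNorm f' p mu01 * eLpNorm h' p mu01 := by
    calc eLpNorm (fun t => f' t * h t) p mu01
        ≤ eLpNorm (Bh • f') p mu01 := eLpNorm_mono_ae hb1
      _ = ‖Bh‖₊ • eLpNorm f' p mu01 := eLpNorm_const_smul _ _ _ _
      _ = ENNReal.ofReal Bh * eLpNorm f' p mu01 := by
          rw [ENNReal.smul_def, smul_eq_mul, ← Real.enorm_eq_ofReal hBh0]; rfl
      _ ≤ eLpNorm h' p mu01 * eLpNorm f' p mu01 :=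
          mul_le_mul_left hBhle _
      _ = eLpNorm f' p mu01 * eLpNorm h' p mu01 := mul_comm _ _
  have hn2 : eLpNorm (fun t => f t * h' t) p mu01 ≤
      eLpNorm f' p mu01 * eLpNorm h' p mu01 := by
    calc eLpNorm (fun t => f t * h' t) p mu01
        ≤ eLpNorm (Bf • h') p mu01 := eLpNorm_mono_ae hb2
      _ = ‖Bf‖₊ • eLpNorm h' p mu01 := eLpNorm_const_smul _ _ _ _
      _ = ENNReal.ofReal Bf * eLpNorm h' p mu01 := by
          rw [ENNReal.smul_def, smul_eq_mul, ← Real.enorm_eq_ofReal hBf0]; rfl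
      _ ≤ eLpNorm f' p mu01 * eLpNorm h' p mu01 :=
          mul_le_mul_left hBfle _
  refine ⟨mem1.add mem2, prod_rule f h f' h' hif hih hf hh, ?_⟩
  calc eLpNorm (fun t => f' t * h t + f t * h' t) p mu01
      ≤ eLpNorm (fun t => f' t * h t) p mu01 +
        eLpNorm (fun t => f t * h' t) p mu01 := eLpNorm_add_le hm1 hm2 hp
    _ ≤ eLpNorm f' p mu01 * eLpNorm h' p mu01 +
        eLpNorm f' p mu01 * eLpNorm h' p mu01 := add_le_add hn1 hn2
    _ = 2 * eLpNorm f' p mu01 * eLpNorm h' p mu01 := by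
        rw [two_mul, add_mul]
end

section
/- Let 1 ≤ p < ∞ and for α ∈ (0,1] define e_α : [0,1] → ℂ by e_α(t) = min(t/α, 1). Then for every g ∈ AC_p the product e_α g belongs to AC_p, one has the bound |||e_α g − g||| ≤ (p^{−1/p} + 1) ‖g'·χ_{[0,α]}‖_p, and consequently |||e_α g − g||| → 0 as α → 0⁺. Thus {e_α} is an approximate identity for AC_p for 1 ≤ p < ∞. -/
open MeasureTheory Set Filter
open scoped ENNReal NNReal Topology

lemma vol_inter {α t : ℝ} (u : ℝ) (hu : 0 < u) :
    volume ((Set.Ioc (0:ℝ) t ∩ Set.Ico (0:ℝ) α) ∩ Set.Ici u) = ENNReal.ofReal (min t α - u) := by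
  apply le_antisymm
  · calc volume ((Set.Ioc (0:ℝ) t ∩ Set.Ico (0:ℝ) α) ∩ Set.Ici u)
        ≤ volume (Set.Icc u (min t α)) := by
          apply measure_mono
          rintro s ⟨⟨⟨hs1, hs2⟩, hs3, hs4⟩, hs5⟩
          exact ⟨hs5, le_min hs2 hs4.le⟩
      _ = ENNReal.ofReal (min t α - u) := Real.volume_Icc
  · calc ENNReal.ofReal (min t α - u) = volume (Set.Ioo u (min t α)) := Real.volume_Ioo.symm
      _ ≤ volume ((Set.Ioc (0:ℝ) t ∩ Set.Ico (0:ℝ) α) ∩ Set.Ici u) := by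
          apply measure_mono
          rintro s ⟨hs1, hs2⟩
          exact ⟨⟨⟨hu.trans hs1, (hs2.le.trans (min_le_left _ _))⟩,
            (hu.trans hs1).le, lt_of_lt_of_le hs2 (min_le_right _ _)⟩, hs1.le⟩

lemma coef_eq {α t u : ℝ} (hα : 0 < α) (hu : 0 < u) (hut : u ≤ t) :
    max (min t α - u) 0 * α⁻¹ = min (t/α) 1 - min (u/α) 1 := by
  have hmin : ∀ x : ℝ, 0 ≤ x → min (x/α) 1 = min x α / α := by
    intro x hx
    rcases le_total x α with h | h
    · rw [min_eq_left h, min_eq_left (by rw [div_le_one hα]; exact h)]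
    · rw [min_eq_right h, min_eq_right (by rw [le_div_iff₀ hα]; simpa using h), div_self hα.ne']
  rw [hmin t (hu.le.trans hut), hmin u hu.le]
  rcases le_total u α with h | h
  · have h1 : u ≤ min t α := le_min hut h
    rw [min_eq_left h, max_eq_left (by linarith)]
    field_simp
  · have htα : α ≤ t := le_trans h hut
    rw [min_eq_right h, min_eq_right htα, max_eq_right (by simp [min_le_right t α]; linarith [min_le_right t α])]
    simp

lemma triangle_swap (f : ℝ → ℂ) (hf : Integrable f) {α t : ℝ} (hα : 0 < α) :
    ∫ s in Set.Ioc (0:ℝ) t,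
        ((Set.Ico (0:ℝ) α).indicator (fun _ => ((α:ℂ))⁻¹) s) * (∫ u in Set.Ioc (0:ℝ) s, f u)
      = ∫ u in Set.Ioc (0:ℝ) t,
          (((min (t/α) 1 : ℝ) : ℂ) - ((min (u/α) 1 : ℝ) : ℂ)) * f u := by
  set S : Set ℝ := Set.Ioc (0:ℝ) t ∩ Set.Ico (0:ℝ) α with hSdef
  have hS : MeasurableSet S := measurableSet_Ioc.inter measurableSet_Ico
  have hSfin : volume S < ⊤ :=
    lt_of_le_of_lt (measure_mono Set.inter_subset_right)
      (by rw [Real.volume_Ico]; exact ENNReal.ofReal_lt_top)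
  set F : ℝ → ℝ → ℂ := fun s u =>
    S.indicator (fun _ => ((α:ℂ))⁻¹) s * (Set.Ioc (0:ℝ) s).indicator f u with hFdef
  have hT : MeasurableSet {z : ℝ × ℝ | 0 < z.2 ∧ z.2 ≤ z.1} :=
    (measurableSet_lt measurable_const measurable_snd).inter
      (measurableSet_le measurable_snd measurable_fst)
  have hFunc : Function.uncurry F =
      {z : ℝ × ℝ | 0 < z.2 ∧ z.2 ≤ z.1}.indicator
        (fun z => S.indicator (fun _ => ((α:ℂ))⁻¹) z.1 * f z.2) := by
    funext z
    by_cases h : 0 < z.2 ∧ z.2 ≤ z.1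
    · simp [Function.uncurry, hFdef, Set.indicator, Set.mem_Ioc, h.1, h.2]
    · have hz : z ∉ {z : ℝ × ℝ | 0 < z.2 ∧ z.2 ≤ z.1} := h
      rw [Set.indicator_of_notMem hz]
      have : z.2 ∉ Set.Ioc (0:ℝ) z.1 := by simpa [Set.mem_Ioc] using h
      simp [Function.uncurry, hFdef, Set.indicator_of_notMem this]
  have hFint : Integrable (Function.uncurry F) (volume.prod volume) := by
    rw [hFunc]
    refine Integrable.indicator ?_ hT
    exact Integrable.mul_prod
      ((integrable_indicator_iff hS).2 (integrableOn_const hSfin.ne)) hf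
  have hswap := MeasureTheory.integral_integral_swap hFint
  -- LHS identification
  have hL : (∫ s, ∫ u, F s u) =
      ∫ s in Set.Ioc (0:ℝ) t,
        ((Set.Ico (0:ℝ) α).indicator (fun _ => ((α:ℂ))⁻¹) s) * (∫ u in Set.Ioc (0:ℝ) s, f u) := by
    have h1 : ∀ s, (∫ u, F s u) =
        S.indicator (fun s' => (α:ℂ)⁻¹ * (∫ u in Set.Ioc (0:ℝ) s', f u)) s := by
      intro s
      rw [hFdef]
      simp only
      rw [integral_const_mul, integral_indicator measurableSet_Ioc]
      by_cases hs : s ∈ S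
      · simp [Set.indicator_of_mem hs]
      · simp [Set.indicator_of_notMem hs]
    calc (∫ s, ∫ u, F s u)
        = ∫ s, S.indicator (fun s' => (α:ℂ)⁻¹ * (∫ u in Set.Ioc (0:ℝ) s', f u)) s := by
          congr 1; funext s; exact h1 s
      _ = ∫ s in Set.Ioc (0:ℝ) t,
            (Set.Ico (0:ℝ) α).indicator
              (fun s' => (α:ℂ)⁻¹ * (∫ u in Set.Ioc (0:ℝ) s', f u)) s := by
          rw [integral_indicator hS, setIntegral_indicator measurableSet_Ico]
      _ = ∫ s in Set.Ioc (0:ℝ) t,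
            ((Set.Ico (0:ℝ) α).indicator (fun _ => ((α:ℂ))⁻¹) s) * (∫ u in Set.Ioc (0:ℝ) s, f u) := by
          apply setIntegral_congr_fun measurableSet_Ioc
          intro s _
          by_cases hs : s ∈ Set.Ico (0:ℝ) α
          · simp [Set.indicator_of_mem hs]
          · simp [Set.indicator_of_notMem hs]
  -- RHS identification
  have hR : (fun u => ∫ s, F s u) =
      (Set.Ioc (0:ℝ) t).indicator
        (fun u => (((min (t/α) 1 : ℝ) : ℂ) - ((min (u/α) 1 : ℝ) : ℂ)) * f u) := by
    funext u
    by_cases hu : 0 < u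
    · have hfun : (fun s => F s u) =
          (S ∩ Set.Ici u).indicator (fun _ => (α:ℂ)⁻¹ * f u) := by
        funext s
        by_cases hsS : s ∈ S
        · by_cases hus : u ≤ s
          · rw [Set.indicator_of_mem (show s ∈ S ∩ Set.Ici u from ⟨hsS, hus⟩)]
            simp [hFdef, Set.indicator_of_mem hsS, Set.indicator_of_mem (Set.mem_Ioc.2 ⟨hu, hus⟩)]
          · rw [Set.indicator_of_notMem (show s ∉ S ∩ Set.Ici u from fun h => hus h.2)]
            have : u ∉ Set.Ioc (0:ℝ) s := fun h => hus h.2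
            simp [hFdef, Set.indicator_of_notMem this]
        · rw [Set.indicator_of_notMem (show s ∉ S ∩ Set.Ici u from fun h => hsS h.1)]
          simp [hFdef, Set.indicator_of_notMem hsS]
      rw [hfun, integral_indicator (hS.inter measurableSet_Ici), setIntegral_const, Measure.real,
        vol_inter u hu, ENNReal.toReal_ofReal']
      by_cases hut : u ≤ t
      · rw [Set.indicator_of_mem (Set.mem_Ioc.2 ⟨hu, hut⟩)]
        have hc := coef_eq hα hu hut
        rw [Complex.real_smul, ← mul_assoc, ← Complex.ofReal_inv, ← Complex.ofReal_mul, hc,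
          Complex.ofReal_sub]
      · rw [Set.indicator_of_notMem (fun h => hut h.2)]
        have hm : min t α - u < 0 := by
          have := min_le_left t α; push_neg at hut; linarith
        rw [max_eq_right hm.le]
        simp
    · have hfun : (fun s => F s u) = fun _ => 0 := by
        funext s
        have : u ∉ Set.Ioc (0:ℝ) s := fun h => hu h.1
        simp [hFdef, Set.indicator_of_notMem this]
      rw [hfun, integral_zero, Set.indicator_of_notMem (fun h => hu h.1)]
  rw [← hL, hswap]
  calc (∫ u, ∫ s, F s u)
      = ∫ u, (Set.Ioc (0:ℝ) t).indicator
          (fun u => (((min (t/α) 1 : ℝ) : ℂ) - ((min (u/α) 1 : ℝ) : ℂ)) * f u) u := by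
        rw [hR]
    _ = ∫ u in Set.Ioc (0:ℝ) t,
          (((min (t/α) 1 : ℝ) : ℂ) - ((min (u/α) 1 : ℝ) : ℂ)) * f u :=
        integral_indicator measurableSet_Ioc

instance : IsFiniteMeasure mu01 := by
  constructor
  rw [mu01, Measure.restrict_apply_univ, Real.volume_Icc]
  exact ENNReal.ofReal_lt_top

/-- Let `1 ≤ p < ∞` and for `α ∈ (0,1]` let `e_α t = min (t/α) 1`,
whose derivative is `e_α' = α⁻¹ · χ_{[0,α)}`.  For every `g ∈ AC_p` (with derivative
`g' ∈ L^p[0,1]`), the product `e_α g` belongs to `AC_p` with derivative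
`D_α = e_α' g + e_α g'`, one has
`|||e_α g − g||| = ‖D_α − g'‖_p ≤ (p^{−1/p} + 1) ‖g'·χ_{[0,α]}‖_p`,
and consequently `|||e_α g − g||| → 0` as `α → 0⁺`: `{e_α}` is an approximate
identity for `AC_p`. -/
theorem ACp_approximate_identity
    (p : ℝ≥0∞) (hp1 : 1 ≤ p) (hp_top : p ≠ ∞)
    (g g' : ℝ → ℂ)
    (hg' : MemLp g' p mu01)
    (hg : ∀ t ∈ Set.Icc (0 : ℝ) 1, g t = ∫ s in Set.Ioc (0 : ℝ) t, g' s) :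
    (∀ α ∈ Set.Ioc (0 : ℝ) 1,
      MemLp (fun t => (Set.Ico (0 : ℝ) α).indicator (fun _ => ((α : ℂ))⁻¹) t * g t
          + ((min (t / α) 1 : ℝ) : ℂ) * g' t) p mu01 ∧
      (∀ t ∈ Set.Icc (0 : ℝ) 1,
        ((min (t / α) 1 : ℝ) : ℂ) * g t =
          ∫ s in Set.Ioc (0 : ℝ) t,
            ((Set.Ico (0 : ℝ) α).indicator (fun _ => ((α : ℂ))⁻¹) s * g s
              + ((min (s / α) 1 : ℝ) : ℂ) * g' s)) ∧
      eLpNorm (fun t => (Set.Ico (0 : ℝ) α).indicator (fun _ => ((α : ℂ))⁻¹) t * g t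
          + ((min (t / α) 1 : ℝ) : ℂ) * g' t - g' t) p mu01 ≤
        ENNReal.ofReal (p.toReal ^ (-(1 / p.toReal)) + 1) *
          eLpNorm ((Set.Icc (0 : ℝ) α).indicator g') p mu01) ∧
    Tendsto (fun α : ℝ =>
        eLpNorm (fun t => (Set.Ico (0 : ℝ) α).indicator (fun _ => ((α : ℂ))⁻¹) t * g t
          + ((min (t / α) 1 : ℝ) : ℂ) * g' t - g' t) p mu01)
      (𝓝[>] (0 : ℝ)) (𝓝 0) := by
  have hp0 : p ≠ 0 := fun h => by simp [h] at hp1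
  have hq1 : 1 ≤ p.toReal := by
    rw [← ENNReal.toReal_one]
    exact ENNReal.toReal_mono hp_top hp1
  have hq0 : 0 < p.toReal := lt_of_lt_of_le one_pos hq1
  set g1 : ℝ → ℂ := (Set.Icc (0:ℝ) 1).indicator g' with hg1def
  have hg'int : Integrable g' mu01 := hg'.integrable hp1
  have hg1int : Integrable g1 volume := by
    rw [hg1def, integrable_indicator_iff measurableSet_Icc]
    exact hg'int
  have hg1eq : ∀ s ∈ Set.Icc (0:ℝ) 1, g1 s = g' s := fun s hs => Set.indicator_of_mem hs g'
  have hgIoc : ∀ t ∈ Set.Icc (0:ℝ) 1, g t = ∫ s in Set.Ioc (0:ℝ) t, g1 s := by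
    intro t ht
    rw [hg t ht]
    refine (setIntegral_congr_fun measurableSet_Ioc fun s hs => ?_).symm
    exact hg1eq s ⟨hs.1.le, hs.2.trans ht.2⟩
  set P : ℝ → ℂ := fun x => ∫ s in (0:ℝ)..x, g1 s with hPdef
  have hPcont : Continuous P := hg1int.continuous_primitive 0
  have hgP : ∀ t ∈ Set.Icc (0:ℝ) 1, g t = P t := by
    intro t ht
    rw [hgIoc t ht, hPdef]
    exact (intervalIntegral.integral_of_le ht.1).symm
  have hmem : ∀ᵐ t ∂mu01, t ∈ Set.Icc (0:ℝ) 1 := ae_restrict_mem measurableSet_Icc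
  have hgae : g =ᵐ[mu01] P := hmem.mono fun t ht => hgP t ht
  have hgsm : AEStronglyMeasurable g mu01 := hPcont.aestronglyMeasurable.congr hgae.symm
  set M : ℝ := ∫ u, ‖g1 u‖ with hMdef
  have hgbd : ∀ t ∈ Set.Icc (0:ℝ) 1, ‖g t‖ ≤ M := by
    intro t ht
    rw [hgIoc t ht]
    calc ‖∫ s in Set.Ioc (0:ℝ) t, g1 s‖ ≤ ∫ s in Set.Ioc (0:ℝ) t, ‖g1 s‖ :=
          norm_integral_le_integral_norm _
      _ ≤ M := setIntegral_le_integral hg1int.norm (Eventually.of_forall fun x => norm_nonneg _)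
  have main : ∀ α ∈ Set.Ioc (0 : ℝ) 1,
      MemLp (fun t => (Set.Ico (0 : ℝ) α).indicator (fun _ => ((α : ℂ))⁻¹) t * g t
          + ((min (t / α) 1 : ℝ) : ℂ) * g' t) p mu01 ∧
      (∀ t ∈ Set.Icc (0 : ℝ) 1,
        ((min (t / α) 1 : ℝ) : ℂ) * g t =
          ∫ s in Set.Ioc (0 : ℝ) t,
            ((Set.Ico (0 : ℝ) α).indicator (fun _ => ((α : ℂ))⁻¹) s * g s
              + ((min (s / α) 1 : ℝ) : ℂ) * g' s)) ∧
      eLpNorm (fun t => (Set.Ico (0 : ℝ) α).indicator (fun _ => ((α : ℂ))⁻¹) t * g t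
          + ((min (t / α) 1 : ℝ) : ℂ) * g' t - g' t) p mu01 ≤
        ENNReal.ofReal (p.toReal ^ (-(1 / p.toReal)) + 1) *
          eLpNorm ((Set.Icc (0 : ℝ) α).indicator g') p mu01 := by
    rintro α ⟨hα0, hα1⟩
    have hecont : Continuous fun x : ℝ => ((min (x / α) 1 : ℝ) : ℂ) :=
      Complex.continuous_ofReal.comp ((continuous_id.div_const α).min continuous_const)
    have heb : ∀ x : ℝ, 0 ≤ x → ‖((min (x / α) 1 : ℝ) : ℂ)‖ ≤ 1 := by
      intro x hx
      rw [Complex.norm_real, Real.norm_eq_abs, abs_le]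
      have h0 : (0:ℝ) ≤ min (x/α) 1 := le_min (div_nonneg hx hα0.le) zero_le_one
      exact ⟨by linarith, min_le_right _ _⟩
    have hχsm : AEStronglyMeasurable
        (fun t => (Set.Ico (0:ℝ) α).indicator (fun _ => ((α : ℂ))⁻¹) t) mu01 :=
      (aestronglyMeasurable_const.indicator measurableSet_Ico)
    have hmem1 : MemLp (fun t => (Set.Ico (0:ℝ) α).indicator (fun _ => ((α:ℂ))⁻¹) t * g t)
        p mu01 := by
      refine MemLp.of_bound (hχsm.mul hgsm) (α⁻¹ * M) ?_
      filter_upwards [hmem] with t ht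
      have h1 : ‖(Set.Ico (0:ℝ) α).indicator (fun _ => ((α:ℂ))⁻¹) t‖ ≤ α⁻¹ := by
        by_cases h : t ∈ Set.Ico (0:ℝ) α
        · rw [Set.indicator_of_mem h]
          rw [norm_inv, Complex.norm_real, Real.norm_eq_abs, abs_of_nonneg hα0.le]
        · simp [Set.indicator_of_notMem h, inv_nonneg.2 hα0.le]
      rw [norm_mul]
      exact mul_le_mul h1 (hgbd t ht) (norm_nonneg _) (inv_nonneg.2 hα0.le)
    have hmem2 : MemLp (fun t => ((min (t / α) 1 : ℝ) : ℂ) * g' t) p mu01 := by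
      refine MemLp.of_le hg' (hecont.aestronglyMeasurable.mul hg'.1) ?_
      filter_upwards [hmem] with t ht
      rw [norm_mul]
      exact mul_le_of_le_one_left (norm_nonneg _) (heb t ht.1)
    refine ⟨hmem1.add hmem2, ?_, ?_⟩
    · -- part 2
      intro t ht
      have hsub : Set.Ioc (0:ℝ) t ⊆ Set.Icc (0:ℝ) 1 := fun s hs => ⟨hs.1.le, hs.2.trans ht.2⟩
      have step1 : (∫ s in Set.Ioc (0:ℝ) t,
            ((Set.Ico (0:ℝ) α).indicator (fun _ => ((α:ℂ))⁻¹) s * g s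
              + ((min (s / α) 1 : ℝ) : ℂ) * g' s))
          = ∫ s in Set.Ioc (0:ℝ) t,
            ((Set.Ico (0:ℝ) α).indicator (fun _ => ((α:ℂ))⁻¹) s * (∫ u in Set.Ioc (0:ℝ) s, g1 u)
              + ((min (s / α) 1 : ℝ) : ℂ) * g1 s) := by
        refine setIntegral_congr_fun measurableSet_Ioc fun s hs => ?_
        rw [hgIoc s (hsub hs), hg1eq s (hsub hs)]
      have hIint : IntegrableOn
          (fun s => (Set.Ico (0:ℝ) α).indicator (fun _ => ((α:ℂ))⁻¹) s
            * (∫ u in Set.Ioc (0:ℝ) s, g1 u)) (Set.Ioc (0:ℝ) t) volume := by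
        have hc : IntegrableOn
            (fun s => (Set.Ico (0:ℝ) α).indicator (fun s' => ((α:ℂ))⁻¹ * P s') s)
            (Set.Ioc (0:ℝ) t) volume :=
          ((continuous_const.mul hPcont).integrableOn_Ioc).indicator measurableSet_Ico
        refine hc.congr_fun (fun s hs => ?_) measurableSet_Ioc
        by_cases h : s ∈ Set.Ico (0:ℝ) α
        · beta_reduce; rw [Set.indicator_of_mem h, Set.indicator_of_mem h]
          rw [hPdef]
          simp only
          rw [intervalIntegral.integral_of_le hs.1.le]
        · beta_reduce; rw [Set.indicator_of_notMem h, Set.indicator_of_notMem h, zero_mul]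
      have hBint : IntegrableOn (fun s => ((min (s / α) 1 : ℝ) : ℂ) * g1 s)
          (Set.Ioc (0:ℝ) t) volume := by
        refine Integrable.mono' hg1int.norm.integrableOn
          (hecont.aestronglyMeasurable.mul hg1int.aestronglyMeasurable).restrict ?_
        filter_upwards [ae_restrict_mem measurableSet_Ioc] with s hs
        rw [norm_mul]
        exact mul_le_of_le_one_left (norm_nonneg _) (heb s hs.1.le)
      have hCint : IntegrableOn
          (fun u => (((min (t / α) 1 : ℝ) : ℂ) - ((min (u / α) 1 : ℝ) : ℂ)) * g1 u)
          (Set.Ioc (0:ℝ) t) volume := by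
        refine Integrable.mono' hg1int.norm.integrableOn
          (((continuous_const.sub hecont).aestronglyMeasurable.mul
            hg1int.aestronglyMeasurable)).restrict ?_
        filter_upwards [ae_restrict_mem measurableSet_Ioc] with u hu
        rw [norm_mul]
        refine mul_le_of_le_one_left (norm_nonneg _) ?_
        rw [← Complex.ofReal_sub, Complex.norm_real, Real.norm_eq_abs, abs_le]
        have h1 : (0:ℝ) ≤ min (t/α) 1 := le_min (div_nonneg ht.1 hα0.le) zero_le_one
        have h2 : (0:ℝ) ≤ min (u/α) 1 := le_min (div_nonneg hu.1.le hα0.le) zero_le_one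
        have h3 : min (t/α) 1 ≤ 1 := min_le_right _ _
        have h4 : min (u/α) 1 ≤ 1 := min_le_right _ _
        constructor <;> linarith
      calc ((min (t / α) 1 : ℝ) : ℂ) * g t
          = ((min (t / α) 1 : ℝ) : ℂ) * ∫ u in Set.Ioc (0:ℝ) t, g1 u := by rw [← hgIoc t ht]
        _ = ∫ u in Set.Ioc (0:ℝ) t, ((min (t / α) 1 : ℝ) : ℂ) * g1 u := (integral_const_mul _ _).symm
        _ = ∫ u in Set.Ioc (0:ℝ) t,
              ((((min (t / α) 1 : ℝ) : ℂ) - ((min (u / α) 1 : ℝ) : ℂ)) * g1 u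
                + ((min (u / α) 1 : ℝ) : ℂ) * g1 u) := by
            refine setIntegral_congr_fun measurableSet_Ioc fun u hu => ?_
            ring
        _ = (∫ u in Set.Ioc (0:ℝ) t,
              (((min (t / α) 1 : ℝ) : ℂ) - ((min (u / α) 1 : ℝ) : ℂ)) * g1 u)
            + ∫ u in Set.Ioc (0:ℝ) t, ((min (u / α) 1 : ℝ) : ℂ) * g1 u :=
            integral_add hCint hBint
        _ = (∫ s in Set.Ioc (0:ℝ) t,
              (Set.Ico (0:ℝ) α).indicator (fun _ => ((α:ℂ))⁻¹) s * (∫ u in Set.Ioc (0:ℝ) s, g1 u))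
            + ∫ u in Set.Ioc (0:ℝ) t, ((min (u / α) 1 : ℝ) : ℂ) * g1 u := by
            rw [triangle_swap g1 hg1int hα0]
        _ = ∫ s in Set.Ioc (0:ℝ) t,
            ((Set.Ico (0:ℝ) α).indicator (fun _ => ((α:ℂ))⁻¹) s * (∫ u in Set.Ioc (0:ℝ) s, g1 u)
              + ((min (s / α) 1 : ℝ) : ℂ) * g1 s) := (integral_add hIint hBint).symm
        _ = _ := step1.symm
    · -- part 3
      set q := p.toReal with hqdef
      set C := eLpNorm ((Set.Icc (0:ℝ) α).indicator g') p mu01 with hCdef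
      have hDrw : (fun t => (Set.Ico (0 : ℝ) α).indicator (fun _ => ((α : ℂ))⁻¹) t * g t
            + ((min (t / α) 1 : ℝ) : ℂ) * g' t - g' t)
          = fun t => ((Set.Ico (0 : ℝ) α).indicator (fun _ => ((α : ℂ))⁻¹) t * g t)
            + ((((min (t / α) 1 : ℝ) : ℂ) - 1) * g' t) := by
        funext t; ring
      have hF1m : AEStronglyMeasurable
          (fun t => (Set.Ico (0 : ℝ) α).indicator (fun _ => ((α : ℂ))⁻¹) t * g t) mu01 :=
        hχsm.mul hgsm
      have hF2m : AEStronglyMeasurable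
          (fun t => (((min (t / α) 1 : ℝ) : ℂ) - 1) * g' t) mu01 :=
        ((hecont.sub continuous_const).aestronglyMeasurable).mul hg'.1
      have hA : eLpNorm (fun t => (((min (t / α) 1 : ℝ) : ℂ) - 1) * g' t) p mu01 ≤ C := by
        refine eLpNorm_mono_ae ?_
        filter_upwards [hmem] with t ht
        rcases le_or_gt α t with h | h
        · have he1 : min (t/α) 1 = 1 := min_eq_right ((one_le_div hα0).2 h)
          simp [he1]
        · have hmem' : t ∈ Set.Icc (0:ℝ) α := ⟨ht.1, h.le⟩
          rw [Set.indicator_of_mem hmem', norm_mul]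
          refine mul_le_of_le_one_left (norm_nonneg _) ?_
          have h0 : (0:ℝ) ≤ min (t/α) 1 := le_min (div_nonneg ht.1 hα0.le) zero_le_one
          have h1 : min (t/α) 1 ≤ 1 := min_le_right _ _
          calc ‖((min (t/α) 1:ℝ):ℂ) - 1‖ = ‖((min (t/α) 1 - 1 :ℝ):ℂ)‖ := by push_cast; ring_nf
            _ ≤ 1 := by
                rw [Complex.norm_real, Real.norm_eq_abs, abs_le]
                constructor <;> linarith
      have hB : eLpNorm (fun t => (Set.Ico (0 : ℝ) α).indicator (fun _ => ((α : ℂ))⁻¹) t * g t)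
          p mu01 ≤ ENNReal.ofReal (q ^ (-(1/q))) * C := by
        by_cases hC : C = ∞
        · rw [hC, ENNReal.mul_top (by
            simp only [ne_eq, ENNReal.ofReal_eq_zero, not_le]
            exact Real.rpow_pos_of_pos hq0 _)]
          exact le_top
        · have hr0 : (0:ℝ) ≤ 1 - 1/q := by
            have : 1/q ≤ 1 := by rw [div_le_one hq0]; exact hq1
            linarith
          have h00 : mu01 {(0:ℝ)} = 0 := by
            rw [mu01, Measure.restrict_apply (measurableSet_singleton 0)]
            exact measure_mono_null Set.inter_subset_left (measure_singleton 0)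
          have hzero : ∀ᵐ t ∂mu01, t ≠ 0 := by
            have hset : {a : ℝ | ¬ a ≠ 0} = {0} := by ext x; simp
            rw [ae_iff, hset]
            exact h00
          have hpt : ∀ᵐ t ∂mu01,
              ‖(Set.Ico (0 : ℝ) α).indicator (fun _ => ((α : ℂ))⁻¹) t * g t‖ ≤
              ‖(Set.Ioc (0:ℝ) α).indicator (fun x => α⁻¹ * (C.toReal * x ^ (1 - 1/q))) t‖ := by
            filter_upwards [hmem, hzero] with t ht ht0
            by_cases htα : t ∈ Set.Ico (0:ℝ) α
            swap
            · rw [Set.indicator_of_notMem htα, zero_mul]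
              simp
            have ht' : t ∈ Set.Ioc (0:ℝ) α := ⟨lt_of_le_of_ne htα.1 (Ne.symm ht0), htα.2.le⟩
            have hgsmall : ‖g t‖ ≤ C.toReal * t ^ (1 - 1/q) := by
              have hνsub : Set.Ioc (0:ℝ) t ⊆ Set.Icc (0:ℝ) 1 :=
                fun s hs => ⟨hs.1.le, hs.2.trans ht.2⟩
              have hνsub2 : Set.Ioc (0:ℝ) t ⊆ Set.Icc (0:ℝ) α :=
                fun s hs => ⟨hs.1.le, hs.2.trans ht'.2⟩
              have hν : volume.restrict (Set.Ioc (0:ℝ) t) = mu01.restrict (Set.Ioc (0:ℝ) t) := by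
                rw [mu01, Measure.restrict_restrict measurableSet_Ioc,
                  Set.inter_eq_left.2 hνsub]
              have hsm' : AEStronglyMeasurable g' (volume.restrict (Set.Ioc (0:ℝ) t)) := by
                rw [hν]; exact hg'.1.restrict
              have h1 : ‖g t‖ ≤ ∫ s in Set.Ioc (0:ℝ) t, ‖g' s‖ := by
                rw [hg t ht]; exact norm_integral_le_integral_norm _
              have h2 : ∫ s in Set.Ioc (0:ℝ) t, ‖g' s‖
                  = (eLpNorm g' 1 (volume.restrict (Set.Ioc (0:ℝ) t))).toReal := by
                rw [eLpNorm_one_eq_lintegral_enorm]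
                exact integral_norm_eq_lintegral_enorm hsm'
              have h4 : eLpNorm g' p (volume.restrict (Set.Ioc (0:ℝ) t)) ≤ C := by
                rw [hCdef, eLpNorm_indicator_eq_eLpNorm_restrict measurableSet_Icc]
                refine le_trans (le_of_eq (by rw [hν])) (eLpNorm_mono_measure _ ?_)
                exact Measure.restrict_mono hνsub2 le_rfl
              have h3 : eLpNorm g' 1 (volume.restrict (Set.Ioc (0:ℝ) t))
                  ≤ C * ENNReal.ofReal t ^ (1 - 1/q) := by
                refine le_trans (eLpNorm_le_eLpNorm_mul_rpow_measure_univ hp1 hsm') ?_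
                rw [Measure.restrict_apply_univ, Real.volume_Ioc, sub_zero]
                have hexp : 1/(1:ℝ≥0∞).toReal - 1/p.toReal = 1 - 1/q := by
                  rw [ENNReal.toReal_one]; norm_num [hqdef]
                rw [hexp]
                exact mul_le_mul_left h4 _
              have hfin : C * ENNReal.ofReal t ^ (1 - 1/q) ≠ ∞ :=
                ENNReal.mul_ne_top hC (ENNReal.rpow_ne_top_of_nonneg hr0 ENNReal.ofReal_ne_top)
              have h7 := ENNReal.toReal_mono hfin h3
              rw [ENNReal.toReal_mul, ← ENNReal.toReal_rpow, ENNReal.toReal_ofReal ht'.1.le] at h7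
              calc ‖g t‖ ≤ _ := h1
                _ = _ := h2
                _ ≤ _ := h7
            rw [Set.indicator_of_mem ht', Set.indicator_of_mem htα, norm_mul, norm_inv,
              Complex.norm_real, Real.norm_eq_abs, abs_of_nonneg hα0.le, Real.norm_eq_abs,
              abs_of_nonneg (mul_nonneg (inv_nonneg.2 hα0.le)
                (mul_nonneg ENNReal.toReal_nonneg (Real.rpow_nonneg ht'.1.le _)))]
            exact mul_le_mul_of_nonneg_left hgsmall (inv_nonneg.2 hα0.le)
          refine le_trans (eLpNorm_mono_ae hpt) ?_
          have hres : mu01.restrict (Set.Ioc (0:ℝ) α) = volume.restrict (Set.Ioc (0:ℝ) α) := by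
            rw [mu01, Measure.restrict_restrict measurableSet_Ioc,
              Set.inter_eq_left.2 (fun s hs => Set.mem_Icc.2 ⟨hs.1.le, hs.2.trans hα1⟩)]
          rw [eLpNorm_indicator_eq_eLpNorm_restrict measurableSet_Ioc, hres,
            eLpNorm_eq_lintegral_rpow_enorm_toReal hp0 hp_top]
          have hint : IntegrableOn (fun x : ℝ => (α⁻¹*C.toReal)^q * x^(q-1))
              (Set.Ioc (0:ℝ) α) volume := by
            have h := intervalIntegral.intervalIntegrable_rpow'
              (show (-1:ℝ) < q-1 by linarith) (a := 0) (b := α)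
            rw [intervalIntegrable_iff_integrableOn_Ioc_of_le hα0.le] at h
            exact h.const_mul _
          have hlint : (∫⁻ x in Set.Ioc (0:ℝ) α,
                ‖α⁻¹ * (C.toReal * x ^ (1-1/q))‖ₑ ^ q ∂volume)
              = ENNReal.ofReal ((α⁻¹*C.toReal)^q * (α ^ q / q)) := by
            have hptw : ∀ᵐ x ∂(volume.restrict (Set.Ioc (0:ℝ) α)),
                ‖α⁻¹ * (C.toReal * x ^ (1-1/q))‖ₑ ^ q
                  = ENNReal.ofReal ((α⁻¹*C.toReal)^q * x ^ (q-1)) := by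
              filter_upwards [ae_restrict_mem measurableSet_Ioc] with x hx
              rw [← ofReal_norm,
                ENNReal.ofReal_rpow_of_nonneg (norm_nonneg _) hq0.le]
              congr 1
              rw [Real.norm_eq_abs, abs_of_nonneg (mul_nonneg (inv_nonneg.2 hα0.le)
                  (mul_nonneg ENNReal.toReal_nonneg (Real.rpow_nonneg hx.1.le _))), ← mul_assoc,
                Real.mul_rpow (by positivity) (Real.rpow_nonneg hx.1.le _),
                ← Real.rpow_mul hx.1.le]
              congr 1
              field_simp
            rw [lintegral_congr_ae hptw, ← ofReal_integral_eq_lintegral_ofReal hint ?hnn]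
            case hnn =>
              filter_upwards [ae_restrict_mem measurableSet_Ioc] with x hx
              exact mul_nonneg (Real.rpow_nonneg (by positivity) _) (Real.rpow_nonneg hx.1.le _)
            congr 1
            rw [integral_const_mul, ← intervalIntegral.integral_of_le hα0.le,
              integral_rpow (Or.inl (by linarith))]
            have hq' : q - 1 + 1 = q := by ring
            rw [hq', Real.zero_rpow hq0.ne']
            ring
          rw [hlint, ENNReal.ofReal_rpow_of_nonneg
            (by positivity) (by positivity)]
          have e1 : (((α⁻¹*C.toReal)^q))^(1/q) = α⁻¹*C.toReal := by
            rw [← Real.rpow_mul (by positivity), mul_one_div_cancel hq0.ne', Real.rpow_one]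
          have e2 : ((α:ℝ)^q)^(1/q) = α := by
            rw [← Real.rpow_mul hα0.le, mul_one_div_cancel hq0.ne', Real.rpow_one]
          have e3 : ((q⁻¹ : ℝ))^(1/q) = q^(-(1/q)) := by
            rw [← Real.rpow_neg_one q, ← Real.rpow_mul hq0.le]
            norm_num
          have hreal : (((α⁻¹*C.toReal)^q) * (α ^ q / q)) ^ (1/q)
              = q ^ (-(1/q)) * C.toReal := by
            rw [div_eq_mul_inv, ← mul_assoc,
              Real.mul_rpow (by positivity) (by positivity),
              Real.mul_rpow (by positivity) (by positivity), e1, e2, e3]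
            field_simp
          rw [hreal, ENNReal.ofReal_mul (by positivity), ENNReal.ofReal_toReal hC]
      rw [hDrw]
      calc eLpNorm (fun t => ((Set.Ico (0 : ℝ) α).indicator (fun _ => ((α : ℂ))⁻¹) t * g t)
            + ((((min (t / α) 1 : ℝ) : ℂ) - 1) * g' t)) p mu01
          ≤ eLpNorm (fun t => (Set.Ico (0 : ℝ) α).indicator (fun _ => ((α : ℂ))⁻¹) t * g t) p mu01
            + eLpNorm (fun t => (((min (t / α) 1 : ℝ) : ℂ) - 1) * g' t) p mu01 :=
            eLpNorm_add_le hF1m hF2m hp1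
        _ ≤ ENNReal.ofReal (q ^ (-(1/q))) * C + C := add_le_add hB hA
        _ = ENNReal.ofReal (q ^ (-(1/q)) + 1) * C := by
            rw [ENNReal.ofReal_add (by positivity) zero_le_one, ENNReal.ofReal_one,
              add_mul, one_mul]
  have tend : Tendsto (fun α : ℝ =>
        eLpNorm (fun t => (Set.Ico (0 : ℝ) α).indicator (fun _ => ((α : ℂ))⁻¹) t * g t
          + ((min (t / α) 1 : ℝ) : ℂ) * g' t - g' t) p mu01)
      (𝓝[>] (0 : ℝ)) (𝓝 0) := by
    rw [ENNReal.tendsto_nhds_zero]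
    intro ε hε
    set K := ENNReal.ofReal (p.toReal ^ (-(1/p.toReal)) + 1) with hKdef
    have hK0 : K ≠ 0 := by
      simp only [hKdef, ne_eq, ENNReal.ofReal_eq_zero, not_le]
      have := Real.rpow_pos_of_pos hq0 (-(1/p.toReal))
      linarith
    have hKtop : K ≠ ∞ := ENNReal.ofReal_ne_top
    set ε₀ := min ε 1 with hε₀def
    have hε₀0 : ε₀ ≠ 0 := (lt_min hε one_pos).ne'
    have hε₀top : ε₀ ≠ ∞ := ne_top_of_le_ne_top ENNReal.one_ne_top (min_le_right _ _)
    have hdiv0 : (0:ℝ) < (ε₀ / K).toReal := by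
      apply ENNReal.toReal_pos
      · exact (ENNReal.div_pos hε₀0 hKtop).ne'
      · exact (ENNReal.div_lt_top hε₀top hK0).ne
    obtain ⟨δ, hδ0, hδ⟩ := hg'.eLpNorm_indicator_le hp1 hp_top hdiv0
    have hIoc : Set.Ioc (0:ℝ) (min 1 δ) ∈ 𝓝[>] (0:ℝ) :=
      Ioc_mem_nhdsGT_of_mem ⟨le_refl 0, lt_min one_pos hδ0⟩
    filter_upwards [hIoc] with α hα
    have hα' : α ∈ Set.Ioc (0:ℝ) 1 := ⟨hα.1, hα.2.trans (min_le_left _ _)⟩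
    refine le_trans ((main α hα').2.2) ?_
    have h1 : mu01 (Set.Icc (0:ℝ) α) ≤ ENNReal.ofReal δ := by
      rw [mu01, Measure.restrict_apply measurableSet_Icc]
      refine le_trans (measure_mono Set.inter_subset_left) ?_
      rw [Real.volume_Icc, sub_zero]
      exact ENNReal.ofReal_le_ofReal (hα.2.trans (min_le_right _ _))
    have h2 := hδ _ measurableSet_Icc h1
    rw [ENNReal.ofReal_toReal (ENNReal.div_lt_top hε₀top hK0).ne] at h2
    calc K * eLpNorm ((Set.Icc (0:ℝ) α).indicator g') p mu01 ≤ K * (ε₀ / K) :=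
          mul_le_mul_right h2 _
      _ = ε₀ := ENNReal.mul_div_cancel' (fun h => absurd h hK0) (fun h => absurd h hKtop)
      _ ≤ ε := min_le_left _ _
  exact ⟨main, tend⟩
end

section
/- Let ι ∈ AC_∞ denote the function ι(t) = t. For every g ∈ AC_∞, |||ι·g − ι||| = ess sup_{t ∈ [0,1]} |t g'(t) + g(t) − 1| ≥ 1. Consequently, AC_∞ has no approximate identity. -/
open MeasureTheory Set Filter
open scoped ENNReal NNReal Topology

lemma ENnreal_helper {c : ℂ} {a : ℝ≥0∞} (h : (‖c‖₊ : ℝ≥0∞) ≤ a) (ha : a ≠ ⊤) :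
    ‖c‖ ≤ a.toReal := by
  have := ENNReal.toReal_mono ha h
  simpa using this

lemma ACinfty_key (g g' : ℝ → ℂ) (hg' : MemLp g' ∞ mu01)
    (hg : ∀ t ∈ Set.Icc (0 : ℝ) 1, g t = ∫ s in Set.Ioc (0 : ℝ) t, g' s) :
    1 ≤ eLpNorm (fun t : ℝ => (t : ℂ) * g' t + g t - 1) ∞ mu01 := by
  set h : ℝ → ℂ := fun t : ℝ => (t : ℂ) * g' t + g t - 1 with hh
  by_contra hcon
  push_neg at hcon
  set M : ℝ := (eLpNorm g' ∞ mu01).toReal with hM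
  have hM0 : 0 ≤ M := ENNReal.toReal_nonneg
  have hg'M : ∀ᵐ t ∂mu01, ‖g' t‖ ≤ M := by
    filter_upwards [ae_le_eLpNormEssSup (f := g') (μ := mu01)] with t ht
    have : (‖g' t‖₊ : ℝ≥0∞) ≤ eLpNorm g' ∞ mu01 := by
      rwa [eLpNorm_exponent_top]
    have := ENnreal_helper this hg'.2.ne
    exact this
  set r : ℝ := (eLpNorm h ∞ mu01).toReal with hr
  have hrlt : r < 1 := by
    have := ENNReal.toReal_lt_toReal (ne_of_lt (lt_trans hcon ENNReal.one_lt_top)) ENNReal.one_ne_top |>.mpr hcon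
    rw [hr]; simpa using this
  have hhr : ∀ᵐ t ∂mu01, ‖h t‖ ≤ r := by
    filter_upwards [ae_le_eLpNormEssSup (f := h) (μ := mu01)] with t ht
    have : (‖h t‖₊ : ℝ≥0∞) ≤ eLpNorm h ∞ mu01 := by
      rwa [eLpNorm_exponent_top]
    exact ENnreal_helper this (lt_trans hcon ENNReal.one_lt_top).ne
  -- choose ε
  set ε : ℝ := min ((1 - r) / (2 * M + 2)) 1 with hε
  have hεpos : 0 < ε := lt_min (div_pos (by linarith) (by linarith)) one_pos
  have hε1 : ε ≤ 1 := min_le_right _ _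
  -- bound on g
  have hgbound : ∀ t ∈ Set.Icc (0 : ℝ) 1, ‖g t‖ ≤ M * t := by
    intro t ht
    rw [hg t ht]
    have hsub : Set.Ioc (0 : ℝ) t ⊆ Set.Icc (0 : ℝ) 1 :=
      fun x hx => ⟨le_of_lt hx.1, le_trans hx.2 ht.2⟩
    have hae : ∀ᵐ s ∂(volume.restrict (Set.Ioc (0 : ℝ) t)), ‖g' s‖ ≤ M := by
      have := hg'M
      rw [hM] at this ⊢
      exact ae_restrict_of_ae_restrict_of_subset hsub this
    have hfin : volume (Set.Ioc (0 : ℝ) t) < ∞ := by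
      rw [Real.volume_Ioc]; exact ENNReal.ofReal_lt_top
    have := norm_setIntegral_le_of_norm_le_const_ae (μ := volume) hfin hae
    rw [Real.volume_real_Ioc_of_le (by linarith [ht.1])] at this
    simpa using this
  -- find a bad point
  have hpos : 0 < mu01 (Set.Ioc 0 ε) := by
    rw [mu01, Measure.restrict_apply measurableSet_Ioc]
    have : Set.Ioc (0:ℝ) ε ∩ Set.Icc 0 1 = Set.Ioc 0 ε := by
      apply Set.inter_eq_self_of_subset_left
      intro x hx; exact ⟨le_of_lt hx.1, le_trans hx.2 hε1⟩
    rw [this, Real.volume_Ioc]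
    simpa using hεpos
  have hae2 : ∀ᵐ t ∂mu01, ‖h t‖ ≤ r ∧ ‖g' t‖ ≤ M := hhr.and hg'M
  rw [Filter.eventually_iff, mem_ae_iff] at hae2
  have hne : (Set.Ioc (0:ℝ) ε ∩ {t | ‖h t‖ ≤ r ∧ ‖g' t‖ ≤ M}).Nonempty := by
    by_contra hemp
    push_neg at hemp
    have hsub : Set.Ioc (0:ℝ) ε ⊆ {t | ‖h t‖ ≤ r ∧ ‖g' t‖ ≤ M}ᶜ := by
      intro x hx hx2
      exact Set.eq_empty_iff_forall_notMem.mp hemp x ⟨hx, hx2⟩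
    exact absurd (measure_mono_null hsub hae2) (ne_of_gt hpos)
  obtain ⟨t, htε, hhrt, hg't⟩ := hne
  have ht01 : t ∈ Set.Icc (0:ℝ) 1 := ⟨le_of_lt htε.1, le_trans htε.2 hε1⟩
  have htpos : 0 < t := htε.1
  -- lower bound on ‖h t‖
  have h1 : ‖h t‖ ≥ 1 - (M * t + M * t) := by
    have : ‖(t : ℂ) * g' t + g t‖ ≤ M * t + M * t := by
      refine le_trans (norm_add_le _ _) (add_le_add ?_ (hgbound t ht01))
      rw [norm_mul, Complex.norm_real, Real.norm_eq_abs, abs_of_pos htpos, mul_comm]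
      exact mul_le_mul_of_nonneg_right hg't (le_of_lt htpos)
    calc ‖h t‖ = ‖((t : ℂ) * g' t + g t) - 1‖ := rfl
    _ ≥ ‖(1 : ℂ)‖ - ‖(t : ℂ) * g' t + g t‖ := by
        rw [norm_sub_rev]; exact norm_sub_norm_le _ _
    _ ≥ 1 - (M * t + M * t) := by rw [norm_one]; linarith
  -- but t ≤ ε so 2Mt < 1 - r
  have htε' : t ≤ (1 - r) / (2 * M + 2) := le_trans htε.2 (min_le_left _ _)
  have : 2 * M * t < 1 - r := by
    have h2 : (2 * M + 2) * t ≤ 1 - r := by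
      rw [mul_comm]
      exact (le_div_iff₀ (by linarith)).mp htε'
    nlinarith
  linarith [h1, hhrt]

/-- Let `ι ∈ AC_∞` be `ι t = t`.  For every `g ∈ AC_∞`
(with derivative `g' ∈ L^∞[0,1]`), the derivative of `ι g − ι` is
`t ↦ t g'(t) + g(t) − 1`, and
`|||ι g − ι||| = ess sup_{t ∈ [0,1]} |t g'(t) + g(t) − 1| ≥ 1`.
Consequently `AC_∞` has no (sequential) approximate identity. -/
theorem ACinfty_no_approximate_identity :
    (∀ g g' : ℝ → ℂ,
      MemLp g' ∞ mu01 →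
      (∀ t ∈ Set.Icc (0 : ℝ) 1, g t = ∫ s in Set.Ioc (0 : ℝ) t, g' s) →
      1 ≤ eLpNorm (fun t : ℝ => (t : ℂ) * g' t + g t - 1) ∞ mu01) ∧
    ¬ ∃ e e' : ℕ → ℝ → ℂ,
      (∀ n, MemLp (e' n) ∞ mu01 ∧
        ∀ t ∈ Set.Icc (0 : ℝ) 1, e n t = ∫ s in Set.Ioc (0 : ℝ) t, e' n s) ∧
      (∀ f f' : ℝ → ℂ,
        MemLp f' ∞ mu01 →
        (∀ t ∈ Set.Icc (0 : ℝ) 1, f t = ∫ s in Set.Ioc (0 : ℝ) t, f' s) →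
        Tendsto (fun n =>
            eLpNorm (fun t => e' n t * f t + e n t * f' t - f' t) ∞ mu01)
          atTop (𝓝 0)) := by
  refine ⟨ACinfty_key, ?_⟩
  rintro ⟨e, e', he, htend⟩
  have hf' : MemLp (fun _ : ℝ => (1 : ℂ)) ∞ mu01 := memLp_top_const 1
  have hf : ∀ t ∈ Set.Icc (0 : ℝ) 1,
      ((t : ℂ)) = ∫ s in Set.Ioc (0 : ℝ) t, (1 : ℂ) := by
    intro t ht
    rw [setIntegral_const, Real.volume_real_Ioc_of_le (by linarith [ht.1])]
    simp
  have := htend (fun t : ℝ => (t : ℂ)) (fun _ => 1) hf' hf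
  have hlb : ∀ n, (1 : ℝ≥0∞) ≤
      eLpNorm (fun t : ℝ => e' n t * (t : ℂ) + e n t * 1 - 1) ∞ mu01 := by
    intro n
    have := ACinfty_key (e n) (e' n) (he n).1 (he n).2
    have heq : (fun t : ℝ => e' n t * (t : ℂ) + e n t * 1 - 1)
        = fun t : ℝ => (t : ℂ) * e' n t + e n t - 1 := by
      funext t; ring
    rw [heq]
    exact this
  have hev := this.eventually (eventually_lt_nhds (by norm_num : (0:ℝ≥0∞) < 1))
  obtain ⟨n, hn⟩ := hev.exists
  exact absurd (hlb n) (not_le.mpr hn)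
end

section
/- For 1 ≤ p ≤ ∞, let f ∈ AC_p satisfy inf_{t ∈ [0,1]} |1 − f(t)| > 0. Then the function g := f/(f − 1) belongs to AC_p (its derivative is −f'/(f−1)² ∈ L^p[0,1]) and satisfies f(t) + g(t) − f(t)g(t) = 0 for all t ∈ [0,1]; that is, f is quasiregular in AC_p. -/
open MeasureTheory Set intervalIntegral
open scoped ENNReal NNReal

set_option maxHeartbeats 800000 in
lemma key_ftc {h : ℝ → ℂ} (hint : Integrable h volume) {a t : ℝ} (ha : 0 < a) (ht : 0 ≤ t)
    (hlb : ∀ s ∈ Set.Icc 0 t, a ≤ ‖(∫ x in (0:ℝ)..s, h x) - 1‖) :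
    (∫ x in (0:ℝ)..t, h x) / ((∫ x in (0:ℝ)..t, h x) - 1)
      = ∫ s in Set.Ioc (0:ℝ) t, -h s / ((∫ x in (0:ℝ)..s, h x) - 1) ^ 2 := by
  set F : ℝ → ℂ := fun s => ∫ x in (0:ℝ)..s, h x with hFdef
  have hFcont : Continuous F := hint.continuous_primitive 0
  obtain ⟨M, hM0, hMdef⟩ : ∃ M : ℝ, 0 ≤ M ∧ M = ∫ x, ‖h x‖ :=
    ⟨_, integral_nonneg fun x => norm_nonneg _, rfl⟩
  have hMF : ∀ s, ‖F s‖ ≤ M := by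
    intro s
    calc ‖F s‖ ≤ ∫ x in Set.uIoc 0 s, ‖h x‖ := norm_integral_le_integral_norm_uIoc
    _ ≤ M := by
          rw [hMdef]
          exact setIntegral_le_integral hint.norm
            (Filter.Eventually.of_forall fun x => norm_nonneg _)
  -- constants
  obtain ⟨C1, hC1, hC1def⟩ : ∃ C1 : ℝ, 0 ≤ C1 ∧ C1 = (2 * M + 2 + a) * 4 / a ^ 4 :=
    ⟨_, by positivity, rfl⟩
  obtain ⟨K, hK, hKdef⟩ : ∃ K : ℝ, 0 < K ∧ K = 3 / a ^ 2 + C1 * (M + a) + 1 :=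
    ⟨_, by positivity, rfl⟩
  rw [← sub_eq_zero, ← norm_eq_zero]
  refine le_antisymm ?_ (norm_nonneg _)
  refine le_of_forall_pos_le_add fun ε hεpos => ?_
  rw [zero_add]
  -- choose δ
  obtain ⟨δ, hδpos, hδa, hδε⟩ : ∃ δ : ℝ, 0 < δ ∧ δ ≤ a / 2 ∧ δ * K ≤ ε := by
    refine ⟨min (ε / K) (a / 2), lt_min (by positivity) (by positivity), min_le_right _ _, ?_⟩
    calc min (ε / K) (a / 2) * K ≤ ε / K * K :=
          mul_le_mul_of_nonneg_right (min_le_left _ _) hK.le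
    _ = ε := div_mul_cancel₀ _ hK.ne'
  obtain ⟨g, -, hgδ, hgc, hgi⟩ := hint.exists_hasCompactSupport_integral_sub_le hδpos
  have hhgn : Integrable (fun s => ‖h s - g s‖) volume := by
    simpa using (hint.sub hgi).norm
  set G : ℝ → ℂ := fun s => ∫ x in (0:ℝ)..s, g x with hGdef
  have hGcont : Continuous G := hgi.continuous_primitive 0
  have hFG : ∀ s, ‖F s - G s‖ ≤ δ := by
    intro s
    have : F s - G s = ∫ x in (0:ℝ)..s, (h x - g x) :=
      (integral_sub hint.intervalIntegrable hgi.intervalIntegrable).symm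
    rw [this]
    calc ‖∫ x in (0:ℝ)..s, (h x - g x)‖ ≤ ∫ x in Set.uIoc 0 s, ‖h x - g x‖ :=
          norm_integral_le_integral_norm_uIoc
    _ ≤ ∫ x, ‖h x - g x‖ :=
          setIntegral_le_integral (hint.sub hgi).norm
            (Filter.Eventually.of_forall fun x => norm_nonneg _)
    _ ≤ δ := hgδ
  have hGlb : ∀ s ∈ Set.Icc (0:ℝ) t, a / 2 ≤ ‖G s - 1‖ := by
    intro s hs
    have h1 := hlb s hs
    have h2 := hFG s
    have : ‖F s - 1‖ ≤ ‖G s - 1‖ + ‖F s - G s‖ := by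
      calc ‖F s - 1‖ = ‖(G s - 1) + (F s - G s)‖ := by ring_nf
      _ ≤ ‖G s - 1‖ + ‖F s - G s‖ := norm_add_le _ _
    linarith
  have hGne : ∀ s ∈ Set.Icc (0:ℝ) t, G s - 1 ≠ 0 := by
    intro s hs hz
    have := hGlb s hs
    rw [hz, norm_zero] at this
    linarith
  have hFne : ∀ s ∈ Set.Icc (0:ℝ) t, F s - 1 ≠ 0 := by
    intro s hs hz
    have := hlb s hs
    rw [hz, norm_zero] at this
    linarith
  have hGderiv : ∀ s, HasDerivAt G (g s) s := fun s =>
    integral_hasDerivAt_right hgi.intervalIntegrable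
      (hgc.stronglyMeasurableAtFilter volume _) hgc.continuousAt
  have hΦderiv : ∀ s ∈ Set.uIcc (0:ℝ) t,
      HasDerivAt (fun u => G u / (G u - 1)) (-g s / (G s - 1) ^ 2) s := by
    intro s hs
    rw [Set.uIcc_of_le ht] at hs
    have hd := (hGderiv s).div ((hGderiv s).sub_const 1) (hGne s hs)
    convert hd using 1
    · rfl
    congr 1
    ring
  have hcontint : IntervalIntegrable (fun s => -g s / (G s - 1) ^ 2) volume 0 t := by
    apply ContinuousOn.intervalIntegrable
    rw [Set.uIcc_of_le ht]
    exact (hgc.continuousOn.neg).div (((hGcont.sub continuous_const).pow 2).continuousOn)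
      fun s hs => pow_ne_zero 2 (hGne s hs)
  have hFTC : (∫ s in Set.Ioc (0:ℝ) t, -g s / (G s - 1) ^ 2) = G t / (G t - 1) := by
    have h2 := integral_eq_sub_of_hasDerivAt hΦderiv hcontint
    rw [intervalIntegral.integral_of_le ht] at h2
    rw [h2]
    have h3 : G 0 = 0 := intervalIntegral.integral_same
    rw [h3]
    simp
  -- integrability of the two integrands on `Ioc 0 t`
  have hsub : ∀ s ∈ Set.Ioc (0:ℝ) t, s ∈ Set.Icc (0:ℝ) t := fun s hs => ⟨hs.1.le, hs.2⟩
  have hFmeas : AEStronglyMeasurable (fun s => -h s / (F s - 1) ^ 2)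
      (volume.restrict (Set.Ioc (0:ℝ) t)) :=
    ((hint.aestronglyMeasurable.restrict.neg).aemeasurable.div
      (((hFcont.sub continuous_const).pow 2).aestronglyMeasurable.restrict.aemeasurable)
      ).aestronglyMeasurable
  have hIh : IntegrableOn (fun s => -h s / (F s - 1) ^ 2) (Set.Ioc 0 t) volume := by
    apply Integrable.mono' ((hint.norm.const_mul (a ^ 2)⁻¹).restrict) hFmeas
    filter_upwards [ae_restrict_mem measurableSet_Ioc] with s hs
    have hx := hlb s (hsub s hs)
    rw [norm_div, norm_neg, norm_pow]
    calc ‖h s‖ / ‖F s - 1‖ ^ 2 ≤ ‖h s‖ / a ^ 2 := by gcongr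
    _ = (a ^ 2)⁻¹ * ‖h s‖ := by rw [div_eq_inv_mul]
  have hIg : IntegrableOn (fun s => -g s / (G s - 1) ^ 2) (Set.Ioc 0 t) volume := hcontint.1
  -- decomposition
  have hsplit : F t / (F t - 1) - (∫ s in Set.Ioc (0:ℝ) t, -h s / (F s - 1) ^ 2)
      = (F t / (F t - 1) - G t / (G t - 1))
        + ∫ s in Set.Ioc (0:ℝ) t, (-g s / (G s - 1) ^ 2 - -h s / (F s - 1) ^ 2) := by
    rw [integral_sub hIg hIh, hFTC]
    ring
  -- first term
  have htt : t ∈ Set.Icc (0:ℝ) t := ⟨ht, le_refl t⟩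
  have hterm1 : ‖F t / (F t - 1) - G t / (G t - 1)‖ ≤ δ * (2 / a ^ 2) := by
    have h1 := hFne t htt
    have h2 := hGne t htt
    have heq : F t / (F t - 1) - G t / (G t - 1)
        = (G t - F t) / ((F t - 1) * (G t - 1)) := by
      field_simp
      ring
    rw [heq, norm_div, norm_mul]
    have hb1 : a ≤ ‖F t - 1‖ := hlb t htt
    have hb2 : a / 2 ≤ ‖G t - 1‖ := hGlb t htt
    have hnum : ‖G t - F t‖ ≤ δ := by rw [norm_sub_rev]; exact hFG t
    calc ‖G t - F t‖ / (‖F t - 1‖ * ‖G t - 1‖) ≤ δ / (a * (a / 2)) :=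
          div_le_div₀ hδpos.le hnum (by positivity)
            (mul_le_mul hb1 hb2 (by positivity) (norm_nonneg _))
    _ = δ * (2 / a ^ 2) := by
          field_simp
  -- pointwise bound for the second term
  have hbound : ∀ᵐ s ∂volume.restrict (Set.Ioc (0:ℝ) t),
      ‖-g s / (G s - 1) ^ 2 - -h s / (F s - 1) ^ 2‖
        ≤ (a ^ 2)⁻¹ * ‖h s - g s‖ + δ * C1 * ‖g s‖ := by
    filter_upwards [ae_restrict_mem measurableSet_Ioc] with s hs
    have hsI := hsub s hs
    have hx := hlb s hsI
    have hy := hGlb s hsI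
    have hxne := hFne s hsI
    have hyne := hGne s hsI
    have hxy : ‖F s - G s‖ ≤ δ := hFG s
    have hxM : ‖F s - 1‖ ≤ M + 1 := by
      calc ‖F s - 1‖ ≤ ‖F s‖ + ‖(1:ℂ)‖ := norm_sub_le _ _
      _ ≤ M + 1 := by simpa using add_le_add_right (hMF s) 1
    have hyM : ‖G s - 1‖ ≤ M + 1 + a := by
      have : ‖G s - 1‖ ≤ ‖F s - 1‖ + ‖F s - G s‖ := by
        calc ‖G s - 1‖ = ‖(F s - 1) - (F s - G s)‖ := by ring_nf
        _ ≤ ‖F s - 1‖ + ‖F s - G s‖ := norm_sub_le _ _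
      linarith
    have heq : -g s / (G s - 1) ^ 2 - -h s / (F s - 1) ^ 2
        = (h s - g s) / (F s - 1) ^ 2
          + g s * (((G s - 1) ^ 2 - (F s - 1) ^ 2) / ((F s - 1) ^ 2 * (G s - 1) ^ 2)) := by
      field_simp
      ring
    rw [heq]
    have hb1 : ‖(h s - g s) / (F s - 1) ^ 2‖ ≤ (a ^ 2)⁻¹ * ‖h s - g s‖ := by
      rw [norm_div, norm_pow]
      calc ‖h s - g s‖ / ‖F s - 1‖ ^ 2 ≤ ‖h s - g s‖ / a ^ 2 := by gcongr
      _ = (a ^ 2)⁻¹ * ‖h s - g s‖ := by rw [div_eq_inv_mul]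
    have hb2 : ‖g s * (((G s - 1) ^ 2 - (F s - 1) ^ 2) / ((F s - 1) ^ 2 * (G s - 1) ^ 2))‖
        ≤ δ * C1 * ‖g s‖ := by
      have hnum : ‖(G s - 1) ^ 2 - (F s - 1) ^ 2‖ ≤ δ * (2 * M + 2 + a) := by
        have e1 : (G s - 1) ^ 2 - (F s - 1) ^ 2
            = (G s - F s) * ((G s - 1) + (F s - 1)) := by ring
        rw [e1, norm_mul]
        have e2 : ‖G s - F s‖ ≤ δ := by rw [norm_sub_rev]; exact hxy
        have e3 : ‖(G s - 1) + (F s - 1)‖ ≤ 2 * M + 2 + a := by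
          calc ‖(G s - 1) + (F s - 1)‖ ≤ ‖G s - 1‖ + ‖F s - 1‖ := norm_add_le _ _
          _ ≤ (M + 1 + a) + (M + 1) := add_le_add hyM hxM
          _ = 2 * M + 2 + a := by ring
        exact mul_le_mul e2 e3 (norm_nonneg _) hδpos.le
      have hden : a ^ 4 / 4 ≤ ‖(F s - 1) ^ 2 * (G s - 1) ^ 2‖ := by
        rw [norm_mul, norm_pow, norm_pow]
        calc a ^ 4 / 4 = a ^ 2 * (a / 2) ^ 2 := by ring
        _ ≤ ‖F s - 1‖ ^ 2 * ‖G s - 1‖ ^ 2 := by gcongr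
      rw [norm_mul, norm_div, mul_comm (δ * C1) ‖g s‖]
      apply mul_le_mul_of_nonneg_left _ (norm_nonneg _)
      calc ‖(G s - 1) ^ 2 - (F s - 1) ^ 2‖ / ‖(F s - 1) ^ 2 * (G s - 1) ^ 2‖
          ≤ (δ * (2 * M + 2 + a)) / (a ^ 4 / 4) :=
            div_le_div₀ (by positivity) hnum (by positivity) hden
      _ = δ * C1 := by
            rw [hC1def]
            field_simp
    calc ‖(h s - g s) / (F s - 1) ^ 2
          + g s * (((G s - 1) ^ 2 - (F s - 1) ^ 2) / ((F s - 1) ^ 2 * (G s - 1) ^ 2))‖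
        ≤ ‖(h s - g s) / (F s - 1) ^ 2‖
          + ‖g s * (((G s - 1) ^ 2 - (F s - 1) ^ 2) / ((F s - 1) ^ 2 * (G s - 1) ^ 2))‖ :=
          norm_add_le _ _
    _ ≤ (a ^ 2)⁻¹ * ‖h s - g s‖ + δ * C1 * ‖g s‖ := add_le_add hb1 hb2
  -- integral of g bound
  have hIntg : (∫ s in Set.Ioc (0:ℝ) t, ‖g s‖) ≤ M + a := by
    calc (∫ s in Set.Ioc (0:ℝ) t, ‖g s‖) ≤ ∫ s, ‖g s‖ :=
          setIntegral_le_integral hgi.norm (Filter.Eventually.of_forall fun x => norm_nonneg _)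
    _ ≤ ∫ s, (‖h s‖ + ‖h s - g s‖) := by
          apply integral_mono hgi.norm (hint.norm.add hhgn)
          intro s
          calc ‖g s‖ = ‖h s - (h s - g s)‖ := by ring_nf
          _ ≤ ‖h s‖ + ‖h s - g s‖ := norm_sub_le _ _
    _ = M + ∫ s, ‖h s - g s‖ := by rw [integral_add hint.norm hhgn, hMdef]
    _ ≤ M + a := by
          have : (∫ s, ‖h s - g s‖) ≤ δ := hgδ
          linarith
  -- second term
  have hterm2 : ‖∫ s in Set.Ioc (0:ℝ) t, (-g s / (G s - 1) ^ 2 - -h s / (F s - 1) ^ 2)‖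
      ≤ (a ^ 2)⁻¹ * δ + δ * C1 * (M + a) := by
    have hint2 : Integrable (fun s => (a ^ 2)⁻¹ * ‖h s - g s‖ + δ * C1 * ‖g s‖)
        (volume.restrict (Set.Ioc (0:ℝ) t)) :=
      ((hhgn.const_mul _).add (hgi.norm.const_mul _)).restrict
    calc ‖∫ s in Set.Ioc (0:ℝ) t, (-g s / (G s - 1) ^ 2 - -h s / (F s - 1) ^ 2)‖
        ≤ ∫ s in Set.Ioc (0:ℝ) t, ((a ^ 2)⁻¹ * ‖h s - g s‖ + δ * C1 * ‖g s‖) :=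
          norm_integral_le_of_norm_le hint2 hbound
    _ = (a ^ 2)⁻¹ * (∫ s in Set.Ioc (0:ℝ) t, ‖h s - g s‖)
          + δ * C1 * ∫ s in Set.Ioc (0:ℝ) t, ‖g s‖ := by
          rw [integral_add ((hhgn.const_mul _).restrict)
            ((hgi.norm.const_mul _).restrict), MeasureTheory.integral_const_mul, MeasureTheory.integral_const_mul]
    _ ≤ (a ^ 2)⁻¹ * δ + δ * C1 * (M + a) := by
          have e1 : (∫ s in Set.Ioc (0:ℝ) t, ‖h s - g s‖) ≤ δ :=
            le_trans (setIntegral_le_integral hhgn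
              (Filter.Eventually.of_forall fun x => norm_nonneg _)) hgδ
          have e2 : (0:ℝ) ≤ ∫ s in Set.Ioc (0:ℝ) t, ‖h s - g s‖ :=
            integral_nonneg fun x => norm_nonneg _
          have e3 : (0:ℝ) ≤ ∫ s in Set.Ioc (0:ℝ) t, ‖g s‖ :=
            integral_nonneg fun x => norm_nonneg _
          have e4 : (0:ℝ) ≤ δ * C1 := by positivity
          have e5 : (0:ℝ) ≤ (a ^ 2)⁻¹ := by positivity
          nlinarith [hIntg]
  -- conclusion
  rw [hsplit]
  calc ‖(F t / (F t - 1) - G t / (G t - 1))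
        + ∫ s in Set.Ioc (0:ℝ) t, (-g s / (G s - 1) ^ 2 - -h s / (F s - 1) ^ 2)‖
      ≤ ‖F t / (F t - 1) - G t / (G t - 1)‖
        + ‖∫ s in Set.Ioc (0:ℝ) t, (-g s / (G s - 1) ^ 2 - -h s / (F s - 1) ^ 2)‖ :=
        norm_add_le _ _
  _ ≤ δ * (2 / a ^ 2) + ((a ^ 2)⁻¹ * δ + δ * C1 * (M + a)) := add_le_add hterm1 hterm2
  _ = δ * (3 / a ^ 2 + C1 * (M + a)) := by
        field_simp
        ring
  _ ≤ δ * K := by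
        apply mul_le_mul_of_nonneg_left _ hδpos.le
        rw [hKdef]
        linarith
  _ ≤ ε := hδε

set_option maxHeartbeats 800000 in
/-- For `1 ≤ p ≤ ∞`, let `f ∈ AC_p` (with derivative
`f' ∈ L^p[0,1]`) satisfy `inf_{t ∈ [0,1]} |1 − f t| > 0`.  Then
`g := f/(f − 1)` belongs to `AC_p`, with derivative `−f'/(f−1)² ∈ L^p[0,1]`,
and `f + g − f g = 0` on `[0,1]`; i.e. `f` is quasiregular in `AC_p`. -/
theorem ACp_quasiregular
    (p : ℝ≥0∞) (hp : 1 ≤ p)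
    (f f' : ℝ → ℂ)
    (hf' : MemLp f' p mu01)
    (hf : ∀ t ∈ Set.Icc (0 : ℝ) 1, f t = ∫ s in Set.Ioc (0 : ℝ) t, f' s)
    (hinf : ∃ a : ℝ, 0 < a ∧ ∀ t ∈ Set.Icc (0 : ℝ) 1, a ≤ ‖1 - f t‖) :
    MemLp (fun t => -f' t / (f t - 1) ^ 2) p mu01 ∧
    (∀ t ∈ Set.Icc (0 : ℝ) 1,
      f t / (f t - 1) = ∫ s in Set.Ioc (0 : ℝ) t, -f' s / (f s - 1) ^ 2) ∧
    (∀ t ∈ Set.Icc (0 : ℝ) 1,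
      f t + f t / (f t - 1) - f t * (f t / (f t - 1)) = 0) := by
  obtain ⟨a, ha, hA⟩ := hinf
  have hfin : IsFiniteMeasure mu01 := by
    constructor
    rw [mu01, Measure.restrict_apply_univ]
    exact measure_Icc_lt_top
  have hf'int : Integrable f' mu01 := hf'.integrable hp
  set h : ℝ → ℂ := (Set.Icc (0:ℝ) 1).indicator f' with hhdef
  have hhint : Integrable h volume := by
    rw [hhdef, integrable_indicator_iff measurableSet_Icc]
    exact hf'int
  have hFcont : Continuous (fun t => ∫ x in (0:ℝ)..t, h x) := hhint.continuous_primitive 0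
  have hkey : ∀ t ∈ Set.Icc (0:ℝ) 1, (∫ x in (0:ℝ)..t, h x) = f t := by
    intro t ht
    rw [hf t ht, intervalIntegral.integral_of_le ht.1]
    refine setIntegral_congr_fun measurableSet_Ioc fun s hs => ?_
    exact Set.indicator_of_mem (show s ∈ Set.Icc (0:ℝ) 1 from ⟨hs.1.le, hs.2.trans ht.2⟩) f'
  have hne : ∀ t ∈ Set.Icc (0:ℝ) 1, f t - 1 ≠ 0 := by
    intro t ht hz
    have h1 := hA t ht
    have h2 : (1:ℂ) - f t = -(f t - 1) := by ring
    rw [h2, hz, neg_zero, norm_zero] at h1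
    linarith
  have hae : ∀ᵐ t ∂mu01, t ∈ Set.Icc (0:ℝ) 1 := by
    rw [mu01]
    exact ae_restrict_mem measurableSet_Icc
  refine ⟨?_, ?_, ?_⟩
  · -- Memℒp
    have haesm : AEStronglyMeasurable (fun t => -f' t / (f t - 1) ^ 2) mu01 := by
      have h1 : AEStronglyMeasurable
          (fun t => -f' t / ((∫ x in (0:ℝ)..t, h x) - 1) ^ 2) mu01 :=
        (hf'.aestronglyMeasurable.neg.aemeasurable.div
          (((hFcont.sub continuous_const).pow 2).aestronglyMeasurable.aemeasurable)
          ).aestronglyMeasurable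
      apply h1.congr
      filter_upwards [hae] with t ht
      rw [hkey t ht]
    apply MemLp.of_le_mul (c := (a ^ 2)⁻¹) hf' haesm
    filter_upwards [hae] with t ht
    have hb : a ≤ ‖f t - 1‖ := by rw [norm_sub_rev]; exact hA t ht
    rw [norm_div, norm_neg, norm_pow]
    calc ‖f' t‖ / ‖f t - 1‖ ^ 2 ≤ ‖f' t‖ / a ^ 2 := by gcongr
    _ = (a ^ 2)⁻¹ * ‖f' t‖ := by rw [div_eq_inv_mul]
  · -- FTC
    intro t ht
    have hlb : ∀ s ∈ Set.Icc (0:ℝ) t, a ≤ ‖(∫ x in (0:ℝ)..s, h x) - 1‖ := by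
      intro s hs
      have hs1 : s ∈ Set.Icc (0:ℝ) 1 := ⟨hs.1, hs.2.trans ht.2⟩
      rw [hkey s hs1, norm_sub_rev]
      exact hA s hs1
    have hmain := key_ftc hhint ha ht.1 hlb
    rw [hkey t ht] at hmain
    rw [hmain]
    refine setIntegral_congr_fun measurableSet_Ioc fun s hs => ?_
    have hs1 : s ∈ Set.Icc (0:ℝ) 1 := ⟨hs.1.le, hs.2.trans ht.2⟩
    rw [hkey s hs1, hhdef, Set.indicator_of_mem hs1 f']
  · -- algebra
    intro t ht
    have h1 := hne t ht
    field_simp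
    ring
end

section
/- For 1 ≤ p ≤ ∞, let φ : AC_p → ℂ be a nonzero map that is ℂ-linear, multiplicative (φ(fh) = φ(f)φ(h) for all f, h ∈ AC_p), and continuous with respect to the norm |||·|||. Then there exists t₀ ∈ (0,1] such that φ(f) = f(t₀) for every f ∈ AC_p. In particular, the maximal ideal space of AC_p is identified with (0,1] via point evaluations. -/
open MeasureTheory Set
open scoped ENNReal NNReal

/-- `AC_p`: the algebra of absolutely continuous functions `f` on `[0,1]` with
`f 0 = 0` and `f' ∈ L^p[0,1]`, realised as functions on `ℝ` that are given by
`f t = ∫₀^{min t 1} g` for some `g ∈ L^p[0,1]` (so `f = 0` on `(-∞,0]` and `f`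
is constant on `[1,∞)`).  It is closed under pointwise addition, scalar
multiplication and multiplication. -/
def ACp (p : ℝ≥0∞) : Set (ℝ → ℂ) :=
  {f | ∃ g : ℝ → ℂ, MemLp g p mu01 ∧
        ∀ t : ℝ, f t = ∫ s in Set.Ioc (0 : ℝ) (min t 1), g s}

namespace ACpAux

noncomputable def prim (g : ℝ → ℂ) (t : ℝ) : ℂ := ∫ s in Set.Ioc (0 : ℝ) (min t 1), g s

instance : IsProbabilityMeasure mu01 :=
  ⟨by rw [mu01, Measure.restrict_apply_univ, Real.volume_Icc]; norm_num⟩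

lemma intOnIcc {h : ℝ → ℂ} (hh : Integrable h mu01) :
    IntegrableOn h (Set.Icc (0:ℝ) 1) volume := hh

lemma Ioc_min_subset (t : ℝ) : Set.Ioc (0:ℝ) (min t 1) ⊆ Set.Icc (0:ℝ) 1 :=
  fun x hx => ⟨hx.1.le, hx.2.trans (min_le_right _ _)⟩

lemma intOnIoc {h : ℝ → ℂ} (hh : Integrable h mu01) (t : ℝ) :
    IntegrableOn h (Set.Ioc (0:ℝ) (min t 1)) volume :=
  (intOnIcc hh).mono_set (Ioc_min_subset t)

lemma Ioc_min_eq_clamp (t : ℝ) :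
    Set.Ioc (0:ℝ) (min t 1) = Set.Ioc (0:ℝ) (max (min t 1) 0) := by
  rcases le_total 0 (min t 1) with h | h
  · rw [max_eq_left h]
  · rw [max_eq_right h, Set.Ioc_self, Set.Ioc_eq_empty (not_lt.mpr h)]

lemma clamp_mem (t : ℝ) : max (min t 1) 0 ∈ Set.Icc (0:ℝ) 1 :=
  ⟨le_max_right _ _, max_le (min_le_right _ _) zero_le_one⟩

lemma prim_clamp (g : ℝ → ℂ) (t : ℝ) : prim g t = prim g (max (min t 1) 0) := by
  have hset : Set.Ioc (0:ℝ) (min (max (min t 1) 0) 1) = Set.Ioc (0:ℝ) (min t 1) := by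
    rcases le_total 0 (min t 1) with h | h
    · rw [max_eq_left h, min_eq_left (min_le_right t 1)]
    · rw [max_eq_right h, min_eq_left zero_le_one, Set.Ioc_self,
        Set.Ioc_eq_empty (not_lt.mpr h)]
  unfold prim
  rw [hset]

lemma prim_zero (g : ℝ → ℂ) : prim g 0 = 0 := by
  unfold prim
  rw [min_eq_left zero_le_one, Set.Ioc_self, Measure.restrict_empty, integral_zero_measure]

lemma prim_sub {g k : ℝ → ℂ} (hg : Integrable g mu01) (hk : Integrable k mu01) (t : ℝ) :
    prim (g - k) t = prim g t - prim k t := by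
  unfold prim
  rw [← integral_sub (intOnIoc hg t) (intOnIoc hk t)]
  rfl

lemma continuous_prim {g : ℝ → ℂ} (hg : Integrable g mu01) : Continuous (prim g) := by
  set g' := (Set.Ioc (0:ℝ) 1).indicator g with hg'def
  have hgi : Integrable g' volume :=
    ((intOnIcc hg).mono_set Set.Ioc_subset_Icc_self).integrable_indicator measurableSet_Ioc
  have hcont := hgi.continuous_primitive 0
  have hclamp : Continuous fun t : ℝ => max (min t 1) 0 :=
    (continuous_id.min continuous_const).max continuous_const
  have heq : prim g = (fun b => ∫ x in (0:ℝ)..b, g' x) ∘ fun t => max (min t 1) 0 := by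
    funext t
    show prim g t = ∫ x in (0:ℝ)..(max (min t 1) 0), g' x
    rw [intervalIntegral.integral_of_le (le_max_right _ _), prim, Ioc_min_eq_clamp t]
    refine (setIntegral_congr_fun measurableSet_Ioc fun x hx => ?_).symm
    have hmem : x ∈ Set.Ioc (0:ℝ) 1 := ⟨hx.1, hx.2.trans (max_le (min_le_right _ _) zero_le_one)⟩
    exact Set.indicator_of_mem hmem g
  rw [heq]
  exact hcont.comp hclamp

lemma norm_prim_le {g : ℝ → ℂ} (hg : Integrable g mu01) (t : ℝ) :
    ‖prim g t‖ ≤ ∫ s in Set.Icc (0:ℝ) 1, ‖g s‖ := by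
  refine (norm_integral_le_integral_norm _).trans ?_
  refine setIntegral_mono_set (intOnIcc hg).norm ?_ ?_
  · exact Filter.Eventually.of_forall fun x => norm_nonneg _
  · exact HasSubset.Subset.eventuallyLE (Ioc_min_subset t)

/-- The key product rule, proved by Fubini. -/
lemma prim_mul {g k : ℝ → ℂ} (hg : Integrable g mu01) (hk : Integrable k mu01) (t : ℝ) :
    prim g t * prim k t
      = ∫ s in Set.Ioc (0:ℝ) (min t 1), (prim g s * k s + prim k s * g s) := by
  set m := min t 1 with hm
  have hm1 : m ≤ 1 := min_le_right _ _
  rcases le_or_gt m 0 with h0 | h0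
  · have he : Set.Ioc (0:ℝ) m = ∅ := Set.Ioc_eq_empty (not_lt.mpr h0)
    unfold prim
    rw [← hm, he]
    simp
  set A := Set.Ioc (0:ℝ) m with hA
  have hAmeas : MeasurableSet A := measurableSet_Ioc
  have hAsub : A ⊆ Set.Icc (0:ℝ) 1 := fun x hx => ⟨hx.1.le, hx.2.trans hm1⟩
  have hgA : IntegrableOn g A volume := (intOnIcc hg).mono_set hAsub
  have hkA : IntegrableOn k A volume := (intOnIcc hk).mono_set hAsub
  have hprimg_min : ∀ x ∈ A, prim g x = ∫ s in Set.Ioc (0:ℝ) x, g s := by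
    intro x hx
    unfold prim
    rw [min_eq_left (hx.2.trans hm1)]
  have hprimk_min : ∀ x ∈ A, prim k x = ∫ s in Set.Ioc (0:ℝ) x, k s := by
    intro x hx
    unfold prim
    rw [min_eq_left (hx.2.trans hm1)]
  -- integrability of pieces
  have hPg_bdd : ∃ B, ∀ x, ‖prim g x‖ ≤ B := ⟨_, norm_prim_le hg⟩
  have hPk_bdd : ∃ B, ∀ x, ‖prim k x‖ ≤ B := ⟨_, norm_prim_le hk⟩
  have I1 : IntegrableOn (fun x => prim k x * g x) A volume :=
    hgA.bdd_mul (continuous_prim hk).aestronglyMeasurable.restrict (ae_of_all _ (norm_prim_le hk))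
  have I1' : IntegrableOn (fun x => prim g x * k x) A volume :=
    hkA.bdd_mul (continuous_prim hg).aestronglyMeasurable.restrict (ae_of_all _ (norm_prim_le hg))
  -- the remainder integral
  have key : ∀ x ∈ A, (∫ y in A, k y) = prim k x + ∫ y in Set.Ioc x m, k y := by
    intro x hx
    have hu : Set.Ioc (0:ℝ) x ∪ Set.Ioc x m = A := Set.Ioc_union_Ioc_eq_Ioc hx.1.le hx.2
    rw [hprimk_min x hx, ← setIntegral_union (Set.Ioc_disjoint_Ioc_of_le le_rfl) measurableSet_Ioc
      ((intOnIcc hk).mono_set fun y hy => ⟨hy.1.le, hy.2.trans ((hx.2.trans hm1))⟩)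
      ((intOnIcc hk).mono_set fun y hy => ⟨(hx.1.trans hy.1).le, hy.2.trans hm1⟩), hu]
  have I2 : IntegrableOn (fun x => g x * ∫ y in Set.Ioc x m, k y) A volume := by
    have : Set.EqOn (fun x => g x * ∫ y in Set.Ioc x m, k y)
        (fun x => ((∫ y in A, k y) - prim k x) * g x) A := by
      intro x hx
      have := key x hx
      simp only
      rw [mul_comm]
      rw [eq_sub_of_add_eq' this.symm]
    refine (IntegrableOn.congr_fun ?_ this.symm hAmeas)
    refine hgA.bdd_mul (c := ‖∫ y in A, k y‖ + hPk_bdd.choose) ?_ ?_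
    · exact (continuous_const.sub (continuous_prim hk)).aestronglyMeasurable.restrict
    · exact ae_of_all _ fun x =>
        (norm_sub_le _ _).trans (by gcongr; exact hPk_bdd.choose_spec x)
  -- Fubini for the triangle
  have swap : (∫ x in A, g x * ∫ y in Set.Ioc x m, k y) = ∫ y in A, prim g y * k y := by
    set T : ℝ × ℝ → ℂ := {p : ℝ × ℝ | p.1 < p.2}.indicator (fun p => g p.1 * k p.2) with hTdef
    have hprodInt : Integrable (fun z : ℝ × ℝ => g z.1 * k z.2)
        ((volume.restrict A).prod (volume.restrict A)) := hgA.mul_prod hkA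
    have hTmeas : AEStronglyMeasurable T ((volume.restrict A).prod (volume.restrict A)) :=
      hprodInt.aestronglyMeasurable.indicator (measurableSet_lt measurable_fst measurable_snd)
    have hTint : Integrable T ((volume.restrict A).prod (volume.restrict A)) := by
      refine hprodInt.mono hTmeas ?_
      filter_upwards with z
      rw [hTdef]
      by_cases h : z ∈ {p : ℝ × ℝ | p.1 < p.2}
      · rw [Set.indicator_of_mem h]
      · rw [Set.indicator_of_notMem h]
        simp only [norm_zero]
        positivity
    have hswap := integral_integral_swap (f := fun x y => T (x, y))
      (μ := volume.restrict A) (ν := volume.restrict A) (by exact hTint)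
    have hL : (∫ x in A, ∫ y in A, T (x, y)) = ∫ x in A, g x * ∫ y in Set.Ioc x m, k y := by
      refine setIntegral_congr_fun hAmeas fun x hx => ?_
      have h1 : ∀ y : ℝ, T (x, y) = (Set.Ioi x).indicator (fun y => g x * k y) y := by
        intro y
        rw [hTdef]
        simp only [Set.indicator_apply, Set.mem_setOf_eq, Set.mem_Ioi]
      simp only [h1]
      rw [integral_indicator measurableSet_Ioi, Measure.restrict_restrict measurableSet_Ioi]
      have h2 : Set.Ioi x ∩ A = Set.Ioc x m := by
        ext y
        constructor
        · rintro ⟨h3, _, h5⟩; exact ⟨h3, h5⟩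
        · rintro ⟨h3, h4⟩; exact ⟨h3, hx.1.trans h3, h4⟩
      rw [h2, integral_const_mul]
    have hR : (∫ y in A, ∫ x in A, T (x, y)) = ∫ y in A, prim g y * k y := by
      refine setIntegral_congr_fun hAmeas fun y hy => ?_
      have h1 : ∀ x : ℝ, T (x, y) = (Set.Iio y).indicator (fun x => g x * k y) x := by
        intro x
        rw [hTdef]
        simp only [Set.indicator_apply, Set.mem_setOf_eq, Set.mem_Iio]
      simp only [h1]
      rw [integral_indicator measurableSet_Iio, Measure.restrict_restrict measurableSet_Iio]
      have h2 : Set.Iio y ∩ A = Set.Ioo 0 y := by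
        ext x
        constructor
        · rintro ⟨h3, h4, _⟩; exact ⟨h4, h3⟩
        · rintro ⟨h3, h4⟩; exact ⟨h4, h3, h4.le.trans hy.2⟩
      rw [h2, integral_mul_const, ← integral_Ioc_eq_integral_Ioo,
        ← hprimg_min y hy]
    rw [← hL, hswap, hR]
  -- put everything together
  calc prim g t * prim k t = (∫ x in A, g x) * ∫ y in A, k y := by unfold prim; rw [← hm]
    _ = ∫ x in A, g x * ∫ y in A, k y := (integral_mul_const _ _).symm
    _ = ∫ x in A, (prim k x * g x + g x * ∫ y in Set.Ioc x m, k y) := by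
        refine setIntegral_congr_fun hAmeas fun x hx => ?_
        rw [key x hx]
        ring
    _ = (∫ x in A, prim k x * g x) + ∫ x in A, g x * ∫ y in Set.Ioc x m, k y :=
        integral_add I1 I2
    _ = ∫ s in A, (prim g s * k s + prim k s * g s) := by
        rw [swap, add_comm, ← integral_add I1' I1]
    _ = ∫ s in Set.Ioc (0:ℝ) (min t 1), (prim g s * k s + prim k s * g s) := by rw [← hm]


lemma memLp_mul_of_bound {p : ℝ≥0∞} {q g : ℝ → ℂ} (hq : AEStronglyMeasurable q mu01)
    {B : ℝ} (hB0 : 0 ≤ B) (hB : ∀ s, ‖q s‖ ≤ B) (hg : MemLp g p mu01) :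
    MemLp (fun s => q s * g s) p mu01 ∧
      eLpNorm (fun s => q s * g s) p mu01 ≤ ENNReal.ofReal B * eLpNorm g p mu01 := by
  have h1 : eLpNorm (fun s => q s * g s) p mu01 ≤ eLpNorm (B • g) p mu01 := by
    refine eLpNorm_mono_ae (Filter.Eventually.of_forall fun s => ?_)
    rw [Pi.smul_apply, norm_smul, norm_mul, Real.norm_eq_abs, abs_of_nonneg hB0]
    exact mul_le_mul_of_nonneg_right (hB s) (norm_nonneg _)
  rw [eLpNorm_const_smul] at h1
  have h2 : ‖B‖ₑ = ENNReal.ofReal B := by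
    rw [Real.enorm_eq_ofReal hB0]
  rw [h2] at h1
  refine ⟨⟨hq.mul hg.1, lt_of_le_of_lt h1 ?_⟩, h1⟩
  exact ENNReal.mul_lt_top ENNReal.ofReal_lt_top hg.2

lemma prim_pow_memLp {p : ℝ≥0∞} (hp : 1 ≤ p) {g : ℝ → ℂ} (hg : MemLp g p mu01)
    {M : ℝ} (hM : ∀ t : ℝ, ‖prim g t‖ ≤ M) (n : ℕ) :
    MemLp (fun s => ((n : ℂ) + 1) * (prim g s) ^ n * g s) p mu01 ∧
      eLpNorm (fun s => ((n : ℂ) + 1) * (prim g s) ^ n * g s) p mu01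
        ≤ ENNReal.ofReal (((n : ℝ) + 1) * M ^ n) * eLpNorm g p mu01 := by
  have hM0 : 0 ≤ M := (norm_nonneg _).trans (hM 0)
  have hint : Integrable g mu01 := hg.integrable hp
  have hqc : Continuous fun s => ((n : ℂ) + 1) * (prim g s) ^ n :=
    continuous_const.mul ((continuous_prim hint).pow n)
  have hqb : ∀ s, ‖((n : ℂ) + 1) * (prim g s) ^ n‖ ≤ ((n : ℝ) + 1) * M ^ n := by
    intro s
    rw [norm_mul, norm_pow]
    have h1 : ‖(n : ℂ) + 1‖ = (n : ℝ) + 1 := by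
      have : ((n : ℂ) + 1) = ((n + 1 : ℕ) : ℂ) := by push_cast; ring
      rw [this, Complex.norm_natCast]; push_cast; ring
    rw [h1]
    have h2 : ‖prim g s‖ ^ n ≤ M ^ n := pow_le_pow_left₀ (norm_nonneg _) (hM s) n
    have h3 : (0:ℝ) ≤ (n : ℝ) + 1 := by positivity
    exact mul_le_mul_of_nonneg_left h2 h3
  have := memLp_mul_of_bound (p := p) hqc.aestronglyMeasurable (by positivity) hqb hg
  exact ⟨by simpa [mul_assoc] using this.1, by simpa [mul_assoc] using this.2⟩

lemma prim_pow_rep {p : ℝ≥0∞} (hp : 1 ≤ p) {g : ℝ → ℂ} (hg : MemLp g p mu01)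
    {M : ℝ} (hM : ∀ t : ℝ, ‖prim g t‖ ≤ M) :
    ∀ n : ℕ, ∀ t : ℝ,
      (prim g t) ^ (n + 1) = prim (fun s => ((n : ℂ) + 1) * (prim g s) ^ n * g s) t := by
  have hint : Integrable g mu01 := hg.integrable hp
  intro n
  induction n with
  | zero =>
    intro t
    have hfun : (fun s => (((0:ℕ) : ℂ) + 1) * (prim g s) ^ (0:ℕ) * g s) = g := by
      funext s; simp
    rw [pow_one, hfun]
  | succ n ih =>
    intro t
    have hintn : Integrable (fun s => ((n : ℂ) + 1) * (prim g s) ^ n * g s) mu01 :=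
      (prim_pow_memLp hp hg hM n).1.integrable hp
    calc (prim g t) ^ (n + 1 + 1) = prim g t * (prim g t) ^ (n + 1) := by ring
      _ = prim g t * prim (fun s => ((n : ℂ) + 1) * (prim g s) ^ n * g s) t := by rw [ih t]
      _ = ∫ s in Set.Ioc (0:ℝ) (min t 1),
            (prim g s * (((n : ℂ) + 1) * (prim g s) ^ n * g s)
              + prim (fun s => ((n : ℂ) + 1) * (prim g s) ^ n * g s) s * g s) :=
          prim_mul hint hintn t
      _ = ∫ s in Set.Ioc (0:ℝ) (min t 1),
            (((n + 1 : ℕ) : ℂ) + 1) * (prim g s) ^ (n + 1) * g s := by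
          refine setIntegral_congr_fun measurableSet_Ioc fun s _ => ?_
          rw [← ih s]
          push_cast
          ring
      _ = prim (fun s => (((n + 1 : ℕ) : ℂ) + 1) * (prim g s) ^ (n + 1) * g s) t := rfl

lemma phi_norm_le {p : ℝ≥0∞} (hp : 1 ≤ p) (φ : (ℝ → ℂ) → ℂ)
    (hmul : ∀ f ∈ ACp p, ∀ h ∈ ACp p, φ (f * h) = φ f * φ h)
    {C : ℝ} (hC : 0 ≤ C)
    (hbound : ∀ f g₀ : ℝ → ℂ, MemLp g₀ p mu01 →
      (∀ t : ℝ, f t = ∫ s in Set.Ioc (0 : ℝ) (min t 1), g₀ s) →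
      ‖φ f‖ ≤ C * (eLpNorm g₀ p mu01).toReal)
    {g : ℝ → ℂ} (hg : MemLp g p mu01) {M : ℝ} (hM0 : 0 < M)
    (hM : ∀ t : ℝ, ‖prim g t‖ ≤ M) :
    ‖φ (prim g)‖ ≤ M := by
  set D := (eLpNorm g p mu01).toReal with hD
  have hD0 : 0 ≤ D := ENNReal.toReal_nonneg
  have hgmem : prim g ∈ ACp p := ⟨g, hg, fun t => rfl⟩
  have hpow_mem : ∀ n : ℕ, (fun t => (prim g t) ^ (n + 1)) ∈ ACp p := fun n =>
    ⟨_, (prim_pow_memLp hp hg hM n).1, fun t => prim_pow_rep hp hg hM n t⟩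
  have hphi_pow : ∀ n : ℕ, φ (fun t => (prim g t) ^ (n + 1)) = (φ (prim g)) ^ (n + 1) := by
    intro n
    induction n with
    | zero =>
      have h1 : (fun t => (prim g t) ^ 1) = prim g := funext fun t => pow_one _
      rw [h1, pow_one]
    | succ n ih =>
      have h2 : (fun t => (prim g t) ^ (n + 1 + 1))
          = (prim g) * fun t => (prim g t) ^ (n + 1) := by
        funext t
        show (prim g t) ^ (n + 1 + 1) = prim g t * (prim g t) ^ (n + 1)
        ring
      rw [h2, hmul _ hgmem _ (hpow_mem n), ih, pow_succ]
      ring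
  have hkey : ∀ n : ℕ, ‖φ (prim g)‖ ^ (n + 1) ≤ C * (((n : ℝ) + 1) * M ^ n * D) := by
    intro n
    have h3 := hbound (fun t => (prim g t) ^ (n + 1)) _ (prim_pow_memLp hp hg hM n).1
      (fun t => prim_pow_rep hp hg hM n t)
    rw [hphi_pow n] at h3
    refine le_trans (le_of_eq (norm_pow _ _).symm) (h3.trans ?_)
    have h6 : ENNReal.ofReal (((n : ℝ) + 1) * M ^ n) * eLpNorm g p mu01 ≠ ⊤ :=
      (ENNReal.mul_lt_top ENNReal.ofReal_lt_top hg.2).ne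
    have hM0' : (0:ℝ) ≤ ((n : ℝ) + 1) * M ^ n := by positivity
    have h4 : (eLpNorm (fun s => ((n : ℂ) + 1) * (prim g s) ^ n * g s) p mu01).toReal
        ≤ ((n : ℝ) + 1) * M ^ n * D := by
      calc (eLpNorm (fun s => ((n : ℂ) + 1) * (prim g s) ^ n * g s) p mu01).toReal
          ≤ (ENNReal.ofReal (((n : ℝ) + 1) * M ^ n) * eLpNorm g p mu01).toReal :=
            ENNReal.toReal_mono h6 (prim_pow_memLp hp hg hM n).2
        _ = ((n : ℝ) + 1) * M ^ n * D := by
            rw [ENNReal.toReal_mul, ENNReal.toReal_ofReal hM0']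
    exact mul_le_mul_of_nonneg_left h4 hC
  by_contra hcon
  push_neg at hcon
  set q0 := ‖φ (prim g)‖ with hq0def
  have hq0 : 0 < q0 := hM0.trans hcon
  set x := M / q0 with hx
  have hx0 : 0 ≤ x := by positivity
  have hx1 : x < 1 := (div_lt_one hq0).2 hcon
  have key2 : ∀ n : ℕ, q0 ≤ (C * D) * (((n : ℝ) + 1) * x ^ n) := by
    intro n
    have h7 := hkey n
    have h8 : M ^ n = x ^ n * q0 ^ n := by
      rw [← mul_pow]
      congr 1
      rw [hx, div_mul_cancel₀ M hq0.ne']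
    have h9 : (0:ℝ) < q0 ^ n := pow_pos hq0 n
    have h10 : q0 * q0 ^ n ≤ (C * D) * (((n : ℝ) + 1) * x ^ n) * q0 ^ n := by
      calc q0 * q0 ^ n = q0 ^ (n + 1) := by ring
        _ ≤ C * (((n : ℝ) + 1) * M ^ n * D) := h7
        _ = (C * D) * (((n : ℝ) + 1) * x ^ n) * q0 ^ n := by rw [h8]; ring
    exact le_of_mul_le_mul_right h10 h9
  have h11 : Filter.Tendsto (fun n : ℕ => (n : ℝ) * x ^ n) Filter.atTop (nhds 0) := by
    have hs := summable_pow_mul_geometric_of_norm_lt_one (R := ℝ) 1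
      (r := x) (by rwa [Real.norm_eq_abs, abs_of_nonneg hx0])
    have := hs.tendsto_atTop_zero
    simpa using this
  have h12 : Filter.Tendsto (fun n : ℕ => x ^ n) Filter.atTop (nhds 0) :=
    tendsto_pow_atTop_nhds_zero_of_lt_one hx0 hx1
  have hlim : Filter.Tendsto (fun n : ℕ => (C * D) * (((n : ℝ) + 1) * x ^ n))
      Filter.atTop (nhds 0) := by
    have h14 : (fun n : ℕ => (C * D) * (((n : ℝ) + 1) * x ^ n))
        = fun n : ℕ => (C * D) * ((n : ℝ) * x ^ n + x ^ n) := by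
      funext n; ring
    rw [h14]
    simpa using ((h11.add h12).const_mul (C * D))
  have hfinal : q0 ≤ 0 := ge_of_tendsto' hlim key2
  linarith

/-! ### Ramp functions -/

def rampR (s t : ℝ) : ℝ := max (min s (min t 1)) 0

noncomputable def rampC (s : ℝ) : ℝ → ℂ := fun t => ((rampR s t : ℝ) : ℂ)

noncomputable def chi (s : ℝ) : ℝ → ℂ := (Set.Ioc (0:ℝ) s).indicator (fun _ => (1:ℂ))

lemma chi_memLp (p : ℝ≥0∞) (s : ℝ) : MemLp (chi s) p mu01 :=
  MemLp.indicator measurableSet_Ioc (memLp_const 1)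

lemma chi_int {p : ℝ≥0∞} (hp : 1 ≤ p) (s : ℝ) : Integrable (chi s) mu01 :=
  (chi_memLp p s).integrable hp

lemma prim_chi (s t : ℝ) : prim (chi s) t = ((rampR s t : ℝ) : ℂ) := by
  unfold prim chi
  rw [integral_indicator measurableSet_Ioc, Measure.restrict_restrict measurableSet_Ioc,
    setIntegral_const, Set.Ioc_inter_Ioc]
  simp only [sup_idem, Real.volume_Ioc, sub_zero]
  rw [Real.volume_real_Ioc, sub_zero]
  rw [Complex.real_smul, mul_one]
  rfl

lemma rampR_nonneg (s t : ℝ) : 0 ≤ rampR s t := le_max_right _ _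

lemma rampR_le {s : ℝ} (h0 : 0 ≤ s) (t : ℝ) : rampR s t ≤ s :=
  max_le (min_le_left _ _) h0

lemma rampR_sub_nonneg {s s' : ℝ} (hss' : s ≤ s') (t : ℝ) :
    0 ≤ rampR s' t - rampR s t :=
  sub_nonneg.mpr (max_le_max (min_le_min hss' le_rfl) le_rfl)

lemma rampR_sub_le {s s' : ℝ} (h0 : 0 ≤ s) (hss' : s ≤ s') (t : ℝ) :
    rampR s' t - rampR s t ≤ s' - s := by
  unfold rampR
  rcases le_total s' (min t 1) with h | h
  · rw [min_eq_left h, min_eq_left (hss'.trans h), max_eq_left (h0.trans hss'), max_eq_left h0]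
  · rcases le_total s (min t 1) with h2 | h2
    · rw [min_eq_right h, min_eq_left h2, max_eq_left h0,
        max_eq_left (h0.trans h2)]
      linarith
    · rw [min_eq_right h, min_eq_right h2]
      simp only [sub_self]
      linarith
  
lemma rampR_eval {s t : ℝ} (h0 : 0 ≤ s) (ht : t ∈ Set.Icc (0:ℝ) 1) :
    rampR s t = min s t := by
  unfold rampR
  rw [min_eq_left ht.2, max_eq_left (le_min h0 ht.1)]

lemma rampR_mul_eq {s s' : ℝ} (h0 : 0 ≤ s) (hss' : s ≤ s') (t : ℝ) :
    rampR s t * (rampR s' t - rampR s t) = s * (rampR s' t - rampR s t) := by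
  unfold rampR
  rcases le_total (min t 1) s with h | h
  · rw [min_eq_right h, min_eq_right (h.trans hss')]
    ring
  · rw [min_eq_left h, max_eq_left h0]

end ACpAux

open ACpAux

/-- For `1 ≤ p ≤ ∞`, every nonzero `ℂ`-linear multiplicative
functional `φ` on `AC_p` that is continuous for the norm `|||f||| = ‖f'‖_p` is a
point evaluation at some `t₀ ∈ (0,1]`: the maximal ideal space of `AC_p` is
`(0,1]`. -/
theorem ACp_characters_are_point_evaluations
    (p : ℝ≥0∞) (hp : 1 ≤ p)
    (φ : (ℝ → ℂ) → ℂ)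
    (hadd : ∀ f ∈ ACp p, ∀ h ∈ ACp p, φ (f + h) = φ f + φ h)
    (hsmul : ∀ (c : ℂ), ∀ f ∈ ACp p, φ (c • f) = c * φ f)
    (hmul : ∀ f ∈ ACp p, ∀ h ∈ ACp p, φ (f * h) = φ f * φ h)
    (hcont : ∃ C : ℝ, ∀ f g : ℝ → ℂ, MemLp g p mu01 →
      (∀ t : ℝ, f t = ∫ s in Set.Ioc (0 : ℝ) (min t 1), g s) →
      ‖φ f‖ ≤ C * (eLpNorm g p mu01).toReal)
    (hne : ∃ f ∈ ACp p, φ f ≠ 0) :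
    ∃ t₀ ∈ Set.Ioc (0 : ℝ) 1, ∀ f ∈ ACp p, φ f = f t₀ := by
  classical
  obtain ⟨C₀, hC₀⟩ := hcont
  set C := max C₀ 0 with hCdef
  have hC : 0 ≤ C := le_max_right _ _
  have hbound : ∀ f g : ℝ → ℂ, MemLp g p mu01 →
      (∀ t : ℝ, f t = ∫ s in Set.Ioc (0 : ℝ) (min t 1), g s) →
      ‖φ f‖ ≤ C * (eLpNorm g p mu01).toReal := fun f g hg hrep =>
    (hC₀ f g hg hrep).trans
      (mul_le_mul_of_nonneg_right (le_max_left _ _) ENNReal.toReal_nonneg)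
  -- basic algebra of `φ`
  have hzero_mem : (0 : ℝ → ℂ) ∈ ACp p := ⟨0, MemLp.zero, fun t => by simp⟩
  have hphi0 : φ 0 = 0 := by
    have h2 := hadd 0 hzero_mem 0 hzero_mem
    rw [add_zero] at h2
    linear_combination -h2
  have hmem_prim : ∀ g : ℝ → ℂ, MemLp g p mu01 → prim g ∈ ACp p := fun g hg =>
    ⟨g, hg, fun t => rfl⟩
  have hACP_sub : ∀ g₁ g₂ : ℝ → ℂ, MemLp g₁ p mu01 → MemLp g₂ p mu01 →
      (prim g₁ - prim g₂) = prim (g₁ - g₂) := fun g₁ g₂ h1 h2 =>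
    funext fun t => (prim_sub (h1.integrable hp) (h2.integrable hp) t).symm
  have hphi_sub : ∀ g₁ g₂ : ℝ → ℂ, MemLp g₁ p mu01 → MemLp g₂ p mu01 →
      φ (prim g₁ - prim g₂) = φ (prim g₁) - φ (prim g₂) := by
    intro g₁ g₂ h1 h2
    have hmemd : (prim g₁ - prim g₂) ∈ ACp p := by
      rw [hACP_sub g₁ g₂ h1 h2]; exact hmem_prim _ (h1.sub h2)
    have h3 := hadd _ hmemd _ (hmem_prim g₂ h2)
    rw [sub_add_cancel] at h3
    linear_combination -h3
  have hACp_add : ∀ f₁, f₁ ∈ ACp p → ∀ f₂, f₂ ∈ ACp p → f₁ + f₂ ∈ ACp p := by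
    rintro f₁ ⟨g₁, hg₁, hrep₁⟩ f₂ ⟨g₂, hg₂, hrep₂⟩
    refine ⟨g₁ + g₂, hg₁.add hg₂, fun t => ?_⟩
    show f₁ t + f₂ t = _
    rw [hrep₁ t, hrep₂ t,
      ← integral_add (intOnIoc (hg₁.integrable hp) t) (intOnIoc (hg₂.integrable hp) t)]
    rfl
  -- values on ramps
  have ha_le : ∀ s : ℝ, 0 < s → ‖φ (prim (chi s))‖ ≤ s := by
    intro s hs
    refine phi_norm_le hp φ hmul hC hbound (chi_memLp p s) hs fun t => ?_
    rw [prim_chi, Complex.norm_real, Real.norm_eq_abs, abs_of_nonneg (rampR_nonneg s t)]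
    exact rampR_le hs.le t
  have ha_lip : ∀ s s' : ℝ, 0 ≤ s → s ≤ s' →
      ‖φ (prim (chi s')) - φ (prim (chi s))‖ ≤ s' - s := by
    intro s s' h0 hss'
    rcases eq_or_lt_of_le hss' with rfl | hlt
    · simp
    rw [← hphi_sub _ _ (chi_memLp p s') (chi_memLp p s),
      hACP_sub _ _ (chi_memLp p s') (chi_memLp p s)]
    refine phi_norm_le hp φ hmul hC hbound ((chi_memLp p s').sub (chi_memLp p s))
      (by linarith) fun t => ?_
    have h1 : prim (chi s' - chi s) t = prim (chi s') t - prim (chi s) t :=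
      prim_sub (chi_int hp s') (chi_int hp s) t
    rw [h1, prim_chi, prim_chi, ← Complex.ofReal_sub, Complex.norm_real, Real.norm_eq_abs,
      abs_of_nonneg (rampR_sub_nonneg hss' t)]
    exact rampR_sub_le h0 hss' t
  have hrel : ∀ s s' : ℝ, 0 ≤ s → s ≤ s' →
      (φ (prim (chi s)) - (s:ℂ)) * (φ (prim (chi s')) - φ (prim (chi s))) = 0 := by
    intro s s' h0 hss'
    have hw_mem : (prim (chi s') - prim (chi s)) ∈ ACp p := by
      rw [hACP_sub _ _ (chi_memLp p s') (chi_memLp p s)]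
      exact hmem_prim _ ((chi_memLp p s').sub (chi_memLp p s))
    have hprod : prim (chi s) * (prim (chi s') - prim (chi s))
        = (s:ℂ) • (prim (chi s') - prim (chi s)) := by
      funext t
      show prim (chi s) t * (prim (chi s') t - prim (chi s) t)
        = (s:ℂ) * (prim (chi s') t - prim (chi s) t)
      rw [prim_chi, prim_chi]
      exact_mod_cast rampR_mul_eq h0 hss' t
    have h1 := hmul _ (hmem_prim _ (chi_memLp p s)) _ hw_mem
    rw [hprod, hsmul (s:ℂ) _ hw_mem,
      hphi_sub _ _ (chi_memLp p s') (chi_memLp p s)] at h1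
    linear_combination -h1
  -- dichotomy
  have hdich : ∀ s : ℝ, 0 < s → s ≤ 1 →
      φ (prim (chi s)) = (s:ℂ) ∨ φ (prim (chi s)) = φ (prim (chi 1)) := by
    intro s hs hs1
    rcases mul_eq_zero.mp (hrel s 1 hs.le hs1) with h | h
    · exact Or.inl (sub_eq_zero.mp h)
    · exact Or.inr (sub_eq_zero.mp h).symm
  have hdown : ∀ s s' : ℝ, 0 < s → s < s' → φ (prim (chi s')) = (s':ℂ) →
      φ (prim (chi s)) = (s:ℂ) := by
    intro s s' hs hss' has'
    rcases mul_eq_zero.mp (hrel s s' hs.le hss'.le) with h | h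
    · exact sub_eq_zero.mp h
    · exfalso
      have h1 : φ (prim (chi s')) = φ (prim (chi s)) := sub_eq_zero.mp h
      have h2 : ‖φ (prim (chi s))‖ ≤ s := ha_le s hs
      rw [← h1, has', Complex.norm_real, Real.norm_eq_abs,
        abs_of_nonneg (by linarith : (0:ℝ) ≤ s')] at h2
      linarith
  -- the candidate point: sup of the set where φ(ramp s) = s
  set E : Set ℝ := {s : ℝ | (0 < s ∧ s ≤ 1) ∧ φ (prim (chi s)) = (s:ℂ)} with hE
  set r := sSup (insert 0 E) with hr
  have hbddE : BddAbove (insert 0 E) := by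
    refine ⟨1, fun x hx => ?_⟩
    rcases hx with rfl | hx
    · exact zero_le_one
    · exact hx.1.2
  have hr0 : 0 ≤ r := le_csSup hbddE (Set.mem_insert _ _)
  have hr1 : r ≤ 1 := by
    refine csSup_le (Set.insert_nonempty _ _) fun x hx => ?_
    rcases hx with rfl | hx
    · exact zero_le_one
    · exact hx.1.2
  have hE_lt : ∀ s : ℝ, 0 < s → s < r → φ (prim (chi s)) = (s:ℂ) := by
    intro s hs hsr
    obtain ⟨b, hb, hsb⟩ := exists_lt_of_lt_csSup (Set.insert_nonempty _ _) hsr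
    rcases hb with rfl | hb
    · linarith
    · exact hdown s b hs hsb hb.2
  have har : 0 < r → φ (prim (chi r)) = (r:ℂ) := by
    intro hrpos
    by_contra hne'
    have hd : 0 < ‖φ (prim (chi r)) - (r:ℂ)‖ := by
      rw [norm_pos_iff]
      exact sub_ne_zero.mpr hne'
    set d := ‖φ (prim (chi r)) - (r:ℂ)‖ with hddef
    set s := max (r - d/4) (r/2) with hs
    have hs_pos : 0 < s := lt_of_lt_of_le (by linarith) (le_max_right _ _)
    have hs_lt : s < r := max_lt (by linarith) (by linarith)
    have h1 : φ (prim (chi s)) = (s:ℂ) := hE_lt s hs_pos hs_lt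
    have h2 : ‖φ (prim (chi r)) - φ (prim (chi s))‖ ≤ r - s := ha_lip s r hs_pos.le hs_lt.le
    have h3 : ‖φ (prim (chi r)) - (r:ℂ)‖
        ≤ ‖φ (prim (chi r)) - φ (prim (chi s))‖ + ‖φ (prim (chi s)) - (r:ℂ)‖ := by
      calc ‖φ (prim (chi r)) - (r:ℂ)‖
          = ‖(φ (prim (chi r)) - φ (prim (chi s))) + (φ (prim (chi s)) - (r:ℂ))‖ := by
            congr 1; ring
        _ ≤ _ := norm_add_le _ _
    have h4 : ‖φ (prim (chi s)) - (r:ℂ)‖ = r - s := by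
      rw [h1, ← Complex.ofReal_sub, Complex.norm_real, Real.norm_eq_abs,
        abs_of_nonpos (by linarith)]
      ring
    have h5 : r - s ≤ d/4 := by
      have := le_max_left (r - d/4) (r/2)
      linarith
    rw [h4] at h3
    linarith
  have ht0r : φ (prim (chi 1)) = (r:ℂ) := by
    rcases eq_or_lt_of_le hr0 with hreq | hrpos
    · -- r = 0
      have hall : ∀ s : ℝ, 0 < s → s ≤ 1 → φ (prim (chi s)) = φ (prim (chi 1)) := by
        intro s hs hs1
        rcases hdich s hs hs1 with h | h
        · exfalso
          have hmemE : s ∈ E := ⟨⟨hs, hs1⟩, h⟩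
          have : s ≤ r := le_csSup hbddE (Set.mem_insert_of_mem _ hmemE)
          linarith
        · exact h
      by_contra hne'
      have hd : 0 < ‖φ (prim (chi 1))‖ := by
        rw [norm_pos_iff]
        intro h0
        apply hne'
        rw [h0, ← hreq]
        norm_num
      set s := min (‖φ (prim (chi 1))‖/2) 1 with hs
      have hs_pos : 0 < s := lt_min (by linarith) one_pos
      have h1 : φ (prim (chi s)) = φ (prim (chi 1)) := hall s hs_pos (min_le_right _ _)
      have h2 : ‖φ (prim (chi s))‖ ≤ s := ha_le s hs_pos
      rw [h1] at h2
      have h6 : s ≤ ‖φ (prim (chi 1))‖/2 := min_le_left _ _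
      linarith
    · rcases eq_or_lt_of_le hr1 with hr1' | hr1'
      · rw [← hr1']
        exact har hrpos
      · by_contra hne'
        have hd : 0 < ‖φ (prim (chi 1)) - (r:ℂ)‖ := by
          rw [norm_pos_iff]
          exact sub_ne_zero.mpr hne'
        set d := ‖φ (prim (chi 1)) - (r:ℂ)‖ with hddef
        set s' := min (r + d/2) 1 with hs'
        have h1 : r < s' := lt_min (by linarith) hr1'
        have h2 : s' ≤ 1 := min_le_right _ _
        have h3 : φ (prim (chi s')) = φ (prim (chi 1)) := by
          rcases hdich s' (hr0.trans_lt h1) h2 with h | h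
          · exfalso
            have hmemE : s' ∈ E := ⟨⟨hr0.trans_lt h1, h2⟩, h⟩
            have : s' ≤ r := le_csSup hbddE (Set.mem_insert_of_mem _ hmemE)
            linarith
          · exact h
        have h4 : ‖φ (prim (chi s')) - φ (prim (chi r))‖ ≤ s' - r := ha_lip r s' hr0 h1.le
        rw [h3, har hrpos] at h4
        have h5 : s' - r ≤ d/2 := by
          have := min_le_left (r + d/2) 1
          linarith
        linarith
  have haval : ∀ s : ℝ, 0 ≤ s → s ≤ 1 → φ (prim (chi s)) = ((min s r : ℝ) : ℂ) := by
    intro s hs0 hs1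
    rcases eq_or_lt_of_le hs0 with h | hs0'
    · -- s = 0
      have hchi0 : prim (chi 0) = (0 : ℝ → ℂ) := by
        funext t
        show prim (chi 0) t = 0
        rw [prim_chi]
        unfold rampR
        rw [max_eq_right (min_le_left _ _)]
        norm_num
      rw [← h, hchi0, hphi0, min_eq_left hr0]
      norm_num
    rcases lt_trichotomy s r with h | h | h
    · rw [hE_lt s hs0' h, min_eq_left h.le]
    · rw [h, min_self]
      exact har (h ▸ hs0')
    · have h1 : φ (prim (chi s)) ≠ (s:ℂ) := by
        intro hcon
        have hmemE : s ∈ E := ⟨⟨hs0', hs1⟩, hcon⟩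
        have : s ≤ r := le_csSup hbddE (Set.mem_insert_of_mem _ hmemE)
        linarith
      rcases hdich s hs0' hs1 with h2 | h2
      · exact absurd h2 h1
      · rw [h2, ht0r, min_eq_right h.le]
  -- φ is evaluation at r
  have hval : ∀ f, f ∈ ACp p → φ f = f r := by
    rintro f ⟨g, hg, hrep⟩
    have hfeq : f = prim g := funext hrep
    subst hfeq
    have hint : Integrable g mu01 := hg.integrable hp
    have hcontf : Continuous (prim g) := continuous_prim hint
    have hrIcc : r ∈ Set.Icc (0:ℝ) 1 := ⟨hr0, hr1⟩
    have hmain : ∀ ε : ℝ, 0 < ε → ‖φ (prim g) - prim g r‖ ≤ 4 * ε := by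
      intro ε hε
      obtain ⟨δ, hδ0, hδ⟩ := Metric.uniformContinuousOn_iff.mp
        (isCompact_Icc.uniformContinuousOn_of_continuous hcontf.continuousOn) ε hε
      obtain ⟨n₀, hn₀⟩ := exists_nat_one_div_lt hδ0
      set N := n₀ + 1 with hN
      have hN0 : (0:ℝ) < (N:ℝ) := by positivity
      have hNδ : 1 / (N:ℝ) < δ := by
        have hcast : ((N:ℕ):ℝ) = (n₀:ℝ) + 1 := by rw [hN]; push_cast; ring
        rw [hcast]
        exact hn₀
      set sg : ℕ → ℝ := fun j => (j:ℝ) / (N:ℝ) with hsg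
      have hsg_mem : ∀ j : ℕ, j ≤ N → sg j ∈ Set.Icc (0:ℝ) 1 := by
        intro j hj
        constructor
        · positivity
        · rw [div_le_one hN0]
          exact_mod_cast hj
      have hsg_mono : ∀ i j : ℕ, i ≤ j → sg i ≤ sg j := by
        intro i j hij
        show (i:ℝ)/(N:ℝ) ≤ (j:ℝ)/(N:ℝ)
        gcongr
      have hsg_diff : ∀ j : ℕ, sg (j+1) - sg j = 1 / (N:ℝ) := by
        intro j
        show ((j+1:ℕ) : ℝ)/(N:ℝ) - (j:ℝ)/(N:ℝ) = 1/(N:ℝ)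
        have hone : ((j+1:ℕ):ℝ) - (j:ℝ) = 1 := by push_cast; ring
        rw [div_sub_div_same, hone]
      set c : ℕ → ℂ := fun j => ((N:ℕ):ℂ) * (prim g (sg (j+1)) - prim g (sg j)) with hc
      have hc_bound : ∀ j : ℕ, j < N → ‖c j‖ ≤ (N:ℝ) * ε := by
        intro j hj
        show ‖((N:ℕ):ℂ) * (prim g (sg (j+1)) - prim g (sg j))‖ ≤ (N:ℝ) * ε
        rw [norm_mul, Complex.norm_natCast]
        refine mul_le_mul_of_nonneg_left ?_ hN0.le
        have hdist : dist (sg (j+1)) (sg j) < δ := by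
          rw [Real.dist_eq, abs_of_nonneg (sub_nonneg.mpr (hsg_mono j (j+1) (by omega))),
            hsg_diff j]
          exact hNδ
        have h16 := hδ (sg (j+1)) (hsg_mem _ (by omega)) (sg j) (hsg_mem _ (by omega)) hdist
        rw [Complex.dist_eq] at h16
        exact h16.le
      set F : ℝ → ℂ := fun t => ∑ j ∈ Finset.range N,
        c j * (prim (chi (sg (j+1))) t - prim (chi (sg j)) t) with hF
      set gF : ℝ → ℂ := fun x => ∑ j ∈ Finset.range N,
        c j * (chi (sg (j+1)) x - chi (sg j) x) with hgF
      have hgF_mem : MemLp gF p mu01 := by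
        refine memLp_finset_sum _ fun j _ => ?_
        exact ((chi_memLp p _).sub (chi_memLp p _)).const_mul (c j)
      have hF_rep : ∀ t : ℝ, F t = prim gF t := by
        intro t
        show (∑ j ∈ Finset.range N, c j * (prim (chi (sg (j+1))) t - prim (chi (sg j)) t))
            = ∫ s in Set.Ioc (0:ℝ) (min t 1),
                ∑ j ∈ Finset.range N, c j * (chi (sg (j+1)) s - chi (sg j) s)
        rw [integral_finset_sum (f := fun j s => c j * (chi (sg (j+1)) s - chi (sg j) s)) _
          fun j _ => intOnIoc (((chi_int hp _).sub (chi_int hp _)).const_mul (c j)) t]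
        refine Finset.sum_congr rfl fun j _ => ?_
        rw [integral_const_mul]
        congr 1
        rw [integral_sub (intOnIoc (chi_int hp _) t) (intOnIoc (chi_int hp _) t)]
        rfl
      have hF_mem : F ∈ ACp p := ⟨gF, hgF_mem, hF_rep⟩
      -- φ of finite sums
      have hsum_phi : ∀ m : ℕ, ∀ G : ℕ → ℝ → ℂ, (∀ j, G j ∈ ACp p) →
          ((fun t => ∑ j ∈ Finset.range m, G j t) ∈ ACp p ∧
            φ (fun t => ∑ j ∈ Finset.range m, G j t) = ∑ j ∈ Finset.range m, φ (G j)) := by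
        intro m
        induction m with
        | zero =>
          intro G _
          constructor
          · show (fun _ : ℝ => (0:ℂ)) ∈ ACp p
            exact hzero_mem
          · show φ (fun _ : ℝ => (0:ℂ)) = 0
            exact hphi0
        | succ m ih =>
          intro G hG
          obtain ⟨ihmem, ihphi⟩ := ih G hG
          have hsplit : (fun t => ∑ j ∈ Finset.range (m+1), G j t)
              = (fun t => ∑ j ∈ Finset.range m, G j t) + G m := by
            funext t
            simp [Finset.sum_range_succ]
          constructor
          · rw [hsplit]
            exact hACp_add _ ihmem _ (hG m)
          · rw [hsplit, hadd _ ihmem _ (hG m), ihphi, Finset.sum_range_succ]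
      set G : ℕ → ℝ → ℂ := fun j t =>
        c j * (prim (chi (sg (j+1))) t - prim (chi (sg j)) t) with hG
      have hGsmul : ∀ j : ℕ, G j = c j • (prim (chi (sg (j+1))) - prim (chi (sg j))) := by
        intro j
        funext t
        show c j * (prim (chi (sg (j+1))) t - prim (chi (sg j)) t)
          = c j * ((prim (chi (sg (j+1))) - prim (chi (sg j))) t)
        rfl
      have hwmem : ∀ j : ℕ, (prim (chi (sg (j+1))) - prim (chi (sg j))) ∈ ACp p := by
        intro j
        rw [hACP_sub _ _ (chi_memLp p _) (chi_memLp p _)]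
        exact hmem_prim _ ((chi_memLp p _).sub (chi_memLp p _))
      have hGmem : ∀ j, G j ∈ ACp p := by
        intro j
        rw [hGsmul j, hACP_sub _ _ (chi_memLp p _) (chi_memLp p _)]
        refine ⟨c j • (chi (sg (j+1)) - chi (sg j)),
          ((chi_memLp p _).sub (chi_memLp p _)).const_smul _, fun t => ?_⟩
        simp only [Pi.smul_apply]
        rw [integral_smul]
        rfl
      have hFG : F = fun t => ∑ j ∈ Finset.range N, G j t := rfl
      have hφF : φ F = ∑ j ∈ Finset.range N, φ (G j) := by
        rw [hFG]
        exact (hsum_phi N G hGmem).2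
      have hφG : ∀ j : ℕ, j < N → φ (G j)
          = c j * (((min (sg (j+1)) r : ℝ) : ℂ) - ((min (sg j) r : ℝ) : ℂ)) := by
        intro j hj
        rw [hGsmul j, hsmul _ _ (hwmem j), hphi_sub _ _ (chi_memLp p _) (chi_memLp p _),
          haval (sg (j+1)) (hsg_mem _ (by omega)).1 (hsg_mem _ (by omega)).2,
          haval (sg j) (hsg_mem _ (by omega)).1 (hsg_mem _ (by omega)).2]
      have hFr : F r = ∑ j ∈ Finset.range N,
          c j * (((min (sg (j+1)) r : ℝ) : ℂ) - ((min (sg j) r : ℝ) : ℂ)) := by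
        refine Finset.sum_congr rfl fun j hj => ?_
        have hj' := Finset.mem_range.mp hj
        rw [prim_chi, prim_chi, rampR_eval (hsg_mem _ (by omega)).1 hrIcc,
          rampR_eval (hsg_mem _ (by omega)).1 hrIcc]
      have hφF_eq : φ F = F r := by
        rw [hφF, hFr]
        exact Finset.sum_congr rfl fun j hj => hφG j (Finset.mem_range.mp hj)
      -- approximation bound on [0,1]
      have happrox : ∀ t ∈ Set.Icc (0:ℝ) 1, ‖prim g t - F t‖ ≤ 2 * ε := by
        intro t ht
        set k := min (⌊t * N⌋₊) (N - 1) with hk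
        have hkN : k < N := by
          have h7 : k ≤ N - 1 := min_le_right _ _
          omega
        have hfloor_le : (⌊t * (N:ℝ)⌋₊ : ℝ) ≤ t * (N:ℝ) :=
          Nat.floor_le (mul_nonneg ht.1 hN0.le)
        have hsk_le_t : sg k ≤ t := by
          show ((k:ℕ):ℝ)/(N:ℝ) ≤ t
          rw [div_le_iff₀ hN0]
          rcases le_or_gt (⌊t * N⌋₊) (N-1) with hcase | hcase
          · rw [hk, min_eq_left hcase]
            exact hfloor_le
          · rw [hk, min_eq_right hcase.le]
            have h5 : ((N-1:ℕ):ℝ) ≤ (⌊t*(N:ℝ)⌋₊ : ℝ) := by exact_mod_cast hcase.le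
            linarith
        have ht_le : t ≤ sg (k+1) := by
          show t ≤ ((k+1:ℕ):ℝ)/(N:ℝ)
          rw [le_div_iff₀ hN0]
          rcases le_or_gt (⌊t * N⌋₊) (N-1) with hcase | hcase
          · rw [hk, min_eq_left hcase]
            have h6 : t * (N:ℝ) < (⌊t*(N:ℝ)⌋₊ : ℝ) + 1 := Nat.lt_floor_add_one _
            have h6' := h6.le
            exact_mod_cast h6'
          · rw [hk, min_eq_right hcase.le]
            have h7 : ((N - 1 + 1 : ℕ):ℝ) = (N:ℝ) := by
              have h8 : (N - 1 + 1 : ℕ) = N := by omega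
              rw [h8]
            rw [h7]
            have := ht.2
            nlinarith
        have hmin_eval : ∀ s' : ℝ, 0 ≤ s' → prim (chi s') t = ((min s' t : ℝ) : ℂ) := by
          intro s' h
          rw [prim_chi, rampR_eval h ht]
        have hFt : F t = prim g (sg k) + c k * ((t : ℂ) - ((sg k : ℝ) : ℂ)) := by
          have hkle : k + 1 ≤ N := hkN
          have hterm_eq : ∀ j : ℕ, j + 1 ≤ N →
              c j * (prim (chi (sg (j+1))) t - prim (chi (sg j)) t)
              = c j * (((min (sg (j+1)) t : ℝ):ℂ) - ((min (sg j) t : ℝ):ℂ)) := by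
            intro j hj
            rw [hmin_eval _ (hsg_mem _ hj).1, hmin_eval _ (hsg_mem _ (by omega)).1]
          have hFt0 : F t = ∑ j ∈ Finset.range N,
              c j * (prim (chi (sg (j+1))) t - prim (chi (sg j)) t) := rfl
          rw [hFt0, ← Finset.sum_range_add_sum_Ico _ hkle, Finset.sum_range_succ]
          have hpc3 : (∑ j ∈ Finset.Ico (k+1) N,
              c j * (prim (chi (sg (j+1))) t - prim (chi (sg j)) t)) = 0 := by
            refine Finset.sum_eq_zero fun j hj => ?_
            obtain ⟨hj1, hj2⟩ := Finset.mem_Ico.mp hj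
            have hts : t ≤ sg j := ht_le.trans (hsg_mono _ _ hj1)
            rw [hterm_eq j (by omega), min_eq_right (hts.trans (hsg_mono _ _ (Nat.le_succ j))),
              min_eq_right hts]
            simp
          have hpc1 : (∑ j ∈ Finset.range k,
              c j * (prim (chi (sg (j+1))) t - prim (chi (sg j)) t))
              = prim g (sg k) := by
            have h6' : ∀ j ∈ Finset.range k,
                c j * (prim (chi (sg (j+1))) t - prim (chi (sg j)) t)
                = prim g (sg (j+1)) - prim g (sg j) := by
              intro j hj
              have hj' : j < k := Finset.mem_range.mp hj
              have h7' : sg (j+1) ≤ t := (hsg_mono _ _ (by omega)).trans hsk_le_t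
              rw [hterm_eq j (by omega), min_eq_left h7',
                min_eq_left ((hsg_mono _ _ (Nat.le_succ j)).trans h7')]
              have h8' : ((sg (j+1) : ℝ):ℂ) - ((sg j : ℝ):ℂ) = ((1/(N:ℝ) : ℝ) : ℂ) := by
                rw [← Complex.ofReal_sub, hsg_diff j]
              rw [h8']
              simp only [hc]
              have hNC : ((N:ℕ):ℂ) ≠ 0 := Nat.cast_ne_zero.mpr (by omega)
              rw [Complex.ofReal_div, Complex.ofReal_one, Complex.ofReal_natCast]
              field_simp
            rw [Finset.sum_congr rfl h6', Finset.sum_range_sub (fun j => prim g (sg j))]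
            have h10 : sg 0 = 0 := by simp [hsg]
            rw [h10, prim_zero, sub_zero]
          have hpc2 : c k * (prim (chi (sg (k+1))) t - prim (chi (sg k)) t)
              = c k * ((t : ℂ) - ((sg k : ℝ) : ℂ)) := by
            rw [hterm_eq k (by omega), min_eq_right ht_le, min_eq_left hsk_le_t]
          rw [hpc1, hpc2, hpc3, add_zero]
        have hd1 : ‖prim g t - prim g (sg k)‖ ≤ ε := by
          have hdist : dist t (sg k) < δ := by
            rw [Real.dist_eq, abs_of_nonneg (sub_nonneg.mpr hsk_le_t)]
            have h11 : t - sg k ≤ 1/(N:ℝ) := by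
              have h12 := hsg_diff k
              linarith [ht_le]
            linarith
          have h13 := hδ t ht (sg k) (hsg_mem k hkN.le) hdist
          rw [Complex.dist_eq] at h13
          exact h13.le
        have hd2 : ‖c k‖ * ‖(t : ℂ) - ((sg k : ℝ) : ℂ)‖ ≤ ((N:ℝ) * ε) * (1/(N:ℝ)) := by
          refine mul_le_mul (hc_bound k hkN) ?_ (norm_nonneg _) (by positivity)
          have h14 : ((t:ℂ) - ((sg k : ℝ):ℂ)) = (((t - sg k : ℝ)):ℂ) := by push_cast; ring
          rw [h14, Complex.norm_real, Real.norm_eq_abs,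
            abs_of_nonneg (by linarith [hsk_le_t])]
          have h12 := hsg_diff k
          linarith [ht_le]
        calc ‖prim g t - F t‖
            = ‖(prim g t - prim g (sg k)) - c k * ((t : ℂ) - ((sg k : ℝ) : ℂ))‖ := by
              rw [hFt]; congr 1; ring
          _ ≤ ‖prim g t - prim g (sg k)‖ + ‖c k * ((t : ℂ) - ((sg k : ℝ) : ℂ))‖ :=
              norm_sub_le _ _
          _ ≤ ε + ((N:ℝ)*ε) * (1/(N:ℝ)) := by
              rw [norm_mul]
              exact add_le_add hd1 hd2
          _ ≤ 2 * ε := by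
              have h15 : ((N:ℝ)*ε) * (1/(N:ℝ)) = ε := by field_simp
              rw [h15]; linarith
      -- conclude the ε-estimate
      have hgD_mem : MemLp (g - gF) p mu01 := hg.sub hgF_mem
      have hdiff_eq : prim g - F = prim (g - gF) := by
        funext t
        show prim g t - F t = prim (g - gF) t
        rw [hF_rep t]
        exact (prim_sub hint (hgF_mem.integrable hp) t).symm
      have hbd_all : ∀ t : ℝ, ‖prim (g - gF) t‖ ≤ 2 * ε := by
        intro t
        rw [prim_clamp]
        have hclm : max (min t 1) 0 ∈ Set.Icc (0:ℝ) 1 := clamp_mem t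
        have h8 := happrox _ hclm
        have h9 := congrFun hdiff_eq (max (min t 1) 0)
        simp only [Pi.sub_apply] at h9
        rw [← h9]
        exact h8
      have hφdiff : ‖φ (prim (g - gF))‖ ≤ 2 * ε :=
        phi_norm_le hp φ hmul hC hbound hgD_mem (by positivity) hbd_all
      have hsplit2 : φ (prim g) = φ (prim (g - gF)) + φ F := by
        have h2' : prim (g - gF) + F = prim g := by
          rw [← hdiff_eq]
          funext t
          show prim g t - F t + F t = prim g t
          ring
        have h1' := hadd _ (hmem_prim _ hgD_mem) _ hF_mem
        rw [h2'] at h1'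
        exact h1'
      have h3' : ‖F r - prim g r‖ ≤ 2 * ε := by
        rw [norm_sub_rev]
        exact happrox r hrIcc
      calc ‖φ (prim g) - prim g r‖
          = ‖φ (prim (g - gF)) + (F r - prim g r)‖ := by
            rw [hsplit2, hφF_eq]; congr 1; ring
        _ ≤ ‖φ (prim (g - gF))‖ + ‖F r - prim g r‖ := norm_add_le _ _
        _ ≤ 2*ε + 2*ε := add_le_add hφdiff h3'
        _ = 4 * ε := by ring
    by_contra hne'
    have hd : 0 < ‖φ (prim g) - prim g r‖ := by
      rw [norm_pos_iff]
      exact sub_ne_zero.mpr hne'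
    have := hmain (‖φ (prim g) - prim g r‖/8) (by linarith)
    linarith
  obtain ⟨f0, hf0mem, hf0ne⟩ := hne
  have hf0r : f0 r ≠ 0 := by
    rw [← hval f0 hf0mem]
    exact hf0ne
  have hrpos : 0 < r := by
    rcases eq_or_lt_of_le hr0 with h | h
    · exfalso
      obtain ⟨g0, hg0, hrep0⟩ := hf0mem
      apply hf0r
      rw [hrep0 r, ← h]
      rw [min_eq_left zero_le_one, Set.Ioc_self]
      simp
    · exact h
  exact ⟨r, ⟨hrpos, hr1⟩, hval⟩
end

section
/- Let 1 ≤ p ≤ ∞ and let m : (0,1] → ℂ be continuous and bounded. Suppose there exists N ≥ 0 such that for every g ∈ AC_p the product mg (extended by (mg)(0) = 0) belongs to AC_p and |||mg||| ≤ N |||g|||. Then for every α ∈ (0,1], there exists m' ∈ L^p[α,1] with m(t) = m(α) + ∫_α^t m'(s) ds for all t ∈ [α,1] (so m is absolutely continuous on [α,1]), and ‖m'·χ_{[α,1]}‖_p ≤ N·α^{−1/p'}, where α^{−1/p'} is interpreted as 1 when p = 1 and as 1/α when p = ∞. -/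
open MeasureTheory Set
open scoped ENNReal NNReal

/-- necessity, Theorem 3.  Let `1 ≤ p ≤ ∞` with conjugate
exponent `q` (`1/p + 1/q = 1`), and let `m` be continuous and bounded on `(0,1]`.
Suppose there is `N ≥ 0` such that for every `g ∈ AC_p` the product `mg`
(extended by `(mg)(0) = 0`) lies in `AC_p` with `|||mg||| ≤ N |||g|||`.  Then for
every `α ∈ (0,1]`, `m` is absolutely continuous on `[α,1]` with derivative
`m' ∈ L^p[α,1]` and `‖m'·χ_{[α,1]}‖_p ≤ N·α^{−1/p'}` (interpreted as `N` when
`p = 1` and `N/α` when `p = ∞`). -/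
theorem multiplier_ACp_necessary
    (p q : ℝ≥0∞) (hp : 1 ≤ p) (hpq : p⁻¹ + q⁻¹ = 1)
    (m : ℝ → ℂ)
    (hmc : ContinuousOn m (Set.Ioc (0 : ℝ) 1))
    (hmb : ∃ M : ℝ, ∀ t ∈ Set.Ioc (0 : ℝ) 1, ‖m t‖ ≤ M)
    (N : ℝ) (hN : 0 ≤ N)
    (hmult : ∀ g g' : ℝ → ℂ, MemLp g' p mu01 →
      (∀ t ∈ Set.Icc (0 : ℝ) 1, g t = ∫ s in Set.Ioc (0 : ℝ) t, g' s) →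
      ∃ D : ℝ → ℂ, MemLp D p mu01 ∧
        (∀ t ∈ Set.Icc (0 : ℝ) 1,
          (if t = 0 then 0 else m t * g t) = ∫ s in Set.Ioc (0 : ℝ) t, D s) ∧
        eLpNorm D p mu01 ≤ ENNReal.ofReal N * eLpNorm g' p mu01) :
    ∀ α ∈ Set.Ioc (0 : ℝ) 1, ∃ m' : ℝ → ℂ,
      MemLp m' p (volume.restrict (Set.Icc α 1)) ∧
      (∀ t ∈ Set.Icc α 1, m t = m α + ∫ s in Set.Ioc α t, m' s) ∧
      eLpNorm ((Set.Icc α 1).indicator m') p mu01 ≤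
        ENNReal.ofReal (N * α ^ (-(q⁻¹).toReal)) := by
  intro α hα
  obtain ⟨hα0, hα1⟩ := hα
  have hfin : IsFiniteMeasure mu01 := by
    constructor
    simp [mu01, Real.volume_Icc]
  -- test function g(t) = min t α
  set g : ℝ → ℂ := fun t => ((min t α : ℝ) : ℂ) with hg
  set g' : ℝ → ℂ := (Set.Ioc (0:ℝ) α).indicator (fun _ => (1:ℂ)) with hg'
  have hg'mem : MemLp g' p mu01 :=
    memLp_indicator_const p measurableSet_Ioc 1 (Or.inr (measure_ne_top _ _))
  have hgeq : ∀ t ∈ Set.Icc (0:ℝ) 1, g t = ∫ s in Set.Ioc (0 : ℝ) t, g' s := by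
    intro t ht
    rw [hg']
    rw [setIntegral_indicator measurableSet_Ioc]
    rw [Set.Ioc_inter_Ioc]
    simp only [max_self, setIntegral_const]
    rw [measureReal_def, Real.volume_Ioc]
    rw [ENNReal.toReal_ofReal (by simp [le_min_iff, ht.1, hα0.le])]
    simp [hg]
  obtain ⟨D, hDmem, hDeq, hDnorm⟩ := hmult g g' hg'mem hgeq
  have hDint : Integrable D mu01 := hDmem.integrable hp
  -- integrability on subintervals
  have hres : ∀ s : Set ℝ, s ⊆ Set.Icc (0:ℝ) 1 → MeasurableSet s →
      mu01.restrict s = volume.restrict s := by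
    intro s hs hms
    rw [mu01, Measure.restrict_restrict hms, Set.inter_eq_left.mpr hs]
  have hIntOn : ∀ a b : ℝ, 0 ≤ a → b ≤ 1 → IntegrableOn D (Set.Ioc a b) volume := by
    intro a b ha hb
    have hsub : Set.Ioc a b ⊆ Set.Icc (0:ℝ) 1 := fun x hx => ⟨ha.trans hx.1.le, hx.2.trans hb⟩
    rw [IntegrableOn, ← hres _ hsub measurableSet_Ioc]
    exact hDint.restrict
  -- key identity m t * α = ∫ D on (0,t]
  have hkey : ∀ t ∈ Set.Icc α 1, (m t) * (α : ℂ) = ∫ s in Set.Ioc (0 : ℝ) t, D s := by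
    intro t ht
    have ht01 : t ∈ Set.Icc (0:ℝ) 1 := ⟨hα0.le.trans ht.1, ht.2⟩
    have := hDeq t ht01
    rw [if_neg (lt_of_lt_of_le hα0 ht.1).ne'] at this
    rw [← this, hg]
    simp [min_eq_right ht.1]
  have hαC : (α : ℂ) ≠ 0 := by exact_mod_cast hα0.ne'
  refine ⟨fun s => (α : ℂ)⁻¹ * D s, ?_, ?_, ?_⟩
  · have h1 : MemLp D p (mu01.restrict (Set.Icc α 1)) := hDmem.restrict _
    rw [hres _ (Set.Icc_subset_Icc hα0.le le_rfl) measurableSet_Icc] at h1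
    exact h1.const_mul _
  · intro t ht
    have hsplit : (∫ s in Set.Ioc (0:ℝ) t, D s)
        = (∫ s in Set.Ioc (0:ℝ) α, D s) + ∫ s in Set.Ioc α t, D s := by
      rw [← Set.Ioc_union_Ioc_eq_Ioc hα0.le ht.1,
        setIntegral_union (Set.Ioc_disjoint_Ioc_of_le le_rfl) measurableSet_Ioc
          (hIntOn 0 α le_rfl hα1) (hIntOn α t hα0.le ht.2)]
    have h1 := hkey t ht
    have h2 := hkey α ⟨le_rfl, hα1⟩
    rw [hsplit, ← h2] at h1
    rw [MeasureTheory.integral_const_mul]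
    field_simp
    linear_combination h1
  · -- norm bound
    have hind : (Set.Icc α 1).indicator (fun s => (α : ℂ)⁻¹ * D s)
        = (α : ℂ)⁻¹ • (Set.Icc α 1).indicator D := by
      funext x
      simp only [Set.indicator, Pi.smul_apply, smul_eq_mul]
      split_ifs <;> simp
    rw [hind, eLpNorm_const_smul]
    have hb1 : eLpNorm ((Set.Icc α 1).indicator D) p mu01 ≤ eLpNorm D p mu01 :=
      eLpNorm_indicator_le _
    have hb2 : eLpNorm g' p mu01 ≤ ENNReal.ofReal α ^ (1 / p.toReal) := by
      rw [hg']
      refine (eLpNorm_indicator_const_le _ _).trans ?_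
      have : mu01 (Set.Ioc (0:ℝ) α) = ENNReal.ofReal α := by
        rw [mu01, Measure.restrict_apply measurableSet_Ioc,
          Set.inter_eq_left.mpr (Set.Ioc_subset_Icc_self.trans (Set.Icc_subset_Icc le_rfl hα1)),
          Real.volume_Ioc, sub_zero]
      simp [this]
    -- exponent arithmetic
    have hqinv : (q⁻¹).toReal = 1 - 1 / p.toReal := by
      have hple : p⁻¹ ≤ 1 := by
        rw [← hpq]; exact le_self_add
      have : q⁻¹ = 1 - p⁻¹ := by
        rw [← hpq]; simp [ENNReal.add_sub_cancel_left (by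
          exact ne_of_lt (lt_of_le_of_lt hple (by norm_num)) : p⁻¹ ≠ ⊤)]
      rw [this, ENNReal.toReal_sub_of_le hple (by norm_num), ENNReal.toReal_inv]
      norm_num
    calc (‖(α : ℂ)⁻¹‖₊ : ℝ≥0∞) * eLpNorm ((Set.Icc α 1).indicator D) p mu01
        ≤ (‖(α : ℂ)⁻¹‖₊ : ℝ≥0∞) * (ENNReal.ofReal N * (ENNReal.ofReal α ^ (1 / p.toReal))) := by
          exact mul_le_mul_right (hb1.trans (hDnorm.trans (mul_le_mul_right hb2 _))) _
      _ = ENNReal.ofReal (N * α ^ (-(q⁻¹).toReal)) := by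
          rw [ENNReal.ofReal_rpow_of_pos hα0]
          rw [← ENNReal.ofReal_mul hN]
          have : (‖(α : ℂ)⁻¹‖₊ : ℝ≥0∞) = ENNReal.ofReal α⁻¹ := by
            rw [← Complex.ofReal_inv, Complex.nnnorm_real]
            exact Real.enorm_eq_ofReal (by positivity)
          rw [this, ← ENNReal.ofReal_mul (by positivity)]
          congr 1
          rw [hqinv]
          rw [neg_sub, Real.rpow_sub hα0]
          rw [Real.rpow_one]
          ring
end

section
/- Let m : (0,1] → ℂ be continuous and bounded. Then the following are equivalent: (i) there exists N ≥ 0 such that for every g ∈ AC_1 the product mg (extended by (mg)(0) = 0) belongs to AC_1 with |||mg||| ≤ N|||g|||; (ii) there exists h ∈ L¹[0,1] such that m(t) = m(1) − ∫_t^1 h(s) ds for all t ∈ (0,1], i.e., m extends to an absolutely continuous function on [0,1]. (This recovers Larsen's description of the multipliers of AC_1.) -/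
open MeasureTheory Set
open scoped ENNReal NNReal

section helpers
open Filter
open scoped Topology

lemma ae_zero_of_Ioc (f : ℝ → ℂ) (hf : Integrable f (volume : Measure ℝ))
    (h0 : ∀ u v : ℝ, ∫ s in Ioc u v, f s = 0) : f =ᵐ[(volume : Measure ℝ)] 0 := by
  have H := IsUnifLocDoublingMeasure.ae_tendsto_average (μ := (volume : Measure ℝ))
    hf.locallyIntegrable 1
  filter_upwards [H] with x hx
  have hδ : Tendsto (fun n : ℕ => (1:ℝ)/(n+1)) atTop (𝓝[>] 0) := by
    apply tendsto_nhdsWithin_of_tendsto_nhds_of_eventually_within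
    · exact tendsto_one_div_add_atTop_nhds_zero_nat
    · filter_upwards with n
      simp only [mem_Ioi]; positivity
  have hmem : ∀ᶠ n : ℕ in atTop, x ∈ Metric.closedBall x (1 * (1/(n+1))) := by
    filter_upwards with n
    simp only [Metric.mem_closedBall, dist_self]
    positivity
  have h2 := hx (fun _ => x) (fun n : ℕ => 1/(n+1)) hδ hmem
  have h3 : ∀ n : ℕ, ⨍ y in Metric.closedBall x ((1:ℝ)/(n+1)), f y = 0 := by
    intro n
    rw [setAverage_eq, Real.closedBall_eq_Icc, integral_Icc_eq_integral_Ioc, h0, smul_zero]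
  simp only [h3] at h2
  show f x = (0 : ℝ → ℂ) x
  simpa using (tendsto_nhds_unique tendsto_const_nhds h2).symm

lemma parts_aux (f k : ℝ → ℂ) (t : ℝ)
    (hf : IntegrableOn f (Ioc 0 t)) (hk : IntegrableOn k (Ioc 0 t)) :
    (∫ u in Ioc (0:ℝ) t, f u) * (∫ v in Ioc (0:ℝ) t, k v)
      = (∫ u in Ioc (0:ℝ) t, f u * (∫ v in Ioc (0:ℝ) u, k v))
        + ∫ v in Ioc (0:ℝ) t, (∫ u in Ioc (0:ℝ) v, f u) * k v := by
  set μ := volume.restrict (Ioc (0:ℝ) t) with hμ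
  set P' : ℝ × ℝ → ℂ := fun p => f p.1 * k p.2 with hP'
  have hP'int : Integrable P' (μ.prod μ) := hf.mul_prod hk
  set S : Set (ℝ × ℝ) := {p : ℝ × ℝ | p.2 ≤ p.1} with hS
  have hSm : MeasurableSet S := measurableSet_le measurable_snd measurable_fst
  have hPint : Integrable (S.indicator P') (μ.prod μ) := hP'int.indicator hSm
  have hPcint : Integrable (Sᶜ.indicator P') (μ.prod μ) := hP'int.indicator hSm.compl
  have hsplit : (∫ p, S.indicator P' p ∂(μ.prod μ)) + (∫ p, Sᶜ.indicator P' p ∂(μ.prod μ))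
      = ∫ p, P' p ∂(μ.prod μ) := by
    rw [← integral_add hPint hPcint]
    congr 1
    exact Set.indicator_self_add_compl S P'
  have hmul : ∫ p, P' p ∂(μ.prod μ) = (∫ u in Ioc (0:ℝ) t, f u) * (∫ v in Ioc (0:ℝ) t, k v) :=
    integral_prod_mul f k
  have T1 : (∫ p, S.indicator P' p ∂(μ.prod μ))
      = ∫ u in Ioc (0:ℝ) t, f u * (∫ v in Ioc (0:ℝ) u, k v) := by
    calc ∫ p, S.indicator P' p ∂(μ.prod μ)
        = ∫ u, ∫ v, S.indicator P' (u, v) ∂μ ∂μ := (integral_integral (f := fun u v => S.indicator P' (u, v)) hPint).symm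
      _ = ∫ u in Ioc (0:ℝ) t, f u * (∫ v in Ioc (0:ℝ) u, k v) := by
          apply setIntegral_congr_fun measurableSet_Ioc
          intro u hu
          have h1 : ∀ v : ℝ, S.indicator P' (u, v) = (Iic u).indicator (fun v => f u * k v) v := by
            intro v
            simp only [Set.indicator_apply, hS, hP', mem_setOf_eq, mem_Iic]
          calc ∫ v, S.indicator P' (u, v) ∂μ
              = ∫ v, (Iic u).indicator (fun v => f u * k v) v ∂μ := by
                simp only [h1]
            _ = ∫ v in Iic u, f u * k v ∂μ := integral_indicator measurableSet_Iic
            _ = ∫ v in Iic u ∩ Ioc 0 t, f u * k v := by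
                rw [hμ, Measure.restrict_restrict measurableSet_Iic]
            _ = ∫ v in Ioc (0:ℝ) u, f u * k v := by
                have hset : Iic u ∩ Ioc 0 t = Ioc (0:ℝ) u := by
                  ext v
                  simp only [mem_inter_iff, mem_Iic, mem_Ioc]
                  constructor
                  · rintro ⟨h1', h2', _⟩; exact ⟨h2', h1'⟩
                  · rintro ⟨h1', h2'⟩; exact ⟨h2', h1', h2'.trans hu.2⟩
                rw [hset]
            _ = f u * ∫ v in Ioc (0:ℝ) u, k v := integral_const_mul _ _
  have T2 : (∫ p, Sᶜ.indicator P' p ∂(μ.prod μ))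
      = ∫ v in Ioc (0:ℝ) t, (∫ u in Ioc (0:ℝ) v, f u) * k v := by
    calc ∫ p, Sᶜ.indicator P' p ∂(μ.prod μ)
        = ∫ v, ∫ u, Sᶜ.indicator P' (u, v) ∂μ ∂μ := integral_prod_symm (fun p => Sᶜ.indicator P' p) hPcint
      _ = ∫ v in Ioc (0:ℝ) t, (∫ u in Ioc (0:ℝ) v, f u) * k v := by
          apply setIntegral_congr_fun measurableSet_Ioc
          intro v hv
          have h1 : ∀ u : ℝ, Sᶜ.indicator P' (u, v) = (Iio v).indicator (fun u => f u * k v) u := by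
            intro u
            simp only [Set.indicator_apply, hS, hP', mem_compl_iff, mem_setOf_eq, mem_Iio, not_le]
          calc ∫ u, Sᶜ.indicator P' (u, v) ∂μ
              = ∫ u, (Iio v).indicator (fun u => f u * k v) u ∂μ := by
                simp only [h1]
            _ = ∫ u in Iio v, f u * k v ∂μ := integral_indicator measurableSet_Iio
            _ = ∫ u in Iio v ∩ Ioc 0 t, f u * k v := by
                rw [hμ, Measure.restrict_restrict measurableSet_Iio]
            _ = ∫ u in Ioo (0:ℝ) v, f u * k v := by
                have hset : Iio v ∩ Ioc 0 t = Ioo (0:ℝ) v := by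
                  ext u
                  simp only [mem_inter_iff, mem_Iio, mem_Ioo, mem_Ioc]
                  constructor
                  · rintro ⟨h1', h2', _⟩; exact ⟨h2', h1'⟩
                  · rintro ⟨h1', h2'⟩; exact ⟨h2', h1', (le_of_lt h2').trans hv.2⟩
                rw [hset]
            _ = ∫ u in Ioc (0:ℝ) v, f u * k v := (integral_Ioc_eq_integral_Ioo).symm
            _ = (∫ u in Ioc (0:ℝ) v, f u) * k v := integral_mul_const _ _
  rw [← hmul, ← hsplit, T1, T2]

lemma mu01_finite : IsFiniteMeasure mu01 := by
  constructor
  rw [mu01, Measure.restrict_apply_univ, Real.volume_Icc]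
  simp

lemma ae_restrict_sub {f g : ℝ → ℂ} {s : Set ℝ} (hsub : s ⊆ Icc (0:ℝ) 1)
    (hae : f =ᵐ[mu01] g) : f =ᵐ[volume.restrict s] g := by
  have h1 : (volume : Measure ℝ).restrict s = mu01.restrict s := by
    rw [mu01, Measure.restrict_restrict_of_subset hsub]
  rw [h1]
  exact hae.filter_mono (ae_mono Measure.restrict_le_self)

lemma step1 (m : ℝ → ℂ) (N : ℝ)
    (hmul : ∀ g g' : ℝ → ℂ, MemLp g' 1 mu01 →
      (∀ t ∈ Icc (0:ℝ) 1, g t = ∫ s in Ioc (0:ℝ) t, g' s) →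
      ∃ D : ℝ → ℂ, MemLp D 1 mu01 ∧
        (∀ t ∈ Icc (0:ℝ) 1,
          (if t = 0 then 0 else m t * g t) = ∫ s in Ioc (0:ℝ) t, D s) ∧
        eLpNorm D 1 mu01 ≤ ENNReal.ofReal N * eLpNorm g' 1 mu01)
    (n : ℕ) :
    ∃ E : ℝ → ℂ, StronglyMeasurable E ∧ Integrable E mu01 ∧
      (∫⁻ s, ‖E s‖₊ ∂mu01) ≤ ENNReal.ofReal N ∧
      ∀ t ∈ Icc (1/((n:ℝ)+1)) 1, m t = ∫ s in Ioc (0:ℝ) t, E s := by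
  haveI := mu01_finite
  set a : ℝ := 1/((n:ℝ)+1) with ha
  have ha0 : 0 < a := by positivity
  have ha1 : a ≤ 1 := by
    rw [ha, div_le_one (by positivity)]
    simp
  set g' : ℝ → ℂ := (Ioc (0:ℝ) a).indicator (fun _ => (a:ℂ)⁻¹) with hg'
  set g : ℝ → ℂ := fun t => ∫ s in Ioc (0:ℝ) t, g' s with hg
  have hg'i : Integrable g' mu01 := (integrable_const _).indicator measurableSet_Ioc
  obtain ⟨D, hDmem, hDrep, hDnorm⟩ := hmul g g' (memLp_one_iff_integrable.mpr hg'i)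
    (fun t _ => rfl)
  have hDi : Integrable D mu01 := memLp_one_iff_integrable.mp hDmem
  have hg1 : ∀ t : ℝ, a ≤ t → g t = 1 := by
    intro t hat
    show (∫ s in Ioc (0:ℝ) t, g' s) = 1
    rw [hg', setIntegral_indicator measurableSet_Ioc,
      Set.inter_eq_right.mpr (Ioc_subset_Ioc le_rfl hat), setIntegral_const,
      Real.volume_real_Ioc_of_le ha0.le, sub_zero]
    rw [Complex.real_smul]
    exact mul_inv_cancel₀ (Complex.ofReal_ne_zero.mpr ha0.ne')
  have hgnorm : eLpNorm g' 1 mu01 = 1 := by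
    rw [eLpNorm_one_eq_lintegral_enorm]; simp only [enorm_eq_nnnorm]
    have h1 : (fun s => (‖g' s‖₊ : ℝ≥0∞))
        = (Ioc (0:ℝ) a).indicator (fun _ => (‖(a:ℂ)⁻¹‖₊ : ℝ≥0∞)) := by
      funext s
      rw [hg']
      by_cases hs : s ∈ Ioc (0:ℝ) a <;>
        simp [Set.indicator_apply, hs]
    rw [h1, lintegral_indicator measurableSet_Ioc, setLIntegral_const]
    have h2 : mu01 (Ioc (0:ℝ) a) = ENNReal.ofReal a := by
      rw [mu01, Measure.restrict_apply measurableSet_Ioc,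
        Set.inter_eq_left.mpr (Ioc_subset_Icc_self.trans (Icc_subset_Icc le_rfl ha1)),
        Real.volume_Ioc, sub_zero]
    have h3 : ((‖(a:ℂ)⁻¹‖₊ : ℝ≥0∞)) = ENNReal.ofReal a⁻¹ := by
      rw [← enorm_eq_nnnorm, ← ofReal_norm_eq_enorm, norm_inv]
      congr 1
      rw [Complex.norm_real, Real.norm_eq_abs, abs_of_pos ha0]
    rw [h2, h3, ← ENNReal.ofReal_mul (by positivity), inv_mul_cancel₀ ha0.ne']
    exact ENNReal.ofReal_one
  have hEb : (∫⁻ s, ‖D s‖₊ ∂mu01) ≤ ENNReal.ofReal N := by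
    simp only [← enorm_eq_nnnorm]; rw [← eLpNorm_one_eq_lintegral_enorm]
    calc eLpNorm D 1 mu01 ≤ ENNReal.ofReal N * eLpNorm g' 1 mu01 := hDnorm
      _ = ENNReal.ofReal N := by rw [hgnorm, mul_one]
  have hrepn : ∀ t ∈ Icc a 1, m t = ∫ s in Ioc (0:ℝ) t, D s := by
    intro t ht
    have ht0 : 0 < t := lt_of_lt_of_le ha0 ht.1
    have := hDrep t ⟨ht0.le, ht.2⟩
    rw [if_neg ht0.ne', hg1 t ht.1, mul_one] at this
    exact this
  set E : ℝ → ℂ := hDmem.aestronglyMeasurable.mk D with hE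
  have hEae : D =ᵐ[mu01] E := hDmem.aestronglyMeasurable.ae_eq_mk
  refine ⟨E, hDmem.aestronglyMeasurable.stronglyMeasurable_mk, hDi.congr hEae, ?_, ?_⟩
  · have heq : (∫⁻ s, ‖E s‖₊ ∂mu01) = ∫⁻ s, ‖D s‖₊ ∂mu01 := by
      apply lintegral_congr_ae
      filter_upwards [hEae] with s hs
      rw [hs]
    rw [heq]
    exact hEb
  · intro t ht
    rw [hrepn t ht]
    apply integral_congr_ae
    have hsub2 : Ioc (0:ℝ) t ⊆ Icc (0:ℝ) 1 := Ioc_subset_Icc_self.trans (Icc_subset_Icc le_rfl ht.2)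
    exact ae_restrict_sub hsub2 hEae

lemma reverse_dir (m : ℝ → ℂ) (h : ℝ → ℂ) (hInt : IntegrableOn h (Icc (0:ℝ) 1))
    (hrep : ∀ t ∈ Ioc (0:ℝ) 1, m t = m 1 - ∫ s in Ioc t 1, h s) :
    ∃ N : ℝ, 0 ≤ N ∧ ∀ g g' : ℝ → ℂ, MemLp g' 1 mu01 →
      (∀ t ∈ Icc (0:ℝ) 1, g t = ∫ s in Ioc (0:ℝ) t, g' s) →
      ∃ D : ℝ → ℂ, MemLp D 1 mu01 ∧
        (∀ t ∈ Icc (0:ℝ) 1,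
          (if t = 0 then 0 else m t * g t) = ∫ s in Ioc (0:ℝ) t, D s) ∧
        eLpNorm D 1 mu01 ≤ ENNReal.ofReal N * eLpNorm g' 1 mu01 := by
  classical
  have hIoc : IntegrableOn h (Ioc (0:ℝ) 1) := hInt.mono_set Ioc_subset_Icc_self
  -- indicator version of h, integrable on ℝ
  set h₀ : ℝ → ℂ := (Ioc (0:ℝ) 1).indicator h with hh₀
  have hh₀i : Integrable h₀ (volume : Measure ℝ) :=
    (integrable_indicator_iff measurableSet_Ioc).mpr hIoc
  set c : ℂ := m 1 - ∫ s in Ioc (0:ℝ) 1, h s with hc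
  set Hm : ℝ → ℂ := fun b => ∫ x in (0:ℝ)..b, h₀ x with hHm
  have hHmc : Continuous Hm := intervalIntegral.continuous_primitive
    (fun a b => hh₀i.intervalIntegrable) 0
  -- on [0,1], Hm b = ∫ s in Ioc 0 b, h s
  have hHmeq : ∀ b ∈ Icc (0:ℝ) 1, Hm b = ∫ s in Ioc (0:ℝ) b, h s := by
    intro b hb
    show (∫ x in (0:ℝ)..b, h₀ x) = _
    rw [intervalIntegral.integral_of_le hb.1]
    rw [hh₀, setIntegral_indicator measurableSet_Ioc]
    congr 1
    rw [Set.inter_eq_left.mpr (Ioc_subset_Ioc le_rfl hb.2)]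
  set Ch : ℝ := ∫ s, ‖h s‖ ∂mu01 with hCh
  have hCh0 : 0 ≤ Ch := integral_nonneg fun s => norm_nonneg _
  have hChIoc : (∫ s in Ioc (0:ℝ) 1, ‖h s‖) = Ch := by
    rw [hCh]; exact (integral_Icc_eq_integral_Ioc (μ := volume) (f := fun s => ‖h s‖)).symm
  -- global bound for Hm
  have hHmb : ∀ b : ℝ, ‖Hm b‖ ≤ Ch := by
    intro b
    calc ‖Hm b‖ ≤ ∫ x in Set.uIoc (0:ℝ) b, ‖h₀ x‖ := intervalIntegral.norm_integral_le_integral_norm_uIoc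
      _ ≤ ∫ x, ‖h₀ x‖ := setIntegral_le_integral hh₀i.norm
          (Filter.Eventually.of_forall fun x => norm_nonneg _)
      _ = ∫ x in Ioc (0:ℝ) 1, ‖h x‖ := by
          rw [hh₀, ← integral_indicator measurableSet_Ioc]
          congr 1; funext x; exact norm_indicator_eq_indicator_norm h x
      _ = Ch := hChIoc
  set M : ℝ → ℂ := fun s => c + Hm s with hM
  have hMc : Continuous M := continuous_const.add hHmc
  have hMb : ∀ s : ℝ, ‖M s‖ ≤ ‖c‖ + Ch := fun s =>
    (norm_add_le _ _).trans (add_le_add le_rfl (hHmb s))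
  -- m = M on Ioc 0 1
  have hmM : ∀ t ∈ Ioc (0:ℝ) 1, m t = M t := by
    intro t ht
    have hsplit : (∫ s in Ioc (0:ℝ) 1, h s)
        = (∫ s in Ioc (0:ℝ) t, h s) + ∫ s in Ioc t 1, h s := by
      rw [← setIntegral_union ((Ioc_disjoint_Ioc_of_le le_rfl)) measurableSet_Ioc
        (hIoc.mono_set (Ioc_subset_Ioc le_rfl ht.2)) (hIoc.mono_set (Ioc_subset_Ioc ht.1.le le_rfl))]
      rw [Ioc_union_Ioc_eq_Ioc ht.1.le ht.2]
    have h1 : M t = c + Hm t := rfl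
    rw [hrep t ht, h1, hHmeq t ⟨ht.1.le, ht.2⟩, hc, hsplit]
    ring
  set N : ℝ := Ch + (‖c‖ + Ch) with hN
  refine ⟨N, by positivity, ?_⟩
  intro g g' hg'mem hgrep
  have hg'i : Integrable g' mu01 := memLp_one_iff_integrable.mp hg'mem
  have hg'Icc : IntegrableOn g' (Icc (0:ℝ) 1) := hg'i
  have hg'Ioc : IntegrableOn g' (Ioc (0:ℝ) 1) := hg'Icc.mono_set Ioc_subset_Icc_self
  set g₀ : ℝ → ℂ := (Ioc (0:ℝ) 1).indicator g' with hg₀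
  have hg₀i : Integrable g₀ (volume : Measure ℝ) :=
    (integrable_indicator_iff measurableSet_Ioc).mpr hg'Ioc
  set Gm : ℝ → ℂ := fun b => ∫ x in (0:ℝ)..b, g₀ x with hGm
  have hGmc : Continuous Gm := intervalIntegral.continuous_primitive
    (fun a b => hg₀i.intervalIntegrable) 0
  have hGmeq : ∀ b ∈ Icc (0:ℝ) 1, Gm b = ∫ s in Ioc (0:ℝ) b, g' s := by
    intro b hb
    show (∫ x in (0:ℝ)..b, g₀ x) = _
    rw [intervalIntegral.integral_of_le hb.1]
    rw [hg₀, setIntegral_indicator measurableSet_Ioc]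
    congr 1
    rw [Set.inter_eq_left.mpr (Ioc_subset_Ioc le_rfl hb.2)]
  set B : ℝ := ∫ s, ‖g' s‖ ∂mu01 with hB
  have hB0 : 0 ≤ B := integral_nonneg fun s => norm_nonneg _
  have hBIoc : (∫ s in Ioc (0:ℝ) 1, ‖g' s‖) = B := by
    rw [hB]; exact (integral_Icc_eq_integral_Ioc (μ := volume) (f := fun s => ‖g' s‖)).symm
  have hGmb : ∀ b : ℝ, ‖Gm b‖ ≤ B := by
    intro b
    calc ‖Gm b‖ ≤ ∫ x in Set.uIoc (0:ℝ) b, ‖g₀ x‖ := intervalIntegral.norm_integral_le_integral_norm_uIoc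
      _ ≤ ∫ x, ‖g₀ x‖ := setIntegral_le_integral hg₀i.norm
          (Filter.Eventually.of_forall fun x => norm_nonneg _)
      _ = ∫ x in Ioc (0:ℝ) 1, ‖g' x‖ := by
          rw [hg₀, ← integral_indicator measurableSet_Ioc]
          congr 1; funext x; exact norm_indicator_eq_indicator_norm g' x
      _ = B := hBIoc
  -- the candidate density
  set D : ℝ → ℂ := fun s => h s * Gm s + M s * g' s with hD
  have hD1 : Integrable (fun s => h s * Gm s) mu01 := by
    have := (hInt.bdd_mul (f := Gm) (c := B)) ?_ ?_
    · exact this.congr (Filter.Eventually.of_forall fun s => mul_comm (Gm s) (h s))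
    · exact hGmc.aestronglyMeasurable
    · exact Filter.Eventually.of_forall hGmb
  have hD2 : Integrable (fun s => M s * g' s) mu01 := by
    exact hg'i.bdd_mul (hMc.aestronglyMeasurable) (Filter.Eventually.of_forall hMb)
  have hDi : Integrable D mu01 := hD1.add hD2
  refine ⟨D, memLp_one_iff_integrable.mpr hDi, ?_, ?_⟩
  · intro t ht
    by_cases ht0 : t = 0
    · simp [ht0]
    · rw [if_neg ht0]
      have ht0' : 0 < t := lt_of_le_of_ne ht.1 (Ne.symm ht0)
      have hmem : t ∈ Ioc (0:ℝ) 1 := ⟨ht0', ht.2⟩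
      have hhI : IntegrableOn h (Ioc (0:ℝ) t) := hIoc.mono_set (Ioc_subset_Ioc le_rfl ht.2)
      have hgI : IntegrableOn g' (Ioc (0:ℝ) t) := hg'Ioc.mono_set (Ioc_subset_Ioc le_rfl ht.2)
      have hsub : Ioc (0:ℝ) t ⊆ Icc (0:ℝ) 1 := fun s hs => ⟨hs.1.le, hs.2.trans ht.2⟩
      -- rewrite D on the set
      have e1 : ∫ s in Ioc (0:ℝ) t, D s
          = (∫ s in Ioc (0:ℝ) t, h s * Gm s) + ∫ s in Ioc (0:ℝ) t, M s * g' s :=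
        integral_add ((show IntegrableOn (fun s => h s * Gm s) (Icc (0:ℝ) 1) volume from hD1).mono_set hsub)
          ((show IntegrableOn (fun s => M s * g' s) (Icc (0:ℝ) 1) volume from hD2).mono_set hsub)
      have e2 : (∫ s in Ioc (0:ℝ) t, M s * g' s)
          = (∫ s in Ioc (0:ℝ) t, c * g' s) + ∫ s in Ioc (0:ℝ) t, Hm s * g' s := by
        rw [← integral_add (hgI.const_mul c)]
        · apply setIntegral_congr_fun measurableSet_Ioc
          intro s _
          show M s * g' s = c * g' s + Hm s * g' s
          have h1 : M s = c + Hm s := rfl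
          rw [h1]; ring
        · have : IntegrableOn (fun s => Hm s * g' s) (Icc (0:ℝ) 1) volume :=
            hg'i.bdd_mul (hHmc.aestronglyMeasurable) (Filter.Eventually.of_forall hHmb)
          exact this.mono_set hsub
      have e3 : (∫ s in Ioc (0:ℝ) t, h s * Gm s) + ∫ s in Ioc (0:ℝ) t, Hm s * g' s
          = (Hm t) * (Gm t) := by
        have hp := parts_aux h g' t hhI hgI
        have q1 : (∫ u in Ioc (0:ℝ) t, h u * (∫ v in Ioc (0:ℝ) u, g' v))
            = ∫ s in Ioc (0:ℝ) t, h s * Gm s := by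
          apply setIntegral_congr_fun measurableSet_Ioc
          intro u hu
          show h u * (∫ v in Ioc (0:ℝ) u, g' v) = h u * Gm u
          rw [hGmeq u (hsub hu)]
        have q2 : (∫ v in Ioc (0:ℝ) t, (∫ u in Ioc (0:ℝ) v, h u) * g' v)
            = ∫ s in Ioc (0:ℝ) t, Hm s * g' s := by
          apply setIntegral_congr_fun measurableSet_Ioc
          intro v hv
          show (∫ u in Ioc (0:ℝ) v, h u) * g' v = Hm v * g' v
          rw [hHmeq v (hsub hv)]
        rw [q1, q2] at hp
        rw [← hp, ← hHmeq t ⟨ht0'.le, ht.2⟩, ← hGmeq t ⟨ht0'.le, ht.2⟩]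
      have e4 : (∫ s in Ioc (0:ℝ) t, c * g' s) = c * Gm t := by
        rw [integral_const_mul, ← hGmeq t ⟨ht0'.le, ht.2⟩]
      have e5 : m t * g t = M t * Gm t := by
        rw [hmM t hmem, hgrep t ht, ← hGmeq t ⟨ht0'.le, ht.2⟩]
      have h1 : M t = c + Hm t := rfl
      rw [e5, h1, e1, e2, e4]
      linear_combination -e3
  · -- eLpNorm bound
    have hDnorm : (∫ s, ‖D s‖ ∂mu01) ≤ N * ∫ s, ‖g' s‖ ∂mu01 := by
      have hbd : ∀ᵐ s ∂mu01, ‖D s‖ ≤ ‖h s‖ * B + (‖c‖ + Ch) * ‖g' s‖ := by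
        refine Filter.Eventually.of_forall fun s => ?_
        calc ‖D s‖ ≤ ‖h s * Gm s‖ + ‖M s * g' s‖ := norm_add_le _ _
          _ = ‖h s‖ * ‖Gm s‖ + ‖M s‖ * ‖g' s‖ := by rw [norm_mul, norm_mul]
          _ ≤ ‖h s‖ * B + (‖c‖ + Ch) * ‖g' s‖ := by
              gcongr
              · exact hGmb s
              · exact hMb s
      have hint2 : Integrable (fun s => ‖h s‖ * B + (‖c‖ + Ch) * ‖g' s‖) mu01 :=
        (hInt.norm.mul_const B).add (hg'i.norm.const_mul _)
      calc (∫ s, ‖D s‖ ∂mu01) ≤ ∫ s, (‖h s‖ * B + (‖c‖ + Ch) * ‖g' s‖) ∂mu01 :=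
            integral_mono_ae hDi.norm hint2 hbd
        _ = (∫ s, ‖h s‖ ∂mu01) * B + (‖c‖ + Ch) * ∫ s, ‖g' s‖ ∂mu01 := by
            rw [integral_add (μ := mu01)
              (show Integrable (fun s => ‖h s‖ * B) mu01 from hInt.norm.mul_const B)
              (show Integrable (fun s => (‖c‖ + Ch) * ‖g' s‖) mu01 from hg'i.norm.const_mul _),
              integral_mul_const, integral_const_mul]
        _ = Ch * B + (‖c‖ + Ch) * B := by rw [← hCh, ← hB]
        _ = N * B := by rw [hN]; ring
        _ = N * ∫ s, ‖g' s‖ ∂mu01 := by rw [hB]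
    rw [eLpNorm_one_eq_lintegral_enorm, eLpNorm_one_eq_lintegral_enorm,
      ← ofReal_integral_norm_eq_lintegral_enorm hDi,
      ← ofReal_integral_norm_eq_lintegral_enorm hg'i,
      ← ENNReal.ofReal_mul (by positivity)]
    exact ENNReal.ofReal_le_ofReal hDnorm

lemma forward_dir (m : ℝ → ℂ) (N : ℝ)
    (hmul : ∀ g g' : ℝ → ℂ, MemLp g' 1 mu01 →
      (∀ t ∈ Icc (0:ℝ) 1, g t = ∫ s in Ioc (0:ℝ) t, g' s) →
      ∃ D : ℝ → ℂ, MemLp D 1 mu01 ∧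
        (∀ t ∈ Icc (0:ℝ) 1,
          (if t = 0 then 0 else m t * g t) = ∫ s in Ioc (0:ℝ) t, D s) ∧
        eLpNorm D 1 mu01 ≤ ENNReal.ofReal N * eLpNorm g' 1 mu01) :
    ∃ h : ℝ → ℂ, IntegrableOn h (Icc (0:ℝ) 1) ∧
      ∀ t ∈ Ioc (0:ℝ) 1, m t = m 1 - ∫ s in Ioc t 1, h s := by
  classical
  choose E hEsm hEint hEnorm hErep using step1 m N hmul
  have hdiff : ∀ (j : ℕ) (u v : ℝ), 1/((j:ℝ)+1) ≤ u → u ≤ v → v ≤ 1 →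
      ∫ s in Ioc u v, E j s = m v - m u := by
    intro j u v hju huv hv1
    have hj0 : 0 < 1/((j:ℝ)+1) := by positivity
    have hu0 : 0 < u := lt_of_lt_of_le hj0 hju
    have h1 : m u = ∫ s in Ioc (0:ℝ) u, E j s := hErep j u ⟨hju, huv.trans hv1⟩
    have h2 : m v = ∫ s in Ioc (0:ℝ) v, E j s := hErep j v ⟨hju.trans huv, hv1⟩
    have hintu : IntegrableOn (E j) (Ioc 0 u) volume :=
      (show IntegrableOn (E j) (Icc 0 1) volume from hEint j).mono_set
        (Ioc_subset_Icc_self.trans (Icc_subset_Icc le_rfl (huv.trans hv1)))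
    have hintuv : IntegrableOn (E j) (Ioc u v) volume :=
      (show IntegrableOn (E j) (Icc 0 1) volume from hEint j).mono_set
        (fun x hx => ⟨hu0.le.trans hx.1.le, hx.2.trans hv1⟩)
    have hsplit : ∫ s in Ioc (0:ℝ) v, E j s
        = (∫ s in Ioc (0:ℝ) u, E j s) + ∫ s in Ioc u v, E j s := by
      rw [← setIntegral_union (Ioc_disjoint_Ioc_of_le le_rfl) measurableSet_Ioc hintu hintuv,
        Ioc_union_Ioc_eq_Ioc hu0.le huv]
    rw [h1, h2, hsplit]; ring
  have hcons : ∀ n k : ℕ, n ≤ k →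
      E n =ᵐ[volume.restrict (Ioc (1/((n:ℝ)+1)) 1)] E k := by
    intro n k hnk
    set a : ℝ := 1/((n:ℝ)+1) with ha
    have ha0 : 0 < a := by positivity
    have hba : 1/((k:ℝ)+1) ≤ a := by
      rw [ha]
      apply one_div_le_one_div_of_le (by positivity)
      exact_mod_cast Nat.succ_le_succ hnk
    set φ : ℝ → ℂ := (Ioc a 1).indicator (fun s => E n s - E k s) with hφ
    have hsub : Ioc a 1 ⊆ Icc (0:ℝ) 1 := fun x hx => ⟨(ha0.trans hx.1).le, hx.2⟩
    have hφi : Integrable φ (volume : Measure ℝ) := by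
      apply (integrable_indicator_iff measurableSet_Ioc).mpr
      exact (show IntegrableOn (fun s => E n s - E k s) (Icc 0 1) volume from
        (hEint n).sub (hEint k)).mono_set hsub
    have h0 : ∀ u v : ℝ, ∫ s in Ioc u v, φ s = 0 := by
      intro u v
      rw [hφ, setIntegral_indicator measurableSet_Ioc, Set.Ioc_inter_Ioc]
      by_cases huv : min v 1 ≤ max u a
      · rw [Set.Ioc_eq_empty (not_lt.mpr huv)]; simp
      push_neg at huv
      have hau' : a ≤ max u a := le_max_right _ _
      have hv'1 : min v 1 ≤ 1 := min_le_right _ _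
      have e1 : ∫ s in Ioc (max u a) (min v 1), E n s = m (min v 1) - m (max u a) :=
        hdiff n _ _ hau' huv.le hv'1
      have e2 : ∫ s in Ioc (max u a) (min v 1), E k s = m (min v 1) - m (max u a) :=
        hdiff k _ _ (hba.trans hau') huv.le hv'1
      have hsub2 : Ioc (max u a) (min v 1) ⊆ Icc (0:ℝ) 1 :=
        fun x hx => ⟨((ha0.trans_le hau').trans hx.1).le, hx.2.trans hv'1⟩
      rw [integral_sub
        ((show IntegrableOn (E n) (Icc 0 1) volume from hEint n).mono_set hsub2)
        ((show IntegrableOn (E k) (Icc 0 1) volume from hEint k).mono_set hsub2),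
        e1, e2, sub_self]
    have hz := ae_zero_of_Ioc φ hφi h0
    have hz' : ∀ᵐ s ∂(volume.restrict (Ioc a 1)), φ s = 0 := ae_restrict_of_ae hz
    filter_upwards [hz', ae_restrict_mem measurableSet_Ioc] with s hs hmem
    have h3 : φ s = E n s - E k s := by rw [hφ, Set.indicator_of_mem hmem]
    have h4 : E n s - E k s = 0 := by rw [← h3]; exact hs
    exact sub_eq_zero.mp h4
  -- a.e. good set
  have hglob : ∀ (p : ℕ × ℕ), ∀ᵐ s ∂(volume : Measure ℝ),
      p.1 ≤ p.2 → s ∈ Ioc (1/((p.1:ℝ)+1)) 1 → E p.1 s = E p.2 s := by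
    intro p
    by_cases hp : p.1 ≤ p.2
    · have := (ae_restrict_iff' measurableSet_Ioc).mp (hcons p.1 p.2 hp)
      filter_upwards [this] with s hs _ hmem
      exact hs hmem
    · filter_upwards with s
      intro hcontra
      exact absurd hcontra hp
  have hgood : ∀ᵐ s ∂(volume : Measure ℝ), ∀ n k : ℕ, n ≤ k →
      s ∈ Ioc (1/((n:ℝ)+1)) 1 → E n s = E k s := by
    filter_upwards [ae_all_iff.mpr hglob] with s hs n k hnk hmem
    exact hs (n, k) hnk hmem
  set h : ℝ → ℂ := fun s => limUnder atTop (fun n => E n s) with hh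
  have hkey : ∀ s : ℝ, (∀ n k : ℕ, n ≤ k → s ∈ Ioc (1/((n:ℝ)+1)) 1 → E n s = E k s) →
      ∀ n₀ : ℕ, s ∈ Ioc (1/((n₀:ℝ)+1)) 1 →
      Tendsto (fun n => E n s) atTop (𝓝 (E n₀ s)) ∧ h s = E n₀ s := by
    intro s hG n₀ hn₀
    have htend : Tendsto (fun n => E n s) atTop (𝓝 (E n₀ s)) := by
      apply tendsto_atTop_of_eventually_const (i₀ := n₀)
      intro k hk
      exact (hG n₀ k hk hn₀).symm
    exact ⟨htend, htend.limUnder_eq⟩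
  have hEq : ∀ n₀ : ℕ, h =ᵐ[volume.restrict (Ioc (1/((n₀:ℝ)+1)) 1)] E n₀ := by
    intro n₀
    filter_upwards [ae_restrict_of_ae hgood, ae_restrict_mem measurableSet_Ioc] with s hG hmem
    exact (hkey s hG n₀ hmem).2
  have hmu : mu01 = volume.restrict (Ioc (0:ℝ) 1) := by
    rw [mu01]
    exact (Measure.restrict_congr_set Ioc_ae_eq_Icc).symm
  have hAESM : AEStronglyMeasurable h mu01 := by
    rw [hmu]
    apply aestronglyMeasurable_of_tendsto_ae atTop (fun n => (hEsm n).aestronglyMeasurable)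
    filter_upwards [ae_restrict_of_ae hgood, ae_restrict_mem measurableSet_Ioc] with s hG hmem
    obtain ⟨n₀, hn₀⟩ := exists_nat_one_div_lt hmem.1
    have hs : s ∈ Ioc (1/((n₀:ℝ)+1)) 1 := ⟨hn₀, hmem.2⟩
    obtain ⟨ht, heqs⟩ := hkey s hG n₀ hs
    rw [heqs]
    exact ht
  set K : ℝ → ℂ := hAESM.mk h with hK
  have hKsm : StronglyMeasurable K := hAESM.stronglyMeasurable_mk
  have hKae : h =ᵐ[mu01] K := hAESM.ae_eq_mk
  have hbound : (∫⁻ s, ‖K s‖₊ ∂mu01) ≤ ENNReal.ofReal N := by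
    rw [hmu]
    set F : ℕ → ℝ → ℝ≥0∞ :=
      fun n => (Ioc (1/((n:ℝ)+1)) 1).indicator (fun s => (‖K s‖₊ : ℝ≥0∞)) with hF
    have hFmeas : ∀ n, Measurable (F n) :=
      fun n => (hKsm.measurable.enorm).indicator measurableSet_Ioc
    have hFmono : Monotone F := by
      intro n k hnk
      apply Set.indicator_le_indicator_of_subset
      · apply Ioc_subset_Ioc _ le_rfl
        apply one_div_le_one_div_of_le (by positivity)
        exact_mod_cast Nat.succ_le_succ hnk
      · intro x
        exact zero_le
    have hFsup : ∀ s ∈ Ioc (0:ℝ) 1, (⨆ n, F n s) = (‖K s‖₊ : ℝ≥0∞) := by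
      intro s hs
      apply le_antisymm
      · apply iSup_le
        intro n
        exact Set.indicator_le_self _ _ s
      · obtain ⟨n₀, hn₀⟩ := exists_nat_one_div_lt hs.1
        have hsmem : s ∈ Ioc (1/((n₀:ℝ)+1)) 1 := ⟨hn₀, hs.2⟩
        have he : F n₀ s = (‖K s‖₊ : ℝ≥0∞) := Set.indicator_of_mem hsmem _
        rw [← he]
        exact le_iSup (fun n => F n s) n₀
    calc (∫⁻ s in Ioc (0:ℝ) 1, ‖K s‖₊) = ∫⁻ s in Ioc (0:ℝ) 1, ⨆ n, F n s := by
          apply setLIntegral_congr_fun measurableSet_Ioc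
          exact fun s hs => (hFsup s hs).symm
      _ = ⨆ n, ∫⁻ s in Ioc (0:ℝ) 1, F n s := lintegral_iSup hFmeas hFmono
      _ ≤ ENNReal.ofReal N := by
          apply iSup_le
          intro n
          have e1 : (∫⁻ s in Ioc (0:ℝ) 1, F n s)
              = ∫⁻ s in Ioc (1/((n:ℝ)+1)) 1, (‖K s‖₊ : ℝ≥0∞) := by
            rw [hF, lintegral_indicator measurableSet_Ioc,
              Measure.restrict_restrict measurableSet_Ioc]
            congr 1
            rw [Set.inter_eq_left.mpr (Ioc_subset_Ioc (by positivity) le_rfl)]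
          have hn0' : (0:ℝ) < 1/((n:ℝ)+1) := by positivity
          have hsubn : Ioc (1/((n:ℝ)+1)) 1 ⊆ Icc (0:ℝ) 1 :=
            fun x hx => ⟨(hn0'.trans hx.1).le, hx.2⟩
          have hae2 : K =ᵐ[volume.restrict (Ioc (1/((n:ℝ)+1)) 1)] E n :=
            (ae_restrict_sub hsubn hKae.symm).trans (hEq n)
          have e2 : (∫⁻ s in Ioc (1/((n:ℝ)+1)) 1, (‖K s‖₊ : ℝ≥0∞))
              = ∫⁻ s in Ioc (1/((n:ℝ)+1)) 1, (‖E n s‖₊ : ℝ≥0∞) := by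
            apply lintegral_congr_ae
            filter_upwards [hae2] with s hs
            rw [hs]
          rw [e1, e2]
          calc (∫⁻ s in Ioc (1/((n:ℝ)+1)) 1, (‖E n s‖₊ : ℝ≥0∞))
              ≤ ∫⁻ s, ‖E n s‖₊ ∂mu01 := by
                rw [mu01]
                exact lintegral_mono' (Measure.restrict_mono hsubn le_rfl) le_rfl
            _ ≤ ENNReal.ofReal N := hEnorm n
  have hint : IntegrableOn h (Icc (0:ℝ) 1) volume := by
    refine ⟨hAESM, ?_⟩
    show (∫⁻ s, (‖h s‖₊ : ℝ≥0∞) ∂mu01) < ⊤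
    have heq2 : (∫⁻ s, (‖h s‖₊ : ℝ≥0∞) ∂mu01) = ∫⁻ s, ‖K s‖₊ ∂mu01 := by
      apply lintegral_congr_ae
      filter_upwards [hKae] with s hs
      rw [hs]
    rw [heq2]
    exact lt_of_le_of_lt hbound ENNReal.ofReal_lt_top
  refine ⟨h, hint, ?_⟩
  intro t ht
  obtain ⟨n₀, hn₀⟩ := exists_nat_one_div_lt ht.1
  have h1 : ∫ s in Ioc t 1, h s = ∫ s in Ioc t 1, E n₀ s := by
    apply integral_congr_ae
    have hres : (volume : Measure ℝ).restrict (Ioc t 1)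
        = (volume.restrict (Ioc (1/((n₀:ℝ)+1)) 1)).restrict (Ioc t 1) := by
      rw [Measure.restrict_restrict_of_subset (Ioc_subset_Ioc hn₀.le le_rfl)]
    rw [hres]
    exact (hEq n₀).filter_mono (ae_mono Measure.restrict_le_self)
  have h2 : ∫ s in Ioc t 1, E n₀ s = m 1 - m t := hdiff n₀ t 1 hn₀.le ht.2 le_rfl
  rw [h1, h2]
  ring

end helpers

/-- multipliers of `AC_1`, Larsen.  Let `m` be continuous and
bounded on `(0,1]`.  Then `m` is a (bounded) multiplier of `AC_1` — i.e. there is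
`N ≥ 0` such that for every `g ∈ AC_1` the product `mg` (extended by
`(mg)(0) = 0`) lies in `AC_1` with `|||mg||| ≤ N |||g|||` — if and only if `m`
extends to an absolutely continuous function on `[0,1]`: there is `h ∈ L¹[0,1]`
with `m t = m 1 − ∫_t^1 h` for all `t ∈ (0,1]`. -/
theorem multiplier_AC1_iff_absolutelyContinuous
    (m : ℝ → ℂ)
    (hmc : ContinuousOn m (Set.Ioc (0 : ℝ) 1))
    (hmb : ∃ M : ℝ, ∀ t ∈ Set.Ioc (0 : ℝ) 1, ‖m t‖ ≤ M) :
    (∃ N : ℝ, 0 ≤ N ∧ ∀ g g' : ℝ → ℂ, MemLp g' 1 mu01 →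
      (∀ t ∈ Set.Icc (0 : ℝ) 1, g t = ∫ s in Set.Ioc (0 : ℝ) t, g' s) →
      ∃ D : ℝ → ℂ, MemLp D 1 mu01 ∧
        (∀ t ∈ Set.Icc (0 : ℝ) 1,
          (if t = 0 then 0 else m t * g t) = ∫ s in Set.Ioc (0 : ℝ) t, D s) ∧
        eLpNorm D 1 mu01 ≤ ENNReal.ofReal N * eLpNorm g' 1 mu01) ↔
    (∃ h : ℝ → ℂ, IntegrableOn h (Set.Icc (0 : ℝ) 1) ∧
      ∀ t ∈ Set.Ioc (0 : ℝ) 1, m t = m 1 - ∫ s in Set.Ioc t 1, h s) := by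
  constructor
  · rintro ⟨N, hN0, hmul⟩
    exact forward_dir m N hmul
  · rintro ⟨h, hInt, hrep⟩
    exact reverse_dir m h hInt hrep
end

section
/- Let 1 ≤ r < p ≤ ∞ and let m : (0,1] → ℂ be continuous. If for every g ∈ AC_r the product mg (extended by (mg)(0) = 0) belongs to AC_p, then m(t) = 0 for all t ∈ (0,1]. In other words, the only multiplier from AC_r to AC_p with r < p is the zero map. -/
open MeasureTheory Set
open scoped ENNReal NNReal

instance inst_s10 : IsFiniteMeasure mu01 := by
  constructor
  simp only [mu01, Measure.restrict_apply_univ, Real.volume_Icc]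
  norm_num

lemma integral_split (f : ℝ → ℂ) (hf : IntegrableOn f (Set.Icc (0:ℝ) 1) volume)
    {s t : ℝ} (h0 : 0 ≤ s) (hst : s ≤ t) (ht : t ≤ 1) :
    ∫ u in Set.Ioc (0:ℝ) t, f u
      = (∫ u in Set.Ioc (0:ℝ) s, f u) + ∫ u in Set.Ioc s t, f u := by
  rw [← Set.Ioc_union_Ioc_eq_Ioc h0 hst,
    setIntegral_union (Set.Ioc_disjoint_Ioc_of_le le_rfl) measurableSet_Ioc
      (hf.mono_set fun x hx => ⟨hx.1.le, hx.2.trans (hst.trans ht)⟩)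
      (hf.mono_set fun x hx => ⟨h0.trans hx.1.le, hx.2.trans ht⟩)]

lemma holder_aux {p : ℝ≥0∞} (hp : 1 ≤ p) {D : ℝ → ℂ} (hD : MemLp D p mu01)
    {s t : ℝ} (h0 : 0 ≤ s) (hst : s ≤ t) (ht : t ≤ 1) :
    ‖∫ u in Set.Ioc s t, D u‖
      ≤ (eLpNorm D p mu01).toReal * (t - s) ^ (1 - 1 / p.toReal) := by
  set β : ℝ := 1 - 1 / p.toReal with hβ
  have hβ0 : 0 ≤ β := by
    rcases eq_or_ne p ∞ with h | h
    · simp [hβ, h]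
    · have h1 : 1 ≤ p.toReal := by
        rw [← ENNReal.toReal_one]
        exact ENNReal.toReal_mono h hp
      have : 1 / p.toReal ≤ 1 := by
        rw [div_le_one (by linarith)]; linarith
      rw [hβ]; linarith
  have hsub : Set.Ioc s t ⊆ Set.Icc (0:ℝ) 1 :=
    fun x hx => ⟨h0.trans hx.1.le, hx.2.trans ht⟩
  have hle : volume.restrict (Set.Ioc s t) ≤ mu01 :=
    Measure.restrict_mono hsub le_rfl
  have hmeas : AEStronglyMeasurable D (volume.restrict (Set.Ioc s t)) :=
    hD.1.mono_measure hle
  have hInt0 : IntegrableOn D (Set.Icc (0:ℝ) 1) volume := hD.integrable hp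
  have hInt : IntegrableOn D (Set.Ioc s t) volume := hInt0.mono_set hsub
  have key : ENNReal.ofReal ‖∫ u in Set.Ioc s t, D u‖
      ≤ eLpNorm D p mu01 * ENNReal.ofReal (t - s) ^ β := by
    calc ENNReal.ofReal ‖∫ u in Set.Ioc s t, D u‖
        ≤ ENNReal.ofReal (∫ u in Set.Ioc s t, ‖D u‖) :=
          ENNReal.ofReal_le_ofReal (norm_integral_le_integral_norm _)
      _ = ∫⁻ u in Set.Ioc s t, ‖D u‖ₑ ∂volume :=
          ofReal_integral_norm_eq_lintegral_enorm hInt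
      _ = eLpNorm D 1 (volume.restrict (Set.Ioc s t)) :=
          eLpNorm_one_eq_lintegral_enorm.symm
      _ ≤ eLpNorm D p (volume.restrict (Set.Ioc s t)) *
            (volume.restrict (Set.Ioc s t)) Set.univ ^ (1 / (1:ℝ≥0∞).toReal - 1 / p.toReal) :=
          eLpNorm_le_eLpNorm_mul_rpow_measure_univ hp hmeas
      _ ≤ eLpNorm D p mu01 * ENNReal.ofReal (t - s) ^ β := by
          gcongr
          · simp only [Measure.restrict_apply_univ, Real.volume_Ioc, ENNReal.toReal_one, hβ]
            norm_num
  have hfin : eLpNorm D p mu01 * ENNReal.ofReal (t - s) ^ β ≠ ∞ :=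
    ENNReal.mul_ne_top hD.2.ne (ENNReal.rpow_ne_top_of_nonneg hβ0 ENNReal.ofReal_ne_top)
  have := (ENNReal.ofReal_le_iff_le_toReal hfin).mp key
  rwa [ENNReal.toReal_mul, ← ENNReal.toReal_rpow, ENNReal.toReal_ofReal (by linarith)] at this

lemma memLp_sing {t₀ α : ℝ} (ht₀ : 0 < t₀) (hα : 0 < α) {r : ℝ≥0∞} (hr0 : r ≠ 0) (hrt : r ≠ ∞)
    (hαr : α * r.toReal < 1) :
    MemLp (fun s : ℝ =>
      ((Set.indicator (Set.Ioo 0 t₀) (fun u => (t₀ - u) ^ (-α)) s : ℝ) : ℂ)) r mu01 := by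
  have hrr : 0 < r.toReal := ENNReal.toReal_pos hr0 hrt
  have hmR : Measurable (fun s : ℝ => (t₀ - s) ^ (-α)) :=
    (measurable_const.sub measurable_id).pow measurable_const
  have hmeas : Measurable (fun s : ℝ =>
      ((Set.indicator (Set.Ioo 0 t₀) (fun u => (t₀ - u) ^ (-α)) s : ℝ) : ℂ)) :=
    Complex.measurable_ofReal.comp (hmR.indicator measurableSet_Ioo)
  refine ⟨hmeas.aestronglyMeasurable, ?_⟩
  rw [eLpNorm_lt_top_iff_lintegral_rpow_enorm_lt_top hr0 hrt]
  set c : ℝ := -(α * r.toReal) with hc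
  have hpt : ∀ s : ℝ,
      (‖((Set.indicator (Set.Ioo 0 t₀) (fun u => (t₀ - u) ^ (-α)) s : ℝ) : ℂ)‖₊ : ℝ≥0∞) ^ r.toReal
        = Set.indicator (Set.Ioo 0 t₀) (fun u => ENNReal.ofReal ((t₀ - u) ^ c)) s := by
    intro s
    by_cases hs : s ∈ Set.Ioo (0:ℝ) t₀
    · rw [Set.indicator_of_mem hs, Set.indicator_of_mem hs]
      have h1 : 0 ≤ (t₀ - s) ^ (-α) := Real.rpow_nonneg (by linarith [hs.2]) _
      rw [← enorm_eq_nnnorm, ← ofReal_norm, Complex.norm_real, Real.norm_eq_abs, abs_of_nonneg h1,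
        ENNReal.ofReal_rpow_of_nonneg h1 hrr.le]
      congr 1
      rw [← Real.rpow_mul (by linarith [hs.2] : (0:ℝ) ≤ t₀ - s), hc, neg_mul]
    · rw [Set.indicator_of_notMem hs, Set.indicator_of_notMem hs]
      simp [ENNReal.zero_rpow_of_pos hrr]
  calc ∫⁻ s, (‖((Set.indicator (Set.Ioo 0 t₀) (fun u => (t₀ - u) ^ (-α)) s : ℝ) : ℂ)‖₊ : ℝ≥0∞)
          ^ r.toReal ∂mu01
      = ∫⁻ s, Set.indicator (Set.Ioo 0 t₀) (fun u => ENNReal.ofReal ((t₀ - u) ^ c)) s ∂mu01 :=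
        lintegral_congr hpt
    _ ≤ ∫⁻ s, Set.indicator (Set.Ioo 0 t₀) (fun u => ENNReal.ofReal ((t₀ - u) ^ c)) s ∂volume :=
        lintegral_mono' Measure.restrict_le_self le_rfl
    _ = ∫⁻ s in Set.Ioo 0 t₀, ENNReal.ofReal ((t₀ - s) ^ c) ∂volume := by
        rw [lintegral_indicator measurableSet_Ioo]
    _ < ∞ := by
        have hii : IntervalIntegrable (fun x : ℝ => x ^ c) volume 0 t₀ :=
          intervalIntegral.intervalIntegrable_rpow' (by rw [hc]; linarith)
        have hii2 := (hii.comp_sub_left t₀).symm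
        simp only [sub_zero, sub_self] at hii2
        have hIoc : IntegrableOn (fun x => (t₀ - x) ^ c) (Set.Ioc 0 t₀) volume :=
          (intervalIntegrable_iff_integrableOn_Ioc_of_le ht₀.le).mp hii2
        have hIoo := (hIoc.mono_set Set.Ioo_subset_Ioc_self).2
        rw [hasFiniteIntegral_def] at hIoo
        refine lt_of_le_of_lt (le_of_eq ?_) hIoo
        refine setLIntegral_congr_fun measurableSet_Ioo (fun s hs => ?_)
        rw [← ofReal_norm, Real.norm_eq_abs,
          abs_of_nonneg (Real.rpow_nonneg (by linarith [hs.2]) _)]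

lemma integral_sing {t₀ α t : ℝ} (ht : 0 ≤ t) (htt : t ≤ t₀) (hα1 : α < 1) :
    ∫ s in Set.Ioc t t₀,
      ((Set.indicator (Set.Ioo 0 t₀) (fun u => (t₀ - u) ^ (-α)) s : ℝ) : ℂ)
      = (((t₀ - t) ^ (1 - α) / (1 - α) : ℝ) : ℂ) := by
  have hreal : ∫ s in Set.Ioo t t₀, (t₀ - s) ^ (-α) = (t₀ - t) ^ (1 - α) / (1 - α) := by
    rw [← integral_Ioc_eq_integral_Ioo, ← intervalIntegral.integral_of_le htt,
      intervalIntegral.integral_comp_sub_left (fun y : ℝ => y ^ (-α)) t₀, sub_self,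
      integral_rpow (Or.inl (by linarith)),
      Real.zero_rpow (by linarith : -α + 1 ≠ 0), neg_add_eq_sub]
    norm_num
  rw [integral_Ioc_eq_integral_Ioo,
    setIntegral_congr_fun measurableSet_Ioo
      (fun s hs => by
        rw [Set.indicator_of_mem (Set.mem_Ioo.mpr ⟨lt_of_le_of_lt ht hs.1, hs.2⟩)])]
  rw [← hreal]
  exact integral_ofReal
set_option maxHeartbeats 2000000 in
/-- Theorem 4.  Let `1 ≤ r < p ≤ ∞` and let `m` be continuous
on `(0,1]`.  If for every `g ∈ AC_r` the product `mg` (extended by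
`(mg)(0) = 0`) belongs to `AC_p`, then `m = 0` on `(0,1]`: the only multiplier
from `AC_r` to `AC_p` with `r < p` is the zero map. -/
theorem multiplier_ACr_ACp_zero_of_lt
    (r p : ℝ≥0∞) (hr : 1 ≤ r) (hrp : r < p)
    (m : ℝ → ℂ)
    (hmc : ContinuousOn m (Set.Ioc (0 : ℝ) 1))
    (hmult : ∀ g g' : ℝ → ℂ, MemLp g' r mu01 →
      (∀ t ∈ Set.Icc (0 : ℝ) 1, g t = ∫ s in Set.Ioc (0 : ℝ) t, g' s) →
      ∃ D : ℝ → ℂ, MemLp D p mu01 ∧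
        ∀ t ∈ Set.Icc (0 : ℝ) 1,
          (if t = 0 then 0 else m t * g t) = ∫ s in Set.Ioc (0 : ℝ) t, D s) :
    ∀ t ∈ Set.Ioc (0 : ℝ) 1, m t = 0 := by
  intro t₀ ht₀'
  by_contra hm
  obtain ⟨ht₀0, ht₀1⟩ := ht₀'
  -- exponent bookkeeping
  have hrtop : r ≠ ∞ := (hrp.trans_le le_top).ne
  have hr0 : r ≠ 0 := (lt_of_lt_of_le zero_lt_one hr).ne'
  have hp1 : 1 ≤ p := hr.trans hrp.le
  have hrr1 : 1 ≤ r.toReal := by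
    rw [← ENNReal.toReal_one]; exact ENNReal.toReal_mono hrtop hr
  have hrr0 : 0 < r.toReal := by linarith
  have hab : 1 / p.toReal < 1 / r.toReal := by
    rcases eq_or_ne p ∞ with h | h
    · rw [h, ENNReal.toReal_top, div_zero]; positivity
    · have hpr : r.toReal < p.toReal := (ENNReal.toReal_lt_toReal hrtop h).mpr hrp
      exact one_div_lt_one_div_of_lt hrr0 hpr
  have ha0 : 0 ≤ 1 / p.toReal := by positivity
  set α : ℝ := (1 / p.toReal + 1 / r.toReal) / 2 with hαdef
  have hb1 : 1 / r.toReal ≤ 1 := by rw [div_le_one hrr0]; linarith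
  have hα0 : 0 < α := by rw [hαdef]; positivity
  have hαb : α < 1 / r.toReal := by rw [hαdef]; linarith
  have haα : 1 / p.toReal < α := by rw [hαdef]; linarith
  have hα1 : α < 1 := lt_of_lt_of_le hαb hb1
  have hαr : α * r.toReal < 1 := by
    have := mul_lt_mul_of_pos_right hαb hrr0
    rwa [one_div, inv_mul_cancel₀ (ne_of_gt hrr0)] at this
  set β : ℝ := 1 - 1 / p.toReal with hβdef
  have hβ1 : β ≤ 1 := by rw [hβdef]; linarith
  have hβpos : 0 < β := by rw [hβdef]; linarith
  set γ : ℝ := β - (1 - α) with hγdef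
  have hγ : 0 < γ := by rw [hγdef, hβdef]; linarith
  have h1α : 0 < 1 - α := by linarith
  -- the two test functions
  set g' : ℝ → ℂ := fun s =>
    ((Set.indicator (Set.Ioo 0 t₀) (fun u => (t₀ - u) ^ (-α)) s : ℝ) : ℂ) with hg'def
  have hg'mem : MemLp g' r mu01 := memLp_sing ht₀0 hα0 hr0 hrtop hαr
  set g : ℝ → ℂ := fun t => ∫ s in Set.Ioc (0:ℝ) t, g' s with hgdef
  obtain ⟨D, hD, hDf⟩ := hmult g g' hg'mem (fun t _ => rfl)
  obtain ⟨E, hE, hEf⟩ := hmult (fun t => ((t:ℝ):ℂ)) (fun _ => 1) (memLp_const 1) (by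
    intro t ht
    rw [setIntegral_const, Real.volume_real_Ioc_of_le ht.1, sub_zero]
    simp [Complex.real_smul])
  set CD : ℝ := (eLpNorm D p mu01).toReal with hCDdef
  set CE : ℝ := (eLpNorm E p mu01).toReal with hCEdef
  have hCD0 : 0 ≤ CD := ENNReal.toReal_nonneg
  have hCE0 : 0 ≤ CE := ENNReal.toReal_nonneg
  -- continuity: lower bound for ‖m‖ near t₀
  set cc : ℝ := ‖m t₀‖ / 2 with hccdef
  have hmt₀pos : 0 < ‖m t₀‖ := norm_pos_iff.mpr hm
  have hcc : 0 < cc := by rw [hccdef]; linarith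
  have hev : ∀ᶠ x in nhdsWithin t₀ (Set.Ioc (0:ℝ) 1), cc < ‖m x‖ :=
    Filter.Tendsto.eventually_const_lt (by rw [hccdef]; linarith)
      ((hmc t₀ ⟨ht₀0, ht₀1⟩).norm)
  obtain ⟨δ, hδ0, hδ⟩ := Metric.mem_nhdsWithin_iff.mp hev
  -- constants
  set CM : ℝ := CE / t₀ + 2 * CE / t₀ ^ 2 with hCMdef
  have hCM0 : 0 ≤ CM := by rw [hCMdef]; positivity
  set K : ℝ := CD / (2 * cc) + CD / cc * CM / (2 * cc) with hKdef
  have hK0 : 0 ≤ K := by rw [hKdef]; positivity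
  set K' : ℝ := K * (1 - α) with hK'def
  have hK'0 : 0 ≤ K' := by rw [hK'def]; exact mul_nonneg hK0 (by linarith)
  set εK : ℝ := ((K' + 1)⁻¹) ^ (1 / γ) with hεKdef
  have hεK0 : 0 < εK := by rw [hεKdef]; positivity
  set ε : ℝ := min (min (t₀ / 2) (δ / 2)) εK with hεdef
  have hε0 : 0 < ε := by
    rw [hεdef]; exact lt_min (lt_min (by linarith) (by linarith)) hεK0
  have hεt₀ : ε ≤ t₀ / 2 := (min_le_left _ _).trans (min_le_left _ _)
  have hεδ : ε ≤ δ / 2 := (min_le_left _ _).trans (min_le_right _ _)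
  have hεεK : ε ≤ εK := min_le_right _ _
  have hε1 : ε ≤ 1 := by linarith
  set t : ℝ := t₀ - ε with htdef
  have ht0 : 0 < t := by rw [htdef]; linarith
  have htt₀ : t < t₀ := by rw [htdef]; linarith
  have ht1 : t ≤ 1 := by linarith
  have ht₀t : t₀ - t = ε := by rw [htdef]; ring
  have hmt : cc < ‖m t‖ := by
    refine hδ ⟨?_, ht0, ht1⟩
    rw [Metric.mem_ball, Real.dist_eq,
      show t - t₀ = -ε by rw [htdef]; ring, abs_neg, abs_of_pos hε0]
    linarith
  -- formulas from the multiplier hypothesis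
  have hDt : m t * g t = ∫ s in Set.Ioc (0:ℝ) t, D s := by
    have h := hDf t ⟨ht0.le, ht1⟩; rwa [if_neg (ne_of_gt ht0)] at h
  have hDt₀ : m t₀ * g t₀ = ∫ s in Set.Ioc (0:ℝ) t₀, D s := by
    have h := hDf t₀ ⟨ht₀0.le, ht₀1⟩; rwa [if_neg (ne_of_gt ht₀0)] at h
  have hEt : m t * ((t:ℝ):ℂ) = ∫ s in Set.Ioc (0:ℝ) t, E s := by
    have h := hEf t ⟨ht0.le, ht1⟩; rwa [if_neg (ne_of_gt ht0)] at h
  have hEt₀ : m t₀ * ((t₀:ℝ):ℂ) = ∫ s in Set.Ioc (0:ℝ) t₀, E s := by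
    have h := hEf t₀ ⟨ht₀0.le, ht₀1⟩; rwa [if_neg (ne_of_gt ht₀0)] at h
  have hDint : IntegrableOn D (Set.Icc (0:ℝ) 1) volume := hD.integrable hp1
  have hEint : IntegrableOn E (Set.Icc (0:ℝ) 1) volume := hE.integrable hp1
  have hg'int : IntegrableOn g' (Set.Icc (0:ℝ) 1) volume := hg'mem.integrable hr
  -- difference identities
  have hGdiff : m t₀ * g t₀ - m t * g t = ∫ s in Set.Ioc t t₀, D s := by
    rw [hDt₀, hDt, integral_split D hDint ht0.le htt₀.le ht₀1]; ring
  have hFdiff : m t₀ * ((t₀:ℝ):ℂ) - m t * ((t:ℝ):ℂ) = ∫ s in Set.Ioc t t₀, E s := by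
    rw [hEt₀, hEt, integral_split E hEint ht0.le htt₀.le ht₀1]; ring
  have hgdiff : g t₀ - g t = ((ε ^ (1 - α) / (1 - α) : ℝ) : ℂ) := by
    have h1 := integral_split g' hg'int ht0.le htt₀.le ht₀1
    have h2 : ∫ s in Set.Ioc t t₀, g' s = ((ε ^ (1 - α) / (1 - α) : ℝ) : ℂ) := by
      simp only [hg'def]
      rw [integral_sing ht0.le htt₀.le hα1, ht₀t]
    simp only [hgdef]
    rw [h1, h2]; ring
  -- Hölder bounds
  have hB1 : ‖m t₀ * g t₀ - m t * g t‖ ≤ CD * ε ^ β := by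
    rw [hGdiff]
    have h := holder_aux hp1 hD ht0.le htt₀.le ht₀1
    rwa [ht₀t, ← hβdef, ← hCDdef] at h
  have hB2 : ‖m t₀ * ((t₀:ℝ):ℂ) - m t * ((t:ℝ):ℂ)‖ ≤ CE * ε ^ β := by
    rw [hFdiff]
    have h := holder_aux hp1 hE ht0.le htt₀.le ht₀1
    rwa [ht₀t, ← hβdef, ← hCEdef] at h
  have hBt : ‖m t * g t‖ ≤ CD := by
    rw [hDt]
    have h := holder_aux hp1 hD le_rfl ht0.le ht1
    rw [sub_zero, ← hβdef, ← hCDdef] at h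
    calc ‖∫ s in Set.Ioc (0:ℝ) t, D s‖ ≤ CD * t ^ β := h
      _ ≤ CD * 1 := mul_le_mul_of_nonneg_left (Real.rpow_le_one ht0.le ht1 hβpos.le) hCD0
      _ = CD := mul_one _
  have hBtE : ‖m t * ((t:ℝ):ℂ)‖ ≤ CE := by
    rw [hEt]
    have h := holder_aux hp1 hE le_rfl ht0.le ht1
    rw [sub_zero, ← hβdef, ← hCEdef] at h
    calc ‖∫ s in Set.Ioc (0:ℝ) t, E s‖ ≤ CE * t ^ β := h
      _ ≤ CE * 1 := mul_le_mul_of_nonneg_left (Real.rpow_le_one ht0.le ht1 hβpos.le) hCE0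
      _ = CE := mul_one _
  -- bounds on g t and m t
  have hgt : ‖g t‖ ≤ CD / cc := by
    rw [le_div_iff₀ hcc]
    calc ‖g t‖ * cc ≤ ‖g t‖ * ‖m t‖ :=
          mul_le_mul_of_nonneg_left hmt.le (norm_nonneg _)
      _ = ‖m t * g t‖ := by rw [norm_mul]; ring
      _ ≤ CD := hBt
  have hmtb : ‖m t‖ ≤ 2 * CE / t₀ := by
    have h1 : ‖m t‖ * t ≤ CE := by
      have : ‖m t * ((t:ℝ):ℂ)‖ = ‖m t‖ * t := by
        rw [norm_mul, Complex.norm_real, Real.norm_eq_abs, abs_of_pos ht0]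
      linarith [this ▸ hBtE]
    rw [le_div_iff₀ (by linarith : (0:ℝ) < t₀)]
    have h2 : 0 ≤ ‖m t‖ * (2 * t - t₀) :=
      mul_nonneg (norm_nonneg _) (by rw [htdef]; linarith)
    linarith only [h1, h2]
  have hε' : ε ≤ ε ^ β := by
    nth_rewrite 1 [← Real.rpow_one ε]
    exact Real.rpow_le_rpow_of_exponent_ge hε0 hε1 hβ1
  have hεβ0 : 0 < ε ^ β := Real.rpow_pos_of_pos hε0 _
  -- Hölder bound on m
  have hndt : ‖((t:ℝ):ℂ) - ((t₀:ℝ):ℂ)‖ = ε := by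
    rw [← Complex.ofReal_sub, Complex.norm_real, Real.norm_eq_abs,
      show t - t₀ = -ε by rw [htdef]; ring, abs_neg, abs_of_pos hε0]
  have ht₀ne : ((t₀:ℝ):ℂ) ≠ 0 := by
    simpa using ne_of_gt ht₀0
  have hmdiff : ‖m t - m t₀‖ ≤ CM * ε ^ β := by
    have hrepr : m t₀ - m t = (m t₀ * ((t₀:ℝ):ℂ) - m t * ((t:ℝ):ℂ)) / ((t₀:ℝ):ℂ)
        + m t * (((t:ℝ):ℂ) - ((t₀:ℝ):ℂ)) / ((t₀:ℝ):ℂ) := by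
      field_simp
      ring
    rw [norm_sub_rev, hrepr]
    calc ‖_ + _‖ ≤ ‖(m t₀ * ((t₀:ℝ):ℂ) - m t * ((t:ℝ):ℂ)) / ((t₀:ℝ):ℂ)‖
          + ‖m t * (((t:ℝ):ℂ) - ((t₀:ℝ):ℂ)) / ((t₀:ℝ):ℂ)‖ := norm_add_le _ _
      _ = ‖m t₀ * ((t₀:ℝ):ℂ) - m t * ((t:ℝ):ℂ)‖ / t₀ + ‖m t‖ * ε / t₀ := by
          rw [norm_div, norm_div, norm_mul, hndt, Complex.norm_real, Real.norm_eq_abs,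
            abs_of_pos ht₀0]
      _ ≤ (CE * ε ^ β) / t₀ + (2 * CE / t₀) * ε ^ β / t₀ := by
          refine add_le_add ((div_le_div_iff_of_pos_right ht₀0).mpr hB2)
            ((div_le_div_iff_of_pos_right ht₀0).mpr ?_)
          calc ‖m t‖ * ε ≤ (2 * CE / t₀) * ε :=
                mul_le_mul_of_nonneg_right hmtb hε0.le
            _ ≤ (2 * CE / t₀) * ε ^ β :=
                mul_le_mul_of_nonneg_left hε' (by positivity)
      _ = CM * ε ^ β := by rw [hCMdef]; ring
  -- final chain
  have hmt₀norm : ‖m t₀‖ = 2 * cc := by rw [hccdef]; ring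
  have hgnorm : ‖g t₀ - g t‖ = ε ^ (1 - α) / (1 - α) := by
    rw [hgdiff, Complex.norm_real, Real.norm_eq_abs, abs_of_nonneg (by positivity)]
  have hrepr2 : g t₀ - g t = (m t₀ * g t₀ - m t * g t) / m t₀
      + g t * (m t - m t₀) / m t₀ := by
    field_simp
    ring
  have hkey : ε ^ (1 - α) / (1 - α) ≤ K * ε ^ β := by
    rw [← hgnorm, hrepr2]
    calc ‖_ + _‖ ≤ ‖(m t₀ * g t₀ - m t * g t) / m t₀‖
          + ‖g t * (m t - m t₀) / m t₀‖ := norm_add_le _ _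
      _ = ‖m t₀ * g t₀ - m t * g t‖ / (2 * cc)
          + ‖g t‖ * ‖m t - m t₀‖ / (2 * cc) := by
          rw [norm_div, norm_div, norm_mul, hmt₀norm]
      _ ≤ (CD * ε ^ β) / (2 * cc) + (CD / cc) * (CM * ε ^ β) / (2 * cc) := by
          refine add_le_add ((div_le_div_iff_of_pos_right (by linarith)).mpr hB1)
            ((div_le_div_iff_of_pos_right (by linarith)).mpr ?_)
          exact mul_le_mul hgt hmdiff (norm_nonneg _) (by positivity)
      _ = K * ε ^ β := by rw [hKdef]; ring
  have hfinal : ε ^ (1 - α) ≤ K' * ε ^ β := by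
    rw [hK'def]
    calc ε ^ (1 - α) = (ε ^ (1 - α) / (1 - α)) * (1 - α) := by field_simp
      _ ≤ (K * ε ^ β) * (1 - α) := mul_le_mul_of_nonneg_right hkey h1α.le
      _ = K * (1 - α) * ε ^ β := by ring
  have hεγ : ε ^ γ ≤ (K' + 1)⁻¹ := by
    calc ε ^ γ ≤ εK ^ γ := Real.rpow_le_rpow hε0.le hεεK hγ.le
      _ = (K' + 1)⁻¹ := by
          rw [hεKdef, ← Real.rpow_mul (by positivity), one_div,
            inv_mul_cancel₀ (ne_of_gt hγ), Real.rpow_one]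
  have hsplit : ε ^ β = ε ^ (1 - α) * ε ^ γ := by
    rw [show β = (1 - α) + γ by rw [hγdef]; ring, Real.rpow_add hε0]
  rw [hsplit] at hfinal
  have hu0 : 0 < ε ^ (1 - α) := Real.rpow_pos_of_pos hε0 _
  have hv0 : 0 < ε ^ γ := Real.rpow_pos_of_pos hε0 _
  have hvM : ε ^ γ * (K' + 1) ≤ 1 := by
    calc ε ^ γ * (K' + 1) ≤ (K' + 1)⁻¹ * (K' + 1) :=
          mul_le_mul_of_nonneg_right hεγ (by linarith)
      _ = 1 := inv_mul_cancel₀ (by linarith)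
  have hcontr : ε ^ (1 - α) * (K' + 1) ≤ K' * ε ^ (1 - α) := by
    calc ε ^ (1 - α) * (K' + 1)
        ≤ (K' * (ε ^ (1 - α) * ε ^ γ)) * (K' + 1) :=
          mul_le_mul_of_nonneg_right hfinal (by linarith)
      _ = (K' * ε ^ (1 - α)) * (ε ^ γ * (K' + 1)) := by ring
      _ ≤ (K' * ε ^ (1 - α)) * 1 := mul_le_mul_of_nonneg_left hvM (by positivity)
      _ = K' * ε ^ (1 - α) := mul_one _
  linarith only [hu0, hcontr]
end
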